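/- arXiv:1710.05411 — 13 statements merged into one kernel-verified Lean document; each statement's English description precedes it below -/
import Mathlib

section
/- The function ĝ is well defined on [0,ν₀] (i.e. 1 ≤ A − B·cosh ν ≤ A − B for ν ∈ [0,ν₀]), satisfies ĝ(0) = 2(K₂ − K₁⋆) and ĝ(ν₀) = 0, is strictly decreasing on [0,ν₀], and is strictly concave on (0,ν₀) (its second derivative is strictly negative there, with ĝ′(ν) = −B·sinh ν / sinh ĝ(ν) on (0,ν₀)). -/
set_option maxHeartbeats 1000000

open Real Set


/-- In the setting of the Onsager function on the imaginary axis: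
`ĝ` is well defined on `[0, ν₀]` (i.e. `1 ≤ A − B cosh ν ≤ A − B` there),
`ĝ(0) = 2(K₂ − K₁⋆)`, `ĝ(ν₀) = 0`, `ĝ` is strictly decreasing on `[0, ν₀]`,
and strictly concave on `(0, ν₀)` — its second derivative is strictly negative
there, with `ĝ′(ν) = −B sinh ν / sinh(ĝ ν)` on `(0, ν₀)`. -/
theorem statement1
    (K1 K2 K1s : ℝ)
    (hK1 : 0 < K1) (hK2 : 0 < K2) (hK1s : 0 < K1s)
    (hdual : Real.exp (2 * K1s) = Real.cosh K1 / Real.sinh K1)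
    (hlow : K1s < K2)
    (A B : ℝ)
    (hA : A = Real.cosh (2 * K1s) * Real.cosh (2 * K2))
    (hB : B = Real.sinh (2 * K1s) * Real.sinh (2 * K2))
    (ν₀ : ℝ) (hν₀pos : 0 < ν₀)
    (hν₀ : Real.cosh ν₀ = (A - 1) / B)
    (g : ℝ → ℝ)
    (hg : ∀ ν ∈ Set.Icc (0 : ℝ) ν₀,
      0 ≤ g ν ∧ Real.cosh (g ν) = A - B * Real.cosh ν) :
    (∀ ν ∈ Set.Icc (0 : ℝ) ν₀,
      1 ≤ A - B * Real.cosh ν ∧ A - B * Real.cosh ν ≤ A - B) ∧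
    g 0 = 2 * (K2 - K1s) ∧
    g ν₀ = 0 ∧
    StrictAntiOn g (Set.Icc 0 ν₀) ∧
    StrictConcaveOn ℝ (Set.Ioo 0 ν₀) g ∧
    (∀ ν ∈ Set.Ioo (0 : ℝ) ν₀,
      HasDerivAt g (-(B * Real.sinh ν) / Real.sinh (g ν)) ν ∧
      deriv (deriv g) ν < 0) := by
  have hB0 : 0 < B := by
    rw [hB]
    exact mul_pos (Real.sinh_pos_iff.2 (by linarith)) (Real.sinh_pos_iff.2 (by linarith))
  -- A - B = cosh (2(K2 - K1s)) > 1
  have hABcosh : A - B = Real.cosh (2 * (K2 - K1s)) := by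
    rw [hA, hB, show 2 * (K2 - K1s) = 2 * K2 - 2 * K1s by ring, Real.cosh_sub]; ring
  have hAB1 : 1 < A - B := by
    rw [hABcosh]
    exact Real.one_lt_cosh.2 (by intro h; nlinarith)
  -- u ν₀ = 1
  have huν₀ : A - B * Real.cosh ν₀ = 1 := by
    rw [hν₀]; field_simp; ring
  -- injectivity of cosh on nonnegatives
  have coshInj : ∀ x y : ℝ, 0 ≤ x → 0 ≤ y → Real.cosh x = Real.cosh y → x = y := by
    intro x y hx hy h
    have h1 : |x| ≤ |y| := Real.cosh_le_cosh.1 h.le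
    have h2 : |y| ≤ |x| := Real.cosh_le_cosh.1 h.ge
    rw [abs_of_nonneg hx, abs_of_nonneg hy] at h1 h2
    linarith
  -- part 1
  have part1 : ∀ ν ∈ Set.Icc (0 : ℝ) ν₀,
      1 ≤ A - B * Real.cosh ν ∧ A - B * Real.cosh ν ≤ A - B := by
    intro ν hν
    obtain ⟨h0, h1⟩ := hν
    constructor
    · have : Real.cosh ν ≤ Real.cosh ν₀ := by
        rw [Real.cosh_le_cosh, abs_of_nonneg h0, abs_of_nonneg hν₀pos.le]; exact h1
      nlinarith
    · have : (1:ℝ) ≤ Real.cosh ν := Real.one_le_cosh ν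
      nlinarith
  -- strict version in the interior
  have hu1 : ∀ ν ∈ Set.Ioo (0 : ℝ) ν₀, 1 < A - B * Real.cosh ν := by
    intro ν hν
    have : Real.cosh ν < Real.cosh ν₀ := by
      rw [Real.cosh_lt_cosh, abs_of_nonneg hν.1.le, abs_of_nonneg hν₀pos.le]; exact hν.2
    nlinarith
  -- g 0
  have hg0 : g 0 = 2 * (K2 - K1s) := by
    obtain ⟨hpos, hcosh⟩ := hg 0 ⟨le_refl _, hν₀pos.le⟩
    apply coshInj _ _ hpos (by linarith)
    rw [hcosh, Real.cosh_zero, mul_one, hABcosh]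
  -- g ν₀
  have hgν₀ : g ν₀ = 0 := by
    obtain ⟨hpos, hcosh⟩ := hg ν₀ ⟨hν₀pos.le, le_refl _⟩
    apply coshInj _ _ hpos le_rfl
    rw [hcosh, huν₀, Real.cosh_zero]
  -- strict anti
  have hanti : StrictAntiOn g (Set.Icc 0 ν₀) := by
    intro x hx y hy hxy
    obtain ⟨hxpos, hxcosh⟩ := hg x hx
    obtain ⟨hypos, hycosh⟩ := hg y hy
    have hcc : Real.cosh x < Real.cosh y := by
      rw [Real.cosh_lt_cosh, abs_of_nonneg hx.1, abs_of_nonneg hy.1]; exact hxy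
    have : Real.cosh (g y) < Real.cosh (g x) := by rw [hxcosh, hycosh]; nlinarith
    have := Real.cosh_lt_cosh.1 this
    rwa [abs_of_nonneg hypos, abs_of_nonneg hxpos] at this
  -- abbreviations
  set u : ℝ → ℝ := fun x => A - B * Real.cosh x with hu_def
  set s : ℝ → ℝ := fun x => Real.sqrt (u x ^ 2 - 1) with hs_def
  set F : ℝ → ℝ := fun x => Real.log (u x + s x) with hF_def
  -- g = F on Icc
  have hgF : ∀ ν ∈ Set.Icc (0 : ℝ) ν₀, g ν = F ν := by
    intro ν hν
    obtain ⟨hpos, hcosh⟩ := hg ν hν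
    have hu1' : 1 ≤ u ν := (part1 ν hν).1
    have hs0 : 0 ≤ s ν := Real.sqrt_nonneg _
    have hssq : s ν ^ 2 = u ν ^ 2 - 1 := Real.sq_sqrt (by nlinarith)
    have hw1 : (1:ℝ) ≤ u ν + s ν := by linarith
    have hw0 : (0:ℝ) < u ν + s ν := by linarith
    have hinv : (u ν + s ν)⁻¹ = u ν - s ν := by
      rw [inv_eq_iff_eq_inv, eq_comm, inv_eq_iff_eq_inv] at *
      · field_simp
        nlinarith
    have hcoshF : Real.cosh (F ν) = u ν := by
      rw [hF_def]
      simp only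
      rw [Real.cosh_log hw0, hinv]
      ring
    have hFpos : 0 ≤ F ν := Real.log_nonneg hw1
    exact coshInj _ _ hpos hFpos (by rw [hcosh, hcoshF])
  -- sinh (g ν) = s ν on Icc
  have hsinh : ∀ ν ∈ Set.Icc (0 : ℝ) ν₀, Real.sinh (g ν) = s ν := by
    intro ν hν
    obtain ⟨hpos, hcosh⟩ := hg ν hν
    have h1 : Real.sinh (g ν) ^ 2 = u ν ^ 2 - 1 := by
      rw [Real.sinh_sq, hcosh]
    rw [hs_def]
    simp only
    rw [← h1, Real.sqrt_sq (Real.sinh_nonneg_iff.2 hpos)]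
  -- derivative of g on Ioo
  have hderiv : ∀ ν ∈ Set.Ioo (0 : ℝ) ν₀,
      HasDerivAt g (-(B * Real.sinh ν) / s ν) ν := by
    intro ν hν
    have hνIcc : ν ∈ Set.Icc (0:ℝ) ν₀ := ⟨hν.1.le, hν.2.le⟩
    have hu1' : 1 < u ν := hu1 ν hν
    have hq0 : 0 < u ν ^ 2 - 1 := by nlinarith
    have hs0 : 0 < s ν := Real.sqrt_pos.2 hq0
    have hssq : s ν ^ 2 = u ν ^ 2 - 1 := Real.sq_sqrt hq0.le
    have hw0 : (0:ℝ) < u ν + s ν := by linarith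
    have hu' : HasDerivAt u (-(B * Real.sinh ν)) ν := by
      simpa using ((Real.hasDerivAt_cosh ν).const_mul B).const_sub A
    have hq' : HasDerivAt (fun x => u x ^ 2 - 1)
        (2 * u ν * -(B * Real.sinh ν)) ν := by
      simpa [mul_comm, mul_assoc] using ((hu'.pow 2).sub_const 1)
    have hs' : HasDerivAt s (2 * u ν * -(B * Real.sinh ν) / (2 * s ν)) ν :=
      hq'.sqrt (by rw [← hssq] at hq0; exact (by nlinarith : u ν ^ 2 - 1 ≠ 0))
    have hF' : HasDerivAt F
        ((-(B * Real.sinh ν) + 2 * u ν * -(B * Real.sinh ν) / (2 * s ν)) / (u ν + s ν)) ν :=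
      (hu'.add hs').log hw0.ne'
    have hval : (-(B * Real.sinh ν) + 2 * u ν * -(B * Real.sinh ν) / (2 * s ν)) / (u ν + s ν)
        = -(B * Real.sinh ν) / s ν := by
      field_simp
      ring
    rw [hval] at hF'
    apply hF'.congr_of_eventuallyEq
    filter_upwards [Ioo_mem_nhds hν.1 hν.2] with x hx
    exact hgF x ⟨hx.1.le, hx.2.le⟩
  -- second derivative on Ioo
  have hderiv2 : ∀ ν ∈ Set.Ioo (0 : ℝ) ν₀, deriv (deriv g) ν < 0 := by
    intro ν hν
    have hu1' : 1 < u ν := hu1 ν hν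
    have hq0 : 0 < u ν ^ 2 - 1 := by nlinarith
    have hs0 : 0 < s ν := Real.sqrt_pos.2 hq0
    have hssq : s ν ^ 2 = u ν ^ 2 - 1 := Real.sq_sqrt hq0.le
    have hsinhν : 0 < Real.sinh ν := Real.sinh_pos_iff.2 hν.1
    -- deriv g agrees near ν with h := fun x => -(B sinh x)/s x
    have heq : deriv g =ᶠ[nhds ν] fun x => -(B * Real.sinh x) / s x := by
      filter_upwards [Ioo_mem_nhds hν.1 hν.2] with x hx
      exact (hderiv x hx).deriv
    rw [heq.deriv_eq]
    -- compute derivative of h at ν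
    have hN : HasDerivAt (fun x => -(B * Real.sinh x)) (-(B * Real.cosh ν)) ν := by
      exact ((Real.hasDerivAt_sinh ν).const_mul B).neg
    have hu' : HasDerivAt u (-(B * Real.sinh ν)) ν := by
      simpa using ((Real.hasDerivAt_cosh ν).const_mul B).const_sub A
    have hq' : HasDerivAt (fun x => u x ^ 2 - 1)
        (2 * u ν * -(B * Real.sinh ν)) ν := by
      simpa [mul_comm, mul_assoc] using ((hu'.pow 2).sub_const 1)
    have hs' : HasDerivAt s (2 * u ν * -(B * Real.sinh ν) / (2 * s ν)) ν :=
      hq'.sqrt (by nlinarith)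
    have hh : HasDerivAt (fun x => -(B * Real.sinh x) / s x)
        ((-(B * Real.cosh ν) * s ν - -(B * Real.sinh ν) *
          (2 * u ν * -(B * Real.sinh ν) / (2 * s ν))) / s ν ^ 2) ν :=
      hN.div hs' hs0.ne'
    rw [hh.deriv]
    have hcosh0 : 0 < Real.cosh ν := Real.cosh_pos ν
    apply div_neg_of_neg_of_pos _ (by positivity)
    have key : -(B * Real.cosh ν) * s ν - -(B * Real.sinh ν) *
        (2 * u ν * -(B * Real.sinh ν) / (2 * s ν))
        = -(B * Real.cosh ν * (u ν ^ 2 - 1) + B ^ 2 * u ν * Real.sinh ν ^ 2) / s ν := by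
      rw [← hssq]; field_simp; ring
    rw [key]
    apply div_neg_of_neg_of_pos _ hs0
    have : 0 < B * Real.cosh ν * (u ν ^ 2 - 1) + B ^ 2 * u ν * Real.sinh ν ^ 2 := by
      have h1 : 0 < B * Real.cosh ν * (u ν ^ 2 - 1) := by positivity
      have h2 : 0 < B ^ 2 * u ν * Real.sinh ν ^ 2 := by positivity
      linarith
    linarith
  refine ⟨part1, hg0, hgν₀, hanti, ?_, fun ν hν => ⟨?_, hderiv2 ν hν⟩⟩
  · apply strictConcaveOn_of_deriv2_neg (convex_Ioo 0 ν₀)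
    · intro x hx
      exact (hderiv x hx).continuousAt.continuousWithinAt
    · intro x hx
      rw [interior_Ioo] at hx
      simpa [Function.iterate_succ, Function.iterate_zero] using hderiv2 x hx
  · rw [hsinh ν ⟨hν.1.le, hν.2.le⟩]
    exact hderiv ν hν
end

section
/- One has K₁ > K₂⋆, and the endpoint ν₀ of the analyticity interval equals twice the difference of the dual couplings: cosh(2(K₁ − K₂⋆)) = (A − 1)/B, i.e. ν₀ = 2|K₁ − K₂⋆| = 2(K₁ − K₂⋆). -/
open Real

lemma dual_hyp (K Ks : ℝ) (hK : 0 < K)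
    (h : Real.exp (2 * Ks) = Real.cosh K / Real.sinh K) :
    Real.sinh (2 * Ks) = 1 / Real.sinh (2 * K) ∧
    Real.cosh (2 * Ks) = Real.cosh (2 * K) / Real.sinh (2 * K) := by
  have hs : 0 < Real.sinh K := Real.sinh_pos_iff.2 hK
  have hc : 0 < Real.cosh K := Real.cosh_pos K
  have hs2 : Real.sinh (2 * K) = 2 * Real.sinh K * Real.cosh K := Real.sinh_two_mul K
  have hc2 : Real.cosh (2 * K) = Real.cosh K ^ 2 + Real.sinh K ^ 2 :=
    Real.cosh_two_mul K
  have hexp' : Real.exp (-(2 * Ks)) = Real.sinh K / Real.cosh K := by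
    rw [Real.exp_neg, h]
    field_simp
  constructor
  · rw [Real.sinh_eq, hexp', h, hs2]
    have hp : Real.cosh K ^ 2 - Real.sinh K ^ 2 = 1 := Real.cosh_sq_sub_sinh_sq K
    field_simp
    linear_combination hp
  · rw [Real.cosh_eq, hexp', h, hs2, hc2]
    field_simp

/-- With dual couplings `exp(2K₁⋆) = coth K₁`,
`exp(2K₂⋆) = coth K₂` and `K₂ > K₁⋆`, one has `K₁ > K₂⋆`, and the endpoint
`ν₀` of the analyticity interval (defined by `cosh ν₀ = (A−1)/B`, `ν₀ > 0`)
equals twice the difference of the dual couplings: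
`cosh(2(K₁ − K₂⋆)) = (A−1)/B`, i.e. `ν₀ = 2|K₁ − K₂⋆| = 2(K₁ − K₂⋆)`. -/
theorem statement2
    (K1 K2 K1s K2s : ℝ)
    (hK1 : 0 < K1) (hK2 : 0 < K2) (hK1s : 0 < K1s) (hK2s : 0 < K2s)
    (hdual1 : Real.exp (2 * K1s) = Real.cosh K1 / Real.sinh K1)
    (hdual2 : Real.exp (2 * K2s) = Real.cosh K2 / Real.sinh K2)
    (hlow : K1s < K2)
    (A B : ℝ)
    (hA : A = Real.cosh (2 * K1s) * Real.cosh (2 * K2))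
    (hB : B = Real.sinh (2 * K1s) * Real.sinh (2 * K2))
    (ν₀ : ℝ) (hν₀pos : 0 < ν₀)
    (hν₀ : Real.cosh ν₀ = (A - 1) / B) :
    K2s < K1 ∧
    Real.cosh (2 * (K1 - K2s)) = (A - 1) / B ∧
    ν₀ = 2 * |K1 - K2s| ∧
    ν₀ = 2 * (K1 - K2s) := by
  obtain ⟨hs1, hc1⟩ := dual_hyp K1 K1s hK1 hdual1
  obtain ⟨hs2, hc2⟩ := dual_hyp K2 K2s hK2 hdual2
  have hS1 : 0 < Real.sinh (2 * K1) := Real.sinh_pos_iff.2 (by linarith)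
  have hS2 : 0 < Real.sinh (2 * K2) := Real.sinh_pos_iff.2 (by linarith)
  -- K2s < K1
  have hmono : Real.sinh (2 * K1s) < Real.sinh (2 * K2) :=
    Real.sinh_lt_sinh.2 (by linarith)
  have hlt : K2s < K1 := by
    have h1 : Real.sinh (2 * K2s) < Real.sinh (2 * K1) := by
      rw [hs2]
      rw [hs1] at hmono
      have h2 : 1 < Real.sinh (2 * K1) * Real.sinh (2 * K2) := by
        have := (div_lt_iff₀ hS1).1 hmono
        nlinarith
      have : 1 / Real.sinh (2 * K2) < Real.sinh (2 * K1) := by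
        rw [div_lt_iff₀ hS2]
        nlinarith
      linarith
    have := Real.sinh_lt_sinh.1 h1
    linarith
  have key : Real.cosh (2 * (K1 - K2s)) = (A - 1) / B := by
    have hexpand : Real.cosh (2 * (K1 - K2s)) =
        Real.cosh (2 * K1) * Real.cosh (2 * K2s) -
        Real.sinh (2 * K1) * Real.sinh (2 * K2s) := by
      have : 2 * (K1 - K2s) = 2 * K1 - 2 * K2s := by ring
      rw [this, Real.cosh_sub]
    rw [hexpand, hc2, hs2, hA, hB, hc1, hs1]
    field_simp
  refine ⟨hlt, key, ?_, ?_⟩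
  · have hpos : 0 < 2 * (K1 - K2s) := by linarith
    have heq : ν₀ = 2 * (K1 - K2s) :=
      Real.cosh_strictMonoOn.injOn (le_of_lt hν₀pos) (le_of_lt hpos)
        (by rw [hν₀, key])
    rw [heq, abs_of_pos (by linarith : (0:ℝ) < K1 - K2s)]
  · have hpos : 0 < 2 * (K1 - K2s) := by linarith
    exact Real.cosh_strictMonoOn.injOn (le_of_lt hν₀pos) (le_of_lt hpos) (by rw [hν₀, key])
end

section
/- The map ν ↦ B·sinh(ν)/sinh(ĝ(ν)) is a continuous strictly increasing bijection from [0,ν₀) onto [0,∞). Consequently, for every θ ∈ [0,π/2) the saddle-point equation B·sinh(ν) = tan(θ)·sinh(ĝ(ν)) has a unique solution ν(θ) ∈ [0,ν₀), with ν(0) = 0 and ν(θ) → ν₀ as θ → π/2⁻. -/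
open Real Filter

/-- The map `ν ↦ B sinh ν / sinh (ĝ ν)` is a continuous strictly
increasing bijection from `[0, ν₀)` onto `[0, ∞)`.  Consequently, for every
`θ ∈ [0, π/2)` the saddle-point equation `B sinh ν = tan θ · sinh (ĝ ν)` has a
unique solution `ν(θ) ∈ [0, ν₀)`, with `ν(0) = 0` and `ν(θ) → ν₀` as
`θ → π/2⁻`. -/
theorem statement3
    (K1 K2 K1s : ℝ)
    (hK1 : 0 < K1) (hK2 : 0 < K2) (hK1s : 0 < K1s)
    (hdual : Real.exp (2 * K1s) = Real.cosh K1 / Real.sinh K1)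
    (hlow : K1s < K2)
    (A B : ℝ)
    (hA : A = Real.cosh (2 * K1s) * Real.cosh (2 * K2))
    (hB : B = Real.sinh (2 * K1s) * Real.sinh (2 * K2))
    (ν₀ : ℝ) (hν₀pos : 0 < ν₀)
    (hν₀ : Real.cosh ν₀ = (A - 1) / B)
    (g : ℝ → ℝ)
    (hg : ∀ ν ∈ Set.Icc (0 : ℝ) ν₀,
      0 ≤ g ν ∧ Real.cosh (g ν) = A - B * Real.cosh ν)
    (nu : ℝ → ℝ)
    (hnu : ∀ θ ∈ Set.Ico (0 : ℝ) (π / 2),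
      nu θ ∈ Set.Ico (0 : ℝ) ν₀ ∧
      B * Real.sinh (nu θ) = Real.tan θ * Real.sinh (g (nu θ))) :
    ContinuousOn (fun ν => B * Real.sinh ν / Real.sinh (g ν)) (Set.Ico 0 ν₀) ∧
    StrictMonoOn (fun ν => B * Real.sinh ν / Real.sinh (g ν)) (Set.Ico 0 ν₀) ∧
    (fun ν => B * Real.sinh ν / Real.sinh (g ν)) '' Set.Ico 0 ν₀ = Set.Ici 0 ∧
    (∀ θ ∈ Set.Ico (0 : ℝ) (π / 2),
      ∃! ν : ℝ, ν ∈ Set.Ico (0 : ℝ) ν₀ ∧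
        B * Real.sinh ν = Real.tan θ * Real.sinh (g ν)) ∧
    nu 0 = 0 ∧
    Tendsto nu (nhdsWithin (π / 2) (Set.Iio (π / 2))) (nhds ν₀) := by
  set f : ℝ → ℝ := fun ν => B * Real.sinh ν / Real.sinh (g ν) with hf
  have hBpos : 0 < B := by
    rw [hB]
    exact mul_pos (Real.sinh_pos_iff.2 (by linarith)) (Real.sinh_pos_iff.2 (by linarith))
  have hA1 : A - 1 = B * Real.cosh ν₀ := by
    rw [hν₀]; field_simp
  -- For ν ∈ [0, ν₀), we have 1 < A - B cosh ν
  have key : ∀ ν ∈ Set.Ico (0 : ℝ) ν₀, 1 < A - B * Real.cosh ν := by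
    intro ν hν
    have hcc : Real.cosh ν < Real.cosh ν₀ := by
      rw [Real.cosh_lt_cosh, abs_of_nonneg hν.1, abs_of_nonneg hν₀pos.le]
      exact hν.2
    nlinarith
  have hgpos : ∀ ν ∈ Set.Ico (0 : ℝ) ν₀, 0 < Real.sinh (g ν) := by
    intro ν hν
    obtain ⟨hg0, hgc⟩ := hg ν ⟨hν.1, hν.2.le⟩
    have h1 : 1 < Real.cosh (g ν) := by rw [hgc]; exact key ν hν
    have hgne : g ν ≠ 0 := by
      intro h; rw [h, Real.cosh_zero] at h1; linarith
    exact Real.sinh_pos_iff.2 (lt_of_le_of_ne hg0 (Ne.symm hgne))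
  have hsinh_eq : ∀ ν ∈ Set.Ico (0 : ℝ) ν₀,
      Real.sinh (g ν) = Real.sqrt ((A - B * Real.cosh ν) ^ 2 - 1) := by
    intro ν hν
    obtain ⟨hg0, hgc⟩ := hg ν ⟨hν.1, hν.2.le⟩
    have h1 : Real.sinh (g ν) ^ 2 = (A - B * Real.cosh ν) ^ 2 - 1 := by
      have h2 := Real.cosh_sq (g ν)
      rw [hgc] at h2; linarith
    rw [← h1, Real.sqrt_sq (Real.sinh_nonneg_iff.2 hg0)]
  -- continuity
  have hcont : ContinuousOn f (Set.Ico 0 ν₀) := by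
    have hF : ContinuousOn
        (fun ν => B * Real.sinh ν / Real.sqrt ((A - B * Real.cosh ν) ^ 2 - 1))
        (Set.Ico 0 ν₀) := by
      apply ContinuousOn.div
      · exact (continuous_const.mul Real.continuous_sinh).continuousOn
      · exact (Real.continuous_sqrt.comp (((continuous_const.sub (continuous_const.mul Real.continuous_cosh)).pow 2).sub continuous_const)).continuousOn
      · intro ν hν
        have := key ν hν
        have hpos : 0 < (A - B * Real.cosh ν) ^ 2 - 1 := by nlinarith
        exact (Real.sqrt_pos.2 hpos).ne'
    exact hF.congr fun ν hν => by rw [hf]; simp only; rw [hsinh_eq ν hν]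
  have hmono : StrictMonoOn f (Set.Ico 0 ν₀) := by
    intro x hx y hy hxy
    have hgx := hgpos x hx
    have hgy := hgpos y hy
    obtain ⟨hgx0, hgxc⟩ := hg x ⟨hx.1, hx.2.le⟩
    obtain ⟨hgy0, hgyc⟩ := hg y ⟨hy.1, hy.2.le⟩
    have hcxy : Real.cosh x < Real.cosh y := by
      rw [Real.cosh_lt_cosh, abs_of_nonneg hx.1, abs_of_nonneg hy.1]
      exact hxy
    have hcc : Real.cosh (g y) < Real.cosh (g x) := by
      rw [hgxc, hgyc]; nlinarith
    have hglt : g y < g x := by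
      have := Real.cosh_lt_cosh.1 hcc
      rwa [abs_of_nonneg hgy0, abs_of_nonneg hgx0] at this
    have hs : Real.sinh (g y) < Real.sinh (g x) := Real.sinh_lt_sinh.2 hglt
    have hsx : 0 ≤ Real.sinh x := Real.sinh_nonneg_iff.2 hx.1
    have hsxy : Real.sinh x < Real.sinh y := Real.sinh_lt_sinh.2 hxy
    rw [hf]; simp only
    rw [div_lt_div_iff₀ hgx hgy]
    nlinarith [mul_lt_mul_of_pos_right (mul_lt_mul_of_pos_left hsxy hBpos) hgx,
      mul_le_mul_of_nonneg_left hs.le (mul_nonneg hBpos.le hsx)]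
  -- f 0 = 0
  have hf0 : f 0 = 0 := by rw [hf]; simp
  have hfnonneg : ∀ ν ∈ Set.Ico (0 : ℝ) ν₀, 0 ≤ f ν := fun ν hν =>
    div_nonneg (mul_nonneg hBpos.le (Real.sinh_nonneg_iff.2 hν.1)) (hgpos ν hν).le
  -- f tends to atTop at ν₀⁻
  have hIoo : Set.Ioo (0 : ℝ) ν₀ ∈ nhdsWithin ν₀ (Set.Iio ν₀) :=
    Ioo_mem_nhdsLT_of_mem ⟨hν₀pos, le_refl _⟩
  have htop : Tendsto f (nhdsWithin ν₀ (Set.Iio ν₀)) atTop := by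
    have hnum : Tendsto (fun ν => B * Real.sinh ν) (nhdsWithin ν₀ (Set.Iio ν₀))
        (nhds (B * Real.sinh ν₀)) :=
      ((continuous_const.mul Real.continuous_sinh).tendsto ν₀).mono_left nhdsWithin_le_nhds
    have hnumpos : 0 < B * Real.sinh ν₀ := mul_pos hBpos (Real.sinh_pos_iff.2 hν₀pos)
    have hden0 : Tendsto (fun ν => Real.sqrt ((A - B * Real.cosh ν) ^ 2 - 1))
        (nhdsWithin ν₀ (Set.Iio ν₀)) (nhds 0) := by
      have : Real.sqrt ((A - B * Real.cosh ν₀) ^ 2 - 1) = 0 := by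
        have : A - B * Real.cosh ν₀ = 1 := by linarith
        rw [this]; norm_num
      have hc : Continuous (fun ν => Real.sqrt ((A - B * Real.cosh ν) ^ 2 - 1)) :=
        Real.continuous_sqrt.comp (((continuous_const.sub (continuous_const.mul Real.continuous_cosh)).pow 2).sub continuous_const)
      have := (hc.tendsto ν₀).mono_left (nhdsWithin_le_nhds (s := Set.Iio ν₀))
      rwa [show Real.sqrt ((A - B * Real.cosh ν₀) ^ 2 - 1) = 0 from ‹_›] at this
    have hdenpos : ∀ᶠ ν in nhdsWithin ν₀ (Set.Iio ν₀),
        0 < Real.sqrt ((A - B * Real.cosh ν) ^ 2 - 1) := by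
      filter_upwards [hIoo] with ν hν
      have := key ν ⟨hν.1.le, hν.2⟩
      exact Real.sqrt_pos.2 (by nlinarith)
    have hdentend : Tendsto (fun ν => Real.sqrt ((A - B * Real.cosh ν) ^ 2 - 1))
        (nhdsWithin ν₀ (Set.Iio ν₀)) (nhdsWithin 0 (Set.Ioi 0)) :=
      tendsto_nhdsWithin_iff.2 ⟨hden0, hdenpos⟩
    have hinv : Tendsto (fun ν => (Real.sqrt ((A - B * Real.cosh ν) ^ 2 - 1))⁻¹)
        (nhdsWithin ν₀ (Set.Iio ν₀)) atTop :=
      tendsto_inv_nhdsGT_zero.comp hdentend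
    have hFtop : Tendsto
        (fun ν => B * Real.sinh ν / Real.sqrt ((A - B * Real.cosh ν) ^ 2 - 1))
        (nhdsWithin ν₀ (Set.Iio ν₀)) atTop := by
      simp only [div_eq_mul_inv]
      exact hnum.pos_mul_atTop hnumpos hinv
    refine hFtop.congr' ?_
    filter_upwards [hIoo] with ν hν
    rw [hf]; simp only; rw [hsinh_eq ν ⟨hν.1.le, hν.2⟩]
  -- surjectivity onto [0, ∞)
  have himage : f '' Set.Ico 0 ν₀ = Set.Ici 0 := by
    apply Set.Subset.antisymm
    · rintro y ⟨ν, hν, rfl⟩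
      exact hfnonneg ν hν
    · intro y hy
      obtain ⟨ν₁, hν₁mem, hν₁big⟩ :
          ∃ ν₁, ν₁ ∈ Set.Ioo (0 : ℝ) ν₀ ∧ y ≤ f ν₁ := by
        have h1 : ∀ᶠ ν in nhdsWithin ν₀ (Set.Iio ν₀), y ≤ f ν := htop.eventually_ge_atTop y
        have h2 : ∀ᶠ ν in nhdsWithin ν₀ (Set.Iio ν₀), ν ∈ Set.Ioo (0 : ℝ) ν₀ := hIoo
        obtain ⟨ν₁, h⟩ := (h1.and h2).exists
        exact ⟨ν₁, h.2, h.1⟩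
      have hsub : Set.Icc (0 : ℝ) ν₁ ⊆ Set.Ico 0 ν₀ := fun z hz => ⟨hz.1, lt_of_le_of_lt hz.2 hν₁mem.2⟩
      have hivt := intermediate_value_Icc hν₁mem.1.le (hcont.mono hsub)
      have hy' : y ∈ Set.Icc (f 0) (f ν₁) := by rw [hf0]; exact ⟨hy, hν₁big⟩
      obtain ⟨ν, hν, hfν⟩ := hivt hy'
      exact ⟨ν, hsub hν, hfν⟩
  -- equation equivalence
  have heqv : ∀ ν ∈ Set.Ico (0 : ℝ) ν₀, ∀ t : ℝ,
      (B * Real.sinh ν = t * Real.sinh (g ν) ↔ f ν = t) := by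
    intro ν hν t
    rw [hf]; simp only
    rw [div_eq_iff (hgpos ν hν).ne']
  refine ⟨hcont, hmono, himage, ?_, ?_, ?_⟩
  · -- unique solution
    intro θ hθ
    have htan : 0 ≤ Real.tan θ := Real.tan_nonneg_of_nonneg_of_le_pi_div_two hθ.1 hθ.2.le
    have : Real.tan θ ∈ f '' Set.Ico 0 ν₀ := himage ▸ htan
    obtain ⟨ν, hν, hfν⟩ := this
    refine ⟨ν, ⟨hν, (heqv ν hν _).2 hfν⟩, ?_⟩
    rintro ν' ⟨hν', heq'⟩
    have hfν' : f ν' = Real.tan θ := (heqv ν' hν' _).1 heq'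
    exact hmono.injOn hν' hν (hfν'.trans hfν.symm)
  · -- nu 0 = 0
    obtain ⟨hmem, heqn⟩ := hnu 0 ⟨le_refl _, by positivity⟩
    rw [Real.tan_zero, zero_mul] at heqn
    have : Real.sinh (nu 0) = 0 := by
      rcases mul_eq_zero.1 heqn with h | h
      · exact absurd h hBpos.ne'
      · exact h
    exact Real.sinh_eq_zero.1 this
  · -- limit
    have hEv : ∀ᶠ θ in nhdsWithin (π / 2) (Set.Iio (π / 2)), θ ∈ Set.Ico (0 : ℝ) (π / 2) := by
      filter_upwards [Ioo_mem_nhdsLT_of_mem (Set.mem_Ioc.2 ⟨by positivity, le_refl _⟩)] with θ hθ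
      exact ⟨hθ.1.le, hθ.2⟩
    rw [tendsto_order]
    constructor
    · intro a ha
      rcases lt_or_ge a 0 with h | h
      · filter_upwards [hEv] with θ hθ
        exact lt_of_lt_of_le h (hnu θ hθ).1.1
      · have haIco : a ∈ Set.Ico (0 : ℝ) ν₀ := ⟨h, ha⟩
        have htt : ∀ᶠ θ in nhdsWithin (π / 2) (Set.Iio (π / 2)), f a < Real.tan θ :=
          Real.tendsto_tan_pi_div_two.eventually_gt_atTop (f a)
        filter_upwards [hEv, htt] with θ hθ hfa
        obtain ⟨hmem, heqn⟩ := hnu θ hθ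
        have hfν : f (nu θ) = Real.tan θ := (heqv (nu θ) hmem _).1 heqn
        by_contra hcon
        push_neg at hcon
        have : f (nu θ) ≤ f a := by
          rcases eq_or_lt_of_le hcon with h' | h'
          · rw [h']
          · exact (hmono hmem haIco h').le
        rw [hfν] at this
        exact absurd hfa (not_lt.2 this)
    · intro b hb
      filter_upwards [hEv] with θ hθ
      exact lt_trans (hnu θ hθ).1.2 hb
end

section
/- The function θ ↦ ν(θ) is differentiable on (0,π/2), ĝ″(ν(θ)) < 0 there, and ν′(θ) = sec²θ / (−ĝ″(ν(θ))); in particular ν is strictly increasing on (0,π/2). -/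
open Real

/-- cosh is injective on nonnegative reals. -/
lemma cosh_inj_nonneg {a b : ℝ} (ha : 0 ≤ a) (hb : 0 ≤ b)
    (h : Real.cosh a = Real.cosh b) : a = b := by
  have habs : |a| = |b| := le_antisymm (Real.cosh_le_cosh.1 h.le) (Real.cosh_le_cosh.1 h.ge)
  rwa [abs_of_nonneg ha, abs_of_nonneg hb] at habs

set_option maxHeartbeats 1600000 in
/-- The function `θ ↦ ν(θ)` is differentiable on `(0, π/2)`,
`ĝ″(ν(θ)) < 0` there, and `ν′(θ) = sec²θ / (−ĝ″(ν(θ)))`; in particular `ν` is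
strictly increasing on `(0, π/2)`. -/
theorem statement4
    (K1 K2 K1s : ℝ)
    (hK1 : 0 < K1) (hK2 : 0 < K2) (hK1s : 0 < K1s)
    (hdual : Real.exp (2 * K1s) = Real.cosh K1 / Real.sinh K1)
    (hlow : K1s < K2)
    (A B : ℝ)
    (hA : A = Real.cosh (2 * K1s) * Real.cosh (2 * K2))
    (hB : B = Real.sinh (2 * K1s) * Real.sinh (2 * K2))
    (ν₀ : ℝ) (hν₀pos : 0 < ν₀)
    (hν₀ : Real.cosh ν₀ = (A - 1) / B)
    (g : ℝ → ℝ)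
    (hg : ∀ ν ∈ Set.Icc (0 : ℝ) ν₀,
      0 ≤ g ν ∧ Real.cosh (g ν) = A - B * Real.cosh ν)
    (nu : ℝ → ℝ)
    (hnu : ∀ θ ∈ Set.Ico (0 : ℝ) (π / 2),
      nu θ ∈ Set.Ico (0 : ℝ) ν₀ ∧
      B * Real.sinh (nu θ) = Real.tan θ * Real.sinh (g (nu θ))) :
    (∀ θ ∈ Set.Ioo (0 : ℝ) (π / 2),
      deriv (deriv g) (nu θ) < 0 ∧
      HasDerivAt nu ((1 / Real.cos θ) ^ 2 / (-(deriv (deriv g) (nu θ)))) θ) ∧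
    StrictMonoOn nu (Set.Ioo 0 (π / 2)) := by
  have hB0 : 0 < B := by
    rw [hB]
    exact mul_pos (Real.sinh_pos_iff.2 (by linarith)) (Real.sinh_pos_iff.2 (by linarith))
  have hAB : 1 < A - B := by
    have h : A - B = Real.cosh (2 * K2 - 2 * K1s) := by
      rw [hA, hB, Real.cosh_sub]; ring
    rw [h]
    exact Real.one_lt_cosh.2 (by intro h'; linarith [h' ▸ (by linarith : (0:ℝ) < 2 * K2 - 2 * K1s)])
  have hν₀' : B * Real.cosh ν₀ = A - 1 := by
    rw [hν₀]; field_simp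
  -- the basic functions
  set C : ℝ → ℝ := fun ν => A - B * Real.cosh ν with hCdef
  set s : ℝ → ℝ := fun ν => Real.sqrt (C ν ^ 2 - 1) with hsdef
  -- C > 1 on [0, ν₀)
  have hC1 : ∀ ν ∈ Set.Ico (0 : ℝ) ν₀, 1 < C ν := by
    intro ν hν
    have h1 : Real.cosh ν < Real.cosh ν₀ := by
      rw [Real.cosh_lt_cosh, abs_of_nonneg hν.1, abs_of_pos hν₀pos]; exact hν.2
    have : B * Real.cosh ν < A - 1 := by
      calc B * Real.cosh ν < B * Real.cosh ν₀ := by nlinarith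
        _ = A - 1 := hν₀'
    simp only [hCdef]; linarith
  have hCle : ∀ ν ∈ Set.Icc (0 : ℝ) ν₀, 1 ≤ C ν := by
    intro ν hν
    have h1 : Real.cosh ν ≤ Real.cosh ν₀ := by
      rw [Real.cosh_le_cosh, abs_of_nonneg hν.1, abs_of_pos hν₀pos]; exact hν.2
    have : B * Real.cosh ν ≤ A - 1 := by
      calc B * Real.cosh ν ≤ B * Real.cosh ν₀ := by nlinarith
        _ = A - 1 := hν₀'
    simp only [hCdef]; linarith
  have hs_nonneg : ∀ ν, 0 ≤ s ν := fun ν => Real.sqrt_nonneg _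
  have hs_pos : ∀ ν ∈ Set.Ico (0 : ℝ) ν₀, 0 < s ν := by
    intro ν hν
    have := hC1 ν hν
    exact Real.sqrt_pos.2 (by nlinarith)
  have hssq : ∀ ν ∈ Set.Icc (0 : ℝ) ν₀, s ν ^ 2 = C ν ^ 2 - 1 := by
    intro ν hν
    have := hCle ν hν
    exact Real.sq_sqrt (by nlinarith)
  -- sinh (g ν) = s ν on [0, ν₀]
  have hsinh_g : ∀ ν ∈ Set.Icc (0 : ℝ) ν₀, Real.sinh (g ν) = s ν := by
    intro ν hν
    obtain ⟨hg0, hgc⟩ := hg ν hν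
    have hcsq := Real.cosh_sq (g ν)
    have h1 : Real.sinh (g ν) ^ 2 = C ν ^ 2 - 1 := by
      simp only [hCdef]
      rw [← hgc]; linarith
    have h2 : s ν = Real.sqrt (Real.sinh (g ν) ^ 2) := by
      rw [hsdef]; simp only; rw [← h1]
    rw [h2, Real.sqrt_sq (Real.sinh_nonneg_iff.2 hg0)]
  -- g equals log (C + s) on [0, ν₀]
  have hg_eq : ∀ ν ∈ Set.Icc (0 : ℝ) ν₀, g ν = Real.log (C ν + s ν) := by
    intro ν hν
    obtain ⟨hg0, hgc⟩ := hg ν hν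
    have hC := hCle ν hν
    have hsq := hssq ν hν
    have hy1 : 1 ≤ C ν + s ν := by linarith [hs_nonneg ν]
    have hy0 : 0 < C ν + s ν := by linarith
    have hmul : (C ν + s ν) * (C ν - s ν) = 1 := by nlinarith
    have hinv : (C ν + s ν)⁻¹ = C ν - s ν := inv_eq_of_mul_eq_one_right hmul
    have hcosh : Real.cosh (Real.log (C ν + s ν)) = C ν := by
      rw [Real.cosh_eq, Real.exp_log hy0, Real.exp_neg, Real.exp_log hy0, hinv]; ring
    exact cosh_inj_nonneg hg0 (Real.log_nonneg hy1)
      (by rw [hgc, hcosh])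
  -- derivative facts
  have hC' : ∀ ν : ℝ, HasDerivAt C (-(B * Real.sinh ν)) ν := by
    intro ν
    simpa using ((Real.hasDerivAt_cosh ν).const_mul B).const_sub A
  have hs' : ∀ ν ∈ Set.Ico (0 : ℝ) ν₀,
      HasDerivAt s (C ν * -(B * Real.sinh ν) / s ν) ν := by
    intro ν hν
    have hC := hC1 ν hν
    have hq : HasDerivAt (fun x => C x ^ 2 - 1) (2 * C ν * -(B * Real.sinh ν)) ν := by
      simpa [mul_comm, mul_assoc, mul_left_comm] using (((hC' ν).pow 2).sub_const 1)
    have hd := hq.sqrt (by nlinarith : C ν ^ 2 - 1 ≠ 0)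
    have hspos := hs_pos ν hν
    convert hd using 1
    show C ν * -(B * Real.sinh ν) / s ν = 2 * C ν * -(B * Real.sinh ν) / (2 * s ν)
    rw [mul_assoc, mul_div_mul_left _ _ (two_ne_zero)]
  have hGd : ∀ ν ∈ Set.Ico (0 : ℝ) ν₀,
      HasDerivAt (fun x => Real.log (C x + s x)) (-(B * Real.sinh ν) / s ν) ν := by
    intro ν hν
    have hC := hC1 ν hν
    have hspos := hs_pos ν hν
    have hy0 : C ν + s ν ≠ 0 := by
      have := hs_nonneg ν; intro h; linarith [h ▸ (by linarith : (0:ℝ) < C ν + s ν)]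
    have hd := ((hC' ν).add (hs' ν hν)).log hy0
    refine hd.congr_deriv ?_
    have hsne : s ν ≠ 0 := ne_of_gt hspos
    simp only [Pi.add_apply]
    field_simp
    ring
  -- H = deriv g on (0, ν₀)
  set H : ℝ → ℝ := fun ν => -(B * Real.sinh ν) / s ν with hHdef
  have hIooIcc : Set.Ioo (0:ℝ) ν₀ ⊆ Set.Icc 0 ν₀ := Set.Ioo_subset_Icc_self
  have hIooIco : Set.Ioo (0:ℝ) ν₀ ⊆ Set.Ico 0 ν₀ := Set.Ioo_subset_Ico_self
  have hderiv_g : ∀ ν ∈ Set.Ioo (0 : ℝ) ν₀, deriv g ν = H ν := by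
    intro ν hν
    have hev : g =ᶠ[nhds ν] (fun x => Real.log (C x + s x)) := by
      filter_upwards [isOpen_Ioo.mem_nhds hν] with x hx
      exact hg_eq x (hIooIcc hx)
    rw [hev.deriv_eq]
    exact (hGd ν (hIooIco hν)).deriv
  -- second derivative
  set D : ℝ → ℝ :=
    fun ν => (-(B * Real.cosh ν) * s ν ^ 2 - C ν * (B * Real.sinh ν) ^ 2) / s ν ^ 3 with hDdef
  have hHd : ∀ ν ∈ Set.Ioo (0 : ℝ) ν₀, HasDerivAt H (D ν) ν := by
    intro ν hν
    have hspos := hs_pos ν (hIooIco hν)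
    have hsne : s ν ≠ 0 := ne_of_gt hspos
    have hu : HasDerivAt (fun x => -(B * Real.sinh x)) (-(B * Real.cosh ν)) ν := by
      exact ((Real.hasDerivAt_sinh ν).const_mul B).neg
    have hd := hu.div (hs' ν (hIooIco hν)) hsne
    refine hd.congr_deriv ?_
    show _ = (-(B * Real.cosh ν) * s ν ^ 2 - C ν * (B * Real.sinh ν) ^ 2) / s ν ^ 3
    field_simp
  have hDneg : ∀ ν ∈ Set.Ioo (0 : ℝ) ν₀, D ν < 0 := by
    intro ν hν
    have hspos := hs_pos ν (hIooIco hν)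
    have hC := hC1 ν (hIooIco hν)
    have hcosh := Real.cosh_pos ν
    have hsinh : 0 < Real.sinh ν := Real.sinh_pos_iff.2 hν.1
    simp only [hDdef]
    apply div_neg_of_neg_of_pos
    · have h1 : 0 < B * Real.cosh ν * s ν ^ 2 := by positivity
      have h2 : 0 ≤ C ν * (B * Real.sinh ν) ^ 2 := mul_nonneg (by linarith) (sq_nonneg _)
      nlinarith
    · positivity
  have hdd : ∀ ν ∈ Set.Ioo (0 : ℝ) ν₀, deriv (deriv g) ν = D ν := by
    intro ν hν
    have hev : deriv g =ᶠ[nhds ν] H := by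
      filter_upwards [isOpen_Ioo.mem_nhds hν] with x hx
      exact hderiv_g x hx
    rw [hev.deriv_eq]
    exact (hHd ν hν).deriv
  -- Φ = -H
  set Φ : ℝ → ℝ := fun ν => B * Real.sinh ν / s ν with hΦdef
  have hΦH : Φ = fun ν => -H ν := by
    funext ν; simp only [hΦdef, hHdef, neg_div, neg_neg]
  have hΦd : ∀ ν ∈ Set.Ioo (0 : ℝ) ν₀, HasDerivAt Φ (-(D ν)) ν := by
    intro ν hν
    rw [hΦH]
    exact (hHd ν hν).neg
  have hΦmono : StrictMonoOn Φ (Set.Ioo 0 ν₀) := by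
    apply strictMonoOn_of_deriv_pos (convex_Ioo _ _)
    · exact fun x hx => (hΦd x hx).continuousAt.continuousWithinAt
    · intro x hx
      rw [interior_Ioo] at hx
      rw [(hΦd x hx).deriv]
      linarith [hDneg x hx]
  -- key facts for each θ
  have hkey : ∀ θ ∈ Set.Ioo (0 : ℝ) (π / 2),
      nu θ ∈ Set.Ioo (0 : ℝ) ν₀ ∧ Real.tan θ = Φ (nu θ) := by
    intro θ hθ
    obtain ⟨hmem, heq⟩ := hnu θ ⟨hθ.1.le, hθ.2⟩
    have htanpos : 0 < Real.tan θ := Real.tan_pos_of_pos_of_lt_pi_div_two hθ.1 hθ.2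
    have hsg : Real.sinh (g (nu θ)) = s (nu θ) := hsinh_g _ ⟨hmem.1, hmem.2.le⟩
    have hne : nu θ ≠ 0 := by
      intro h0
      rw [h0] at heq
      have hs0 : 0 < s 0 := hs_pos 0 ⟨le_refl _, hν₀pos⟩
      have hsg0 : Real.sinh (g 0) = s 0 := hsinh_g 0 ⟨le_refl _, hν₀pos.le⟩
      rw [Real.sinh_zero, mul_zero, hsg0] at heq
      nlinarith
    have hmem' : nu θ ∈ Set.Ioo (0 : ℝ) ν₀ := ⟨lt_of_le_of_ne hmem.1 (Ne.symm hne), hmem.2⟩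
    refine ⟨hmem', ?_⟩
    have hspos := hs_pos _ hmem
    rw [hΦdef]
    simp only
    rw [eq_div_iff (ne_of_gt hspos), ← hsg]
    linarith [heq]
  -- continuity of nu
  have hcont : ∀ θ ∈ Set.Ioo (0 : ℝ) (π / 2), ContinuousAt nu θ := by
    intro θ hθ
    obtain ⟨hmem, heq⟩ := hkey θ hθ
    rw [ContinuousAt, (nhds_basis_Ioo_pos (nu θ)).tendsto_right_iff]
    intro ε hε
    set ε' : ℝ := min ε (min (nu θ / 2) ((ν₀ - nu θ) / 2)) with hε'def
    have hε'pos : 0 < ε' :=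
      lt_min hε (lt_min (by linarith [hmem.1]) (by linarith [hmem.2]))
    have hε'le : ε' ≤ ε := min_le_left _ _
    have ha : nu θ - ε' ∈ Set.Ioo (0:ℝ) ν₀ := by
      constructor
      · have : ε' ≤ nu θ / 2 := le_trans (min_le_right _ _) (min_le_left _ _)
        linarith [hmem.1]
      · linarith [hmem.2, hε'pos]
    have hb : nu θ + ε' ∈ Set.Ioo (0:ℝ) ν₀ := by
      constructor
      · linarith [hmem.1, hε'pos]
      · have : ε' ≤ (ν₀ - nu θ) / 2 := le_trans (min_le_right _ _) (min_le_right _ _)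
        linarith
    have hΦa : Φ (nu θ - ε') < Real.tan θ := by
      rw [heq]; exact hΦmono ha hmem (by linarith)
    have hΦb : Real.tan θ < Φ (nu θ + ε') := by
      rw [heq]; exact hΦmono hmem hb (by linarith)
    have hcos : Real.cos θ ≠ 0 :=
      (Real.cos_pos_of_mem_Ioo ⟨by linarith [Real.pi_pos, hθ.1], hθ.2⟩).ne'
    have htancont : ContinuousAt Real.tan θ := Real.continuousAt_tan.2 hcos
    have hev1 : ∀ᶠ θ' in nhds θ, Real.tan θ' ∈ Set.Ioo (Φ (nu θ - ε')) (Φ (nu θ + ε')) :=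
      htancont (isOpen_Ioo.mem_nhds ⟨hΦa, hΦb⟩)
    have hev2 : ∀ᶠ θ' in nhds θ, θ' ∈ Set.Ioo (0:ℝ) (π / 2) := isOpen_Ioo.mem_nhds hθ
    filter_upwards [hev1, hev2] with θ' h1 h2
    obtain ⟨hmem', heq'⟩ := hkey θ' h2
    have hlt1 : nu θ - ε' < nu θ' := by
      by_contra hcon
      push_neg at hcon
      have := (hΦmono.le_iff_le hmem' ha).2 hcon
      rw [← heq'] at this
      linarith [h1.1]
    have hlt2 : nu θ' < nu θ + ε' := by
      by_contra hcon
      push_neg at hcon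
      have := (hΦmono.le_iff_le hb hmem').2 hcon
      rw [← heq'] at this
      linarith [h1.2]
    exact ⟨by linarith, by linarith⟩
  -- main part
  constructor
  · intro θ hθ
    obtain ⟨hmem, heq⟩ := hkey θ hθ
    have hddD : deriv (deriv g) (nu θ) = D (nu θ) := hdd _ hmem
    have hDn := hDneg _ hmem
    refine ⟨by rw [hddD]; exact hDn, ?_⟩
    have hcos : 0 < Real.cos θ :=
      Real.cos_pos_of_mem_Ioo ⟨by linarith [Real.pi_pos, hθ.1], hθ.2⟩
    -- inverse function derivative
    have hfd : HasDerivAt (fun ν => Real.arctan (Φ ν))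
        ((1 + Φ (nu θ) ^ 2)⁻¹ * -(D (nu θ))) (nu θ) :=
      (Real.hasDerivAt_arctan' (Φ (nu θ))).comp (nu θ) (hΦd _ hmem)
    have h1Φpos : 0 < 1 + Φ (nu θ) ^ 2 := by positivity
    have hfne : (1 + Φ (nu θ) ^ 2)⁻¹ * -(D (nu θ)) ≠ 0 := by
      have : 0 < (1 + Φ (nu θ) ^ 2)⁻¹ * -(D (nu θ)) := by
        apply mul_pos (by positivity); linarith
      exact this.ne'
    have hfg : ∀ᶠ θ' in nhds θ, Real.arctan (Φ (nu θ')) = θ' := by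
      filter_upwards [isOpen_Ioo.mem_nhds hθ] with θ' hθ'
      rw [← (hkey θ' hθ').2]
      exact Real.arctan_tan (by linarith [Real.pi_pos, hθ'.1]) (by linarith [hθ'.2])
    have hd := HasDerivAt.of_local_left_inverse (hcont θ hθ) hfd hfne hfg
    have hval : ((1 + Φ (nu θ) ^ 2)⁻¹ * -(D (nu θ)))⁻¹
        = (1 / Real.cos θ) ^ 2 / (-(deriv (deriv g) (nu θ))) := by
      rw [hddD, ← heq]
      have h1 : (1 + Real.tan θ ^ 2)⁻¹ = Real.cos θ ^ 2 := Real.inv_one_add_tan_sq hcos.ne'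
      have h2 : (1:ℝ) + Real.tan θ ^ 2 = (1 / Real.cos θ) ^ 2 := by
        rw [div_pow, one_pow, one_div, ← h1, inv_inv]
      rw [mul_inv, inv_inv, h2, div_eq_mul_inv]
      ring
    rw [← hval]
    exact hd
  · intro θ1 h1 θ2 h2 hlt
    obtain ⟨hmem1, heq1⟩ := hkey θ1 h1
    obtain ⟨hmem2, heq2⟩ := hkey θ2 h2
    have htan : Real.tan θ1 < Real.tan θ2 := by
      apply Real.strictMonoOn_tan _ _ hlt
      · exact ⟨by linarith [Real.pi_pos, h1.1], by linarith [h1.2]⟩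
      · exact ⟨by linarith [Real.pi_pos, h2.1], by linarith [h2.2]⟩
    have : Φ (nu θ1) < Φ (nu θ2) := by rw [← heq1, ← heq2]; exact htan
    exact (hΦmono.lt_iff_lt hmem1 hmem2).1 this
end

section
/- The angle-dependent surface tension τ(θ) = cosθ·ĝ(ν(θ)) + sinθ·ν(θ) is differentiable on (0,π/2) with τ′(θ) = −sinθ·ĝ(ν(θ)) + cosθ·ν(θ). -/
open Real

/-- The angle-dependent surface tension
`τ(θ) = cos θ · ĝ(ν(θ)) + sin θ · ν(θ)` is differentiable on `(0, π/2)` with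
`τ′(θ) = −sin θ · ĝ(ν(θ)) + cos θ · ν(θ)`. -/
theorem statement5
    (K1 K2 K1s : ℝ)
    (hK1 : 0 < K1) (hK2 : 0 < K2) (hK1s : 0 < K1s)
    (hdual : Real.exp (2 * K1s) = Real.cosh K1 / Real.sinh K1)
    (hlow : K1s < K2)
    (A B : ℝ)
    (hA : A = Real.cosh (2 * K1s) * Real.cosh (2 * K2))
    (hB : B = Real.sinh (2 * K1s) * Real.sinh (2 * K2))
    (ν₀ : ℝ) (hν₀pos : 0 < ν₀)
    (hν₀ : Real.cosh ν₀ = (A - 1) / B)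
    (g : ℝ → ℝ)
    (hg : ∀ ν ∈ Set.Icc (0 : ℝ) ν₀,
      0 ≤ g ν ∧ Real.cosh (g ν) = A - B * Real.cosh ν)
    (nu : ℝ → ℝ)
    (hnu : ∀ θ ∈ Set.Ico (0 : ℝ) (π / 2),
      nu θ ∈ Set.Ico (0 : ℝ) ν₀ ∧
      B * Real.sinh (nu θ) = Real.tan θ * Real.sinh (g (nu θ)))
    (tau : ℝ → ℝ)
    (htau : ∀ θ, tau θ = Real.cos θ * g (nu θ) + Real.sin θ * nu θ) :
    ∀ θ ∈ Set.Ioo (0 : ℝ) (π / 2),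
      HasDerivAt tau (-Real.sin θ * g (nu θ) + Real.cos θ * nu θ) θ := by
  -- basic positivity facts
  have hB0 : 0 < B := by
    rw [hB]; positivity
  have hAB : 1 < A - B := by
    have h1 : A - B = Real.cosh (2 * K1s - 2 * K2) := by
      rw [Real.cosh_sub, hA, hB]
    rw [h1, Real.one_lt_cosh]
    intro h; nlinarith
  have hBν₀ : B * Real.cosh ν₀ = A - 1 := by
    rw [hν₀]; field_simp
  -- the function S x = sinh (g x) in explicit form
  set S : ℝ → ℝ := fun x => Real.sqrt ((A - B * Real.cosh x) ^ 2 - 1) with hS_def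
  -- c x := A - B * cosh x > 1 on [0, ν₀)
  have hc1 : ∀ x ∈ Set.Ico (0 : ℝ) ν₀, 1 < A - B * Real.cosh x := by
    intro x hx
    have hcc : Real.cosh x < Real.cosh ν₀ := by
      rw [Real.cosh_lt_cosh, abs_of_nonneg hx.1, abs_of_pos hν₀pos]
      exact hx.2
    nlinarith
  have hq0 : ∀ x ∈ Set.Ico (0 : ℝ) ν₀, 0 < (A - B * Real.cosh x) ^ 2 - 1 := by
    intro x hx
    have := hc1 x hx
    nlinarith
  have hSpos : ∀ x ∈ Set.Ico (0 : ℝ) ν₀, 0 < S x := by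
    intro x hx
    exact Real.sqrt_pos.mpr (hq0 x hx)
  -- sinh (g x) = S x and g x = arsinh (S x) on [0, ν₀]
  have hsinhg : ∀ x ∈ Set.Icc (0 : ℝ) ν₀, Real.sinh (g x) = S x := by
    intro x hx
    obtain ⟨hg0, hgc⟩ := hg x hx
    have hsq : Real.sinh (g x) ^ 2 = (A - B * Real.cosh x) ^ 2 - 1 := by
      have h1 := Real.cosh_sq' (g x)
      rw [← hgc]
      linarith
    have hnn : 0 ≤ Real.sinh (g x) := Real.sinh_nonneg_iff.mpr hg0
    rw [hS_def]
    simp only [← hsq]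
    exact (Real.sqrt_sq hnn).symm
  have hgarsinh : ∀ x ∈ Set.Icc (0 : ℝ) ν₀, g x = Real.arsinh (S x) := by
    intro x hx
    rw [← hsinhg x hx, Real.arsinh_sinh]
  -- derivative of S
  have hSd : ∀ x ∈ Set.Ico (0 : ℝ) ν₀,
      HasDerivAt S (-(B * (A - B * Real.cosh x) * Real.sinh x) / S x) x := by
    intro x hx
    have hc : HasDerivAt (fun y => A - B * Real.cosh y) (-(B * Real.sinh x)) x :=
      ((Real.hasDerivAt_cosh x).const_mul B).const_sub A
    have hq : HasDerivAt (fun y => (A - B * Real.cosh y) ^ 2 - 1)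
        (2 * (A - B * Real.cosh x) * -(B * Real.sinh x)) x := by
      have := (hc.pow 2).sub_const 1
      refine this.congr_deriv ?_
      ring
    have hne : (A - B * Real.cosh x) ^ 2 - 1 ≠ 0 := (hq0 x hx).ne'
    have := (Real.hasDerivAt_sqrt hne).comp x hq
    refine this.congr_deriv ?_
    have hSx : 0 < S x := hSpos x hx
    rw [hS_def]
    field_simp
  -- the function Φ and its derivative
  set Φ : ℝ → ℝ := fun x => B * Real.sinh x / S x with hΦ_def
  set Φd : ℝ → ℝ := fun x =>
    (B * Real.cosh x * S x -
      B * Real.sinh x * (-(B * (A - B * Real.cosh x) * Real.sinh x) / S x)) / S x ^ 2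
    with hΦd_def
  have hΦderiv : ∀ x ∈ Set.Ico (0 : ℝ) ν₀, HasDerivAt Φ (Φd x) x := by
    intro x hx
    have hnum : HasDerivAt (fun y => B * Real.sinh y) (B * Real.cosh x) x :=
      (Real.hasDerivAt_sinh x).const_mul B
    exact hnum.div (hSd x hx) (hSpos x hx).ne'
  have hΦdpos : ∀ x ∈ Set.Ico (0 : ℝ) ν₀, 0 < Φd x := by
    intro x hx
    have hSx := hSpos x hx
    have hcx := hc1 x hx
    have hshx : 0 ≤ Real.sinh x := Real.sinh_nonneg_iff.mpr hx.1
    have hchx : 0 < Real.cosh x := Real.cosh_pos x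
    rw [hΦd_def]
    have hnum : 0 < B * Real.cosh x * S x -
        B * Real.sinh x * (-(B * (A - B * Real.cosh x) * Real.sinh x) / S x) := by
      have h1 : 0 < B * Real.cosh x * S x := by positivity
      have h2 : 0 ≤ B * Real.sinh x * (B * (A - B * Real.cosh x) * Real.sinh x / S x) := by
        have : (0:ℝ) < A - B * Real.cosh x := by linarith
        positivity
      have h3 : -(B * (A - B * Real.cosh x) * Real.sinh x) / S x
          = -(B * (A - B * Real.cosh x) * Real.sinh x / S x) := by ring
      rw [h3]
      nlinarith
    positivity
  -- Φ is strictly monotone on [0, ν₀)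
  have hmono : StrictMonoOn Φ (Set.Ico (0 : ℝ) ν₀) := by
    apply strictMonoOn_of_deriv_pos (convex_Ico _ _)
    · exact fun x hx => (hΦderiv x hx).continuousAt.continuousWithinAt
    · intro x hx
      rw [interior_Ico] at hx
      rw [(hΦderiv x (Set.mem_Ico.mpr ⟨le_of_lt hx.1, hx.2⟩)).deriv]
      exact hΦdpos x ⟨le_of_lt hx.1, hx.2⟩
  -- Φ (nu θ') = tan θ' for θ' ∈ [0, π/2)
  have hΦnu : ∀ θ' ∈ Set.Ico (0 : ℝ) (π / 2), Φ (nu θ') = Real.tan θ' := by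
    intro θ' hθ'
    obtain ⟨hmem, hsad⟩ := hnu θ' hθ'
    have hS' : Real.sinh (g (nu θ')) = S (nu θ') :=
      hsinhg (nu θ') ⟨hmem.1, le_of_lt hmem.2⟩
    have hSx : 0 < S (nu θ') := hSpos (nu θ') hmem
    rw [hΦ_def]
    simp only
    rw [hsad, hS']
    field_simp
  -- now fix θ
  intro θ hθ
  obtain ⟨hθ0, hθπ⟩ := hθ
  have hθIco : θ ∈ Set.Ico (0 : ℝ) (π / 2) := ⟨le_of_lt hθ0, hθπ⟩
  have hcosθ : 0 < Real.cos θ := Real.cos_pos_of_mem_Ioo ⟨by linarith [Real.pi_pos], hθπ⟩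
  have htanθ : 0 < Real.tan θ := Real.tan_pos_of_pos_of_lt_pi_div_two hθ0 hθπ
  obtain ⟨hνmem, hsaddle⟩ := hnu θ hθIco
  have hΦν : Φ (nu θ) = Real.tan θ := hΦnu θ hθIco
  have hSν : 0 < S (nu θ) := hSpos (nu θ) hνmem
  have hνpos : 0 < nu θ := by
    rcases eq_or_lt_of_le hνmem.1 with h | h
    · exfalso
      have hS' : Real.sinh (g (nu θ)) = S (nu θ) :=
        hsinhg (nu θ) ⟨hνmem.1, le_of_lt hνmem.2⟩
      have hS0 : 0 < S 0 := hSpos 0 ⟨le_rfl, hν₀pos⟩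
      rw [hS', ← h, Real.sinh_zero, mul_zero] at hsaddle
      nlinarith
    · exact h
  -- strict differentiability of Φ at nu θ
  have hcν : 1 < A - B * Real.cosh (nu θ) := hc1 (nu θ) hνmem
  have hqν : (A - B * Real.cosh (nu θ)) ^ 2 - 1 ≠ 0 := (hq0 (nu θ) hνmem).ne'
  have hΦcd : ContDiffAt ℝ 1 Φ (nu θ) := by
    have hq : ContDiffAt ℝ 1 (fun y => (A - B * Real.cosh y) ^ 2 - 1) (nu θ) := by
      have : ContDiff ℝ 1 (fun y : ℝ => (A - B * Real.cosh y) ^ 2 - 1) :=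
        ((contDiff_const.sub (contDiff_const.mul Real.contDiff_cosh)).pow 2).sub contDiff_const
      exact this.contDiffAt
    have hScd : ContDiffAt ℝ 1 S (nu θ) :=
      (Real.contDiffAt_sqrt hqν).comp (nu θ) hq
    have hnumcd : ContDiffAt ℝ 1 (fun y : ℝ => B * Real.sinh y) (nu θ) :=
      (contDiff_const.mul Real.contDiff_sinh).contDiffAt
    exact hnumcd.div hScd hSν.ne'
  have hstrict : HasStrictDerivAt Φ (Φd (nu θ)) (nu θ) :=
    hΦcd.hasStrictDerivAt' (hΦderiv (nu θ) hνmem) one_ne_zero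
  have hΦdne : Φd (nu θ) ≠ 0 := (hΦdpos (nu θ) hνmem).ne'
  -- the local inverse Ψ
  set Ψ : ℝ → ℝ := hstrict.localInverse Φ (Φd (nu θ)) (nu θ) hΦdne with hΨ_def
  have hFd := hstrict.hasStrictFDerivAt_equiv hΦdne
  have hΨright : ∀ᶠ y in nhds (Φ (nu θ)), Φ (Ψ y) = y := hFd.eventually_right_inverse
  have hΨcont : ContinuousAt Ψ (Φ (nu θ)) := hFd.localInverse_continuousAt
  have hΨval : Ψ (Φ (nu θ)) = nu θ := hFd.localInverse_apply_image
  -- continuity of tan at θ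
  have htancont : ContinuousAt Real.tan θ := Real.continuousAt_tan.mpr hcosθ.ne'
  have htantendsto : Filter.Tendsto Real.tan (nhds θ) (nhds (Φ (nu θ))) := by
    rw [hΦν]; exact htancont.tendsto
  -- eventual equality nu = Ψ ∘ tan near θ
  have hΨtancont : ContinuousAt (fun θ' => Ψ (Real.tan θ')) θ := by
    apply ContinuousAt.comp _ htancont
    rw [← hΦν] at *
    exact hΨcont
  have hev1 : ∀ᶠ θ' in nhds θ, Φ (Ψ (Real.tan θ')) = Real.tan θ' :=
    htantendsto.eventually hΨright
  have hev2 : ∀ᶠ θ' in nhds θ, Ψ (Real.tan θ') ∈ Set.Ioo (0 : ℝ) ν₀ := by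
    apply hΨtancont.eventually_mem
    apply isOpen_Ioo.mem_nhds
    have : Ψ (Real.tan θ) = nu θ := by rw [← hΦν]; exact hΨval
    rw [this]
    exact ⟨hνpos, hνmem.2⟩
  have hev3 : ∀ᶠ θ' in nhds θ, θ' ∈ Set.Ioo (0 : ℝ) (π / 2) :=
    isOpen_Ioo.eventually_mem ⟨hθ0, hθπ⟩
  have hEq : ∀ᶠ θ' in nhds θ, nu θ' = Ψ (Real.tan θ') := by
    filter_upwards [hev1, hev2, hev3] with θ' h1 h2 h3
    have hθ'Ico : θ' ∈ Set.Ico (0 : ℝ) (π / 2) := ⟨le_of_lt h3.1, h3.2⟩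
    have hmem' := (hnu θ' hθ'Ico).1
    have hΦ' : Φ (nu θ') = Real.tan θ' := hΦnu θ' hθ'Ico
    have hΨmem : Ψ (Real.tan θ') ∈ Set.Ico (0 : ℝ) ν₀ := ⟨le_of_lt h2.1, h2.2⟩
    exact hmono.injOn hmem' hΨmem (by rw [hΦ', h1])
  -- derivative of nu at θ
  have hΨd : HasDerivAt Ψ (Φd (nu θ))⁻¹ (Φ (nu θ)) := (hstrict.to_localInverse hΦdne).hasDerivAt
  have htand : HasDerivAt Real.tan (1 / Real.cos θ ^ 2) θ := Real.hasDerivAt_tan hcosθ.ne'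
  set ν' : ℝ := (Φd (nu θ))⁻¹ * (1 / Real.cos θ ^ 2) with hν'_def
  have hΨtan : HasDerivAt (fun θ' => Ψ (Real.tan θ')) ν' θ := by
    have : HasDerivAt Ψ (Φd (nu θ))⁻¹ (Real.tan θ) := by rw [← hΦν]; exact hΨd
    exact this.comp θ htand
  have hnuD : HasDerivAt nu ν' θ := hΨtan.congr_of_eventuallyEq hEq
  -- derivative of g ∘ nu at θ
  have hgd : HasDerivAt (fun x => Real.arsinh (S x))
      (-(B * Real.sinh (nu θ)) / S (nu θ)) (nu θ) := by
    have harsinh := Real.hasDerivAt_arsinh (S (nu θ))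
    have := harsinh.comp (nu θ) (hSd (nu θ) hνmem)
    refine this.congr_deriv ?_
    have hsq : S (nu θ) ^ 2 = (A - B * Real.cosh (nu θ)) ^ 2 - 1 := by
      rw [hS_def]
      exact Real.sq_sqrt (le_of_lt (hq0 (nu θ) hνmem))
    have hsqrt : Real.sqrt (1 + S (nu θ) ^ 2) = A - B * Real.cosh (nu θ) := by
      rw [hsq]
      have : 1 + ((A - B * Real.cosh (nu θ)) ^ 2 - 1) = (A - B * Real.cosh (nu θ)) ^ 2 := by
        ring
      rw [this]
      exact Real.sqrt_sq (by linarith)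
    rw [hsqrt]
    field_simp
  have hGd : HasDerivAt (fun θ' => Real.arsinh (S (nu θ')))
      (-(B * Real.sinh (nu θ)) / S (nu θ) * ν') θ := hgd.comp θ hnuD
  have hGeq : (fun θ' => g (nu θ')) =ᶠ[nhds θ] (fun θ' => Real.arsinh (S (nu θ'))) := by
    filter_upwards [hev2, hEq] with θ' h2 heq
    rw [heq]
    exact hgarsinh (Ψ (Real.tan θ')) ⟨le_of_lt h2.1, le_of_lt h2.2⟩
  have hG : HasDerivAt (fun θ' => g (nu θ'))
      (-(B * Real.sinh (nu θ)) / S (nu θ) * ν') θ := hGd.congr_of_eventuallyEq hGeq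
  -- the key envelope identity: g'(ν(θ)) = -tan θ
  have hgdval : -(B * Real.sinh (nu θ)) / S (nu θ) = -Real.tan θ := by
    have hS' : Real.sinh (g (nu θ)) = S (nu θ) :=
      hsinhg (nu θ) ⟨hνmem.1, le_of_lt hνmem.2⟩
    rw [hS'] at hsaddle
    rw [hsaddle]
    field_simp
  -- assemble the derivative of tau
  have htauEq : tau = fun θ' => Real.cos θ' * g (nu θ') + Real.sin θ' * nu θ' :=
    funext htau
  have htauD : HasDerivAt tau
      ((-Real.sin θ * g (nu θ) + Real.cos θ * (-(B * Real.sinh (nu θ)) / S (nu θ) * ν'))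
        + (Real.cos θ * nu θ + Real.sin θ * ν')) θ := by
    rw [htauEq]
    exact ((Real.hasDerivAt_cos θ).mul hG).add ((Real.hasDerivAt_sin θ).mul hnuD)
  convert htauD using 1
  rw [hgdval, Real.tan_eq_sin_div_cos]
  field_simp
  ring
end

section
/- The surface stiffness is strictly positive and given by the explicit formula: for every θ ∈ (0,π/2), τ is twice differentiable at θ and τ(θ) + τ″(θ) = sec³θ / (−ĝ″(ν(θ))) > 0. -/
open Real

noncomputable def Sf (A B ν : ℝ) : ℝ := Real.sqrt ((A - B * Real.cosh ν) ^ 2 - 1)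
noncomputable def Gf (A B ν : ℝ) : ℝ := Real.arsinh (Sf A B ν)
noncomputable def Hf (A B ν : ℝ) : ℝ := B * Real.sinh ν / Sf A B ν
noncomputable def Hdf (A B ν : ℝ) : ℝ :=
  (B * Real.cosh ν * (Sf A B ν) ^ 2 + B ^ 2 * (Real.sinh ν) ^ 2 * (A - B * Real.cosh ν))
    / (Sf A B ν) ^ 3

lemma Sf_pos {A B ν : ℝ} (hy : 1 < A - B * Real.cosh ν) : 0 < Sf A B ν := by
  apply Real.sqrt_pos.mpr; nlinarith

lemma Sf_sq {A B ν : ℝ} (hy : 1 < A - B * Real.cosh ν) :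
    (Sf A B ν) ^ 2 = (A - B * Real.cosh ν) ^ 2 - 1 := by
  apply Real.sq_sqrt; nlinarith

lemma hasDerivAt_Sf {A B ν : ℝ} (hy : 1 < A - B * Real.cosh ν) :
    HasDerivAt (Sf A B) (-(B * Real.sinh ν) * (A - B * Real.cosh ν) / Sf A B ν) ν := by
  have hy' : HasDerivAt (fun ν => A - B * Real.cosh ν) (-(B * Real.sinh ν)) ν :=
    ((Real.hasDerivAt_cosh ν).const_mul B).const_sub A
  have hq : HasDerivAt (fun ν => (A - B * Real.cosh ν) ^ 2 - 1)
      (2 * (A - B * Real.cosh ν) ^ 1 * -(B * Real.sinh ν)) ν := by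
    simpa using (hy'.pow 2).sub_const 1
  have hne : (A - B * Real.cosh ν) ^ 2 - 1 ≠ 0 := by nlinarith
  have := hq.sqrt hne
  refine this.congr_deriv ?_
  symm
  have hS := Sf_pos hy
  rw [show Real.sqrt ((A - B * Real.cosh ν) ^ 2 - 1) = Sf A B ν from rfl]
  field_simp

lemma hasDerivAt_Gf {A B ν : ℝ} (hy : 1 < A - B * Real.cosh ν) :
    HasDerivAt (Gf A B) (-(B * Real.sinh ν) / Sf A B ν) ν := by
  have := (hasDerivAt_Sf hy).arsinh
  refine this.congr_deriv ?_
  symm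
  have h1 : 1 + Sf A B ν ^ 2 = (A - B * Real.cosh ν) ^ 2 := by rw [Sf_sq hy]; ring
  rw [h1, Real.sqrt_sq (by linarith)]
  have hS := Sf_pos hy
  have hy0 : A - B * Real.cosh ν ≠ 0 := by linarith
  rw [smul_eq_mul]
  field_simp

lemma hasDerivAt_Hf {A B ν : ℝ} (hy : 1 < A - B * Real.cosh ν) :
    HasDerivAt (Hf A B) (Hdf A B ν) ν := by
  have h1 : HasDerivAt (fun ν => B * Real.sinh ν) (B * Real.cosh ν) ν :=
    (Real.hasDerivAt_sinh ν).const_mul B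
  have hS := Sf_pos hy
  have := h1.div (hasDerivAt_Sf hy) (ne_of_gt hS)
  refine this.congr_deriv ?_
  symm
  unfold Hdf
  rw [eq_div_iff (by positivity)]
  field_simp
  ring

lemma Hdf_pos {A B ν : ℝ} (hB : 0 < B) (hν : 0 < ν) (hy : 1 < A - B * Real.cosh ν) :
    0 < Hdf A B ν := by
  have hS := Sf_pos hy
  have hs : 0 < Real.sinh ν := Real.sinh_pos_iff.mpr hν
  have hc : 0 < Real.cosh ν := Real.cosh_pos ν
  apply div_pos _ (by positivity)
  have h2 : 0 < B * Real.cosh ν * Sf A B ν ^ 2 := by positivity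
  have hy0 : (0:ℝ) < A - B * Real.cosh ν := by linarith
  have h3 : 0 < B ^ 2 * Real.sinh ν ^ 2 * (A - B * Real.cosh ν) := by positivity
  linarith


/-- The surface stiffness is strictly positive and given by an
explicit formula: for every `θ ∈ (0, π/2)`, `τ` is twice differentiable at `θ`
and `τ(θ) + τ″(θ) = sec³θ / (−ĝ″(ν(θ))) > 0`. -/
theorem statement6
    (K1 K2 K1s : ℝ)
    (hK1 : 0 < K1) (hK2 : 0 < K2) (hK1s : 0 < K1s)
    (hdual : Real.exp (2 * K1s) = Real.cosh K1 / Real.sinh K1)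
    (hlow : K1s < K2)
    (A B : ℝ)
    (hA : A = Real.cosh (2 * K1s) * Real.cosh (2 * K2))
    (hB : B = Real.sinh (2 * K1s) * Real.sinh (2 * K2))
    (ν₀ : ℝ) (hν₀pos : 0 < ν₀)
    (hν₀ : Real.cosh ν₀ = (A - 1) / B)
    (g : ℝ → ℝ)
    (hg : ∀ ν ∈ Set.Icc (0 : ℝ) ν₀,
      0 ≤ g ν ∧ Real.cosh (g ν) = A - B * Real.cosh ν)
    (nu : ℝ → ℝ)
    (hnu : ∀ θ ∈ Set.Ico (0 : ℝ) (π / 2),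
      nu θ ∈ Set.Ico (0 : ℝ) ν₀ ∧
      B * Real.sinh (nu θ) = Real.tan θ * Real.sinh (g (nu θ)))
    (tau : ℝ → ℝ)
    (htau : ∀ θ, tau θ = Real.cos θ * g (nu θ) + Real.sin θ * nu θ) :
    ∀ θ ∈ Set.Ioo (0 : ℝ) (π / 2),
      DifferentiableAt ℝ tau θ ∧
      DifferentiableAt ℝ (deriv tau) θ ∧
      tau θ + deriv (deriv tau) θ =
        (1 / Real.cos θ) ^ 3 / (-(deriv (deriv g) (nu θ))) ∧
      0 < tau θ + deriv (deriv tau) θ := by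
  have hB0 : 0 < B := by
    rw [hB]
    exact mul_pos (Real.sinh_pos_iff.mpr (by linarith)) (Real.sinh_pos_iff.mpr (by linarith))
  have hAB : 1 < A - B := by
    rw [hA, hB, ← Real.cosh_sub]
    exact Real.one_lt_cosh.mpr (by intro h; nlinarith)
  have hBν₀ : B * Real.cosh ν₀ = A - 1 := by
    rw [hν₀]; field_simp
  -- y > 1 on the open interval
  have hy1 : ∀ ν ∈ Set.Ioo (0 : ℝ) ν₀, 1 < A - B * Real.cosh ν := by
    intro ν hν
    have h1 : Real.cosh ν < Real.cosh ν₀ := by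
      rw [Real.cosh_lt_cosh, abs_of_pos hν.1, abs_of_pos hν₀pos]; exact hν.2
    nlinarith
  -- g coincides with Gf on [0, ν₀]
  have hgG : ∀ ν ∈ Set.Icc (0 : ℝ) ν₀, Real.sinh (g ν) = Sf A B ν ∧ g ν = Gf A B ν := by
    intro ν hν
    obtain ⟨hg0, hgc⟩ := hg ν hν
    have hs0 : 0 ≤ Real.sinh (g ν) := Real.sinh_nonneg_iff.mpr hg0
    have hsq : (A - B * Real.cosh ν) ^ 2 - 1 = Real.sinh (g ν) ^ 2 := by
      have := Real.cosh_sq (g ν)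
      rw [hgc] at this
      linarith
    have hSf : Sf A B ν = Real.sinh (g ν) := by
      rw [Sf, hsq, Real.sqrt_sq hs0]
    refine ⟨hSf.symm, ?_⟩
    rw [Gf, hSf, Real.arsinh_sinh]
  have hUopen : IsOpen (Set.Ioo (0 : ℝ) ν₀) := isOpen_Ioo
  have hVopen : IsOpen (Set.Ioo (0 : ℝ) (π / 2)) := isOpen_Ioo
  -- nu maps (0, π/2) into (0, ν₀)
  have hnuU : ∀ θ ∈ Set.Ioo (0 : ℝ) (π / 2), nu θ ∈ Set.Ioo (0 : ℝ) ν₀ := by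
    intro θ hθ
    obtain ⟨hmem, heq⟩ := hnu θ ⟨le_of_lt hθ.1, hθ.2⟩
    refine ⟨?_, hmem.2⟩
    rcases eq_or_lt_of_le hmem.1 with h0 | h0
    · exfalso
      have htanp : 0 < Real.tan θ := Real.tan_pos_of_pos_of_lt_pi_div_two hθ.1 hθ.2
      have hs0 : Real.sinh (nu θ) = 0 := by rw [← h0, Real.sinh_zero]
      have hsz : Real.sinh (g (nu θ)) = 0 := by
        rw [hs0, mul_zero] at heq
        rcases mul_eq_zero.mp heq.symm with h | h
        · linarith
        · exact h
      have hgz : g (nu θ) = 0 := by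
        have := congrArg Real.arsinh hsz
        rwa [Real.arsinh_sinh, Real.arsinh_zero] at this
      have hIcc : nu θ ∈ Set.Icc (0:ℝ) ν₀ := ⟨hmem.1, le_of_lt hmem.2⟩
      have hc := (hg (nu θ) hIcc).2
      rw [hgz, Real.cosh_zero, ← h0, Real.cosh_zero, mul_one] at hc
      linarith
    · exact h0
  -- the saddle point identity in terms of Hf
  have hHnu : ∀ θ ∈ Set.Ioo (0 : ℝ) (π / 2), Hf A B (nu θ) = Real.tan θ := by
    intro θ hθ
    obtain ⟨hmem, heq⟩ := hnu θ ⟨le_of_lt hθ.1, hθ.2⟩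
    have hU := hnuU θ hθ
    have hIcc : nu θ ∈ Set.Icc (0 : ℝ) ν₀ := ⟨hmem.1, le_of_lt hmem.2⟩
    have hSg := (hgG (nu θ) hIcc).1
    have hSp : 0 < Sf A B (nu θ) := Sf_pos (hy1 (nu θ) hU)
    rw [Hf, heq, hSg, mul_div_assoc, div_self (ne_of_gt hSp), mul_one]
  -- strict monotonicity of Hf on (0, ν₀)
  have hmono : StrictMonoOn (Hf A B) (Set.Ioo (0 : ℝ) ν₀) := by
    apply strictMonoOn_of_deriv_pos (convex_Ioo _ _)
    · intro ν hν
      exact (hasDerivAt_Hf (hy1 ν hν)).continuousAt.continuousWithinAt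
    · intro ν hν
      rw [interior_Ioo] at hν
      rw [(hasDerivAt_Hf (hy1 ν hν)).deriv]
      exact Hdf_pos hB0 hν.1 (hy1 ν hν)
  -- continuity of nu
  have hcont : ∀ θ₀ ∈ Set.Ioo (0 : ℝ) (π / 2), ContinuousAt nu θ₀ := by
    intro θ₀ hθ₀
    have hU₀ := hnuU θ₀ hθ₀
    have hcos : Real.cos θ₀ ≠ 0 := by
      have := Real.cos_pos_of_mem_Ioo ⟨by linarith [hθ₀.1, Real.pi_pos], hθ₀.2⟩
      linarith
    have htanc : ContinuousAt Real.tan θ₀ := Real.continuousAt_tan.mpr hcos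
    have hVev : ∀ᶠ θ in nhds θ₀, θ ∈ Set.Ioo (0 : ℝ) (π / 2) := hVopen.mem_nhds hθ₀
    rw [ContinuousAt]
    apply tendsto_order.2
    constructor
    · intro a ha
      set a' := max a (nu θ₀ / 2) with ha'
      have ha'U : a' ∈ Set.Ioo (0 : ℝ) ν₀ :=
        ⟨lt_max_of_lt_right (by linarith [hU₀.1]),
         max_lt (lt_trans ha hU₀.2) (by linarith [hU₀.1, hU₀.2])⟩
      have hlt : Hf A B a' < Real.tan θ₀ := by
        rw [← hHnu θ₀ hθ₀]
        exact hmono ha'U hU₀ (max_lt ha (by linarith [hU₀.1]))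
      have hev : ∀ᶠ θ in nhds θ₀, Hf A B a' < Real.tan θ :=
        htanc.eventually (eventually_gt_nhds hlt)
      filter_upwards [hVev, hev] with θ hθ hHθ
      have : Hf A B a' < Hf A B (nu θ) := by rwa [hHnu θ hθ]
      have := (hmono.lt_iff_lt ha'U (hnuU θ hθ)).mp this
      exact lt_of_le_of_lt (le_max_left _ _) this
    · intro b hb
      set b' := min b ((nu θ₀ + ν₀) / 2) with hb'
      have hb'U : b' ∈ Set.Ioo (0 : ℝ) ν₀ :=
        ⟨lt_min (lt_trans hU₀.1 hb) (by linarith [hU₀.1, hU₀.2]),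
         min_lt_of_right_lt (by linarith [hU₀.2])⟩
      have hlt : Real.tan θ₀ < Hf A B b' := by
        rw [← hHnu θ₀ hθ₀]
        exact hmono hU₀ hb'U (lt_min hb (by linarith [hU₀.2]))
      have hev : ∀ᶠ θ in nhds θ₀, Real.tan θ < Hf A B b' :=
        htanc.eventually (eventually_lt_nhds hlt)
      filter_upwards [hVev, hev] with θ hθ hHθ
      have : Hf A B (nu θ) < Hf A B b' := by rwa [hHnu θ hθ]
      have := (hmono.lt_iff_lt (hnuU θ hθ) hb'U).mp this
      exact lt_of_lt_of_le this (min_le_left _ _)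
  -- derivative of nu
  have hnuD : ∀ θ ∈ Set.Ioo (0 : ℝ) (π / 2),
      HasDerivAt nu (1 / (Hdf A B (nu θ) * Real.cos θ ^ 2)) θ := by
    intro θ hθ
    have hU := hnuU θ hθ
    have hy := hy1 (nu θ) hU
    have hcos : 0 < Real.cos θ :=
      Real.cos_pos_of_mem_Ioo ⟨by linarith [hθ.1, Real.pi_pos], hθ.2⟩
    have hHd := Hdf_pos hB0 hU.1 hy
    have hΘ : HasDerivAt (fun ν => Real.arctan (Hf A B ν))
        (Hdf A B (nu θ) * Real.cos θ ^ 2) (nu θ) := by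
      have := (hasDerivAt_Hf hy).arctan
      convert this using 1
      rw [hHnu θ hθ, one_div, Real.inv_one_add_tan_sq (ne_of_gt hcos)]
      ring
    have hinv : ∀ᶠ θ' in nhds θ, Real.arctan (Hf A B (nu θ')) = θ' := by
      filter_upwards [hVopen.mem_nhds hθ] with θ' hθ'
      rw [hHnu θ' hθ']
      exact Real.arctan_tan (by linarith [hθ'.1, Real.pi_pos]) hθ'.2
    have := hΘ.of_local_left_inverse (hcont θ hθ) (by positivity) hinv
    simpa [one_div] using this
  -- deriv (deriv g) at nu θ
  have hddg : ∀ θ ∈ Set.Ioo (0 : ℝ) (π / 2),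
      deriv (deriv g) (nu θ) = -(Hdf A B (nu θ)) := by
    intro θ hθ
    have hU := hnuU θ hθ
    have hgU : Set.EqOn g (Gf A B) (Set.Ioo (0 : ℝ) ν₀) := fun ν hν =>
      (hgG ν ⟨le_of_lt hν.1, le_of_lt hν.2⟩).2
    have h1 : Set.EqOn (deriv g) (fun ν => -(B * Real.sinh ν) / Sf A B ν)
        (Set.Ioo (0 : ℝ) ν₀) := by
      intro ν hν
      have he : g =ᶠ[nhds ν] Gf A B := Filter.eventuallyEq_of_mem (hUopen.mem_nhds hν) hgU
      rw [he.deriv_eq, (hasDerivAt_Gf (hy1 ν hν)).deriv]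
    have he2 : deriv g =ᶠ[nhds (nu θ)] (fun ν => -(B * Real.sinh ν) / Sf A B ν) :=
      Filter.eventuallyEq_of_mem (hUopen.mem_nhds hU) h1
    rw [he2.deriv_eq]
    have hGd : HasDerivAt (fun ν => -(B * Real.sinh ν) / Sf A B ν)
        (-(Hdf A B (nu θ))) (nu θ) := by
      have := (hasDerivAt_Hf (hy1 (nu θ) hU)).neg
      exact this.congr_of_eventuallyEq (Filter.Eventually.of_forall fun ν => by simp [Hf, neg_div])
    exact hGd.deriv
  -- main computation at each θ
  intro θ hθ
  have hU := hnuU θ hθ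
  have hy := hy1 (nu θ) hU
  have hcos : 0 < Real.cos θ :=
    Real.cos_pos_of_mem_Ioo ⟨by linarith [hθ.1, Real.pi_pos], hθ.2⟩
  have hHd := Hdf_pos hB0 hU.1 hy
  have hSp := Sf_pos hy
  set D : ℝ → ℝ := fun θ => 1 / (Hdf A B (nu θ) * Real.cos θ ^ 2) with hD
  -- derivative of G ∘ nu at any point of V
  have hGnu : ∀ θ' ∈ Set.Ioo (0 : ℝ) (π / 2),
      HasDerivAt (fun x => Gf A B (nu x)) (-Real.tan θ' * D θ') θ' := by
    intro θ' hθ'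
    have hU' := hnuU θ' hθ'
    have := (hasDerivAt_Gf (hy1 (nu θ') hU')).comp θ' (hnuD θ' hθ')
    refine this.congr_deriv ?_
    symm
    have hSp' := Sf_pos (hy1 (nu θ') hU')
    rw [← hHnu θ' hθ']
    rw [Hf, neg_div]
  -- tau agrees with T on V
  have htauT : Set.EqOn tau (fun x => Real.cos x * Gf A B (nu x) + Real.sin x * nu x)
      (Set.Ioo (0 : ℝ) (π / 2)) := by
    intro θ' hθ'
    obtain ⟨hmem, _⟩ := hnu θ' ⟨le_of_lt hθ'.1, hθ'.2⟩
    rw [htau θ', (hgG (nu θ') ⟨hmem.1, le_of_lt hmem.2⟩).2]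
  -- first derivative of tau on V
  have hd1 : ∀ θ' ∈ Set.Ioo (0 : ℝ) (π / 2),
      HasDerivAt tau (-Real.sin θ' * Gf A B (nu θ') + Real.cos θ' * nu θ') θ' := by
    intro θ' hθ'
    have hcos' : 0 < Real.cos θ' :=
      Real.cos_pos_of_mem_Ioo ⟨by linarith [hθ'.1, Real.pi_pos], hθ'.2⟩
    have hT : HasDerivAt (fun x => Real.cos x * Gf A B (nu x) + Real.sin x * nu x)
        (-Real.sin θ' * Gf A B (nu θ') + Real.cos θ' * (-Real.tan θ' * D θ') +
          (Real.cos θ' * nu θ' + Real.sin θ' * D θ')) θ' :=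
      ((Real.hasDerivAt_cos θ').mul (hGnu θ' hθ')).add
        ((Real.hasDerivAt_sin θ').mul (hnuD θ' hθ'))
    have heq : tau =ᶠ[nhds θ'] (fun x => Real.cos x * Gf A B (nu x) + Real.sin x * nu x) :=
      Filter.eventuallyEq_of_mem (hVopen.mem_nhds hθ') htauT
    have := hT.congr_of_eventuallyEq heq
    refine this.congr_deriv ?_
    symm
    rw [Real.tan_eq_sin_div_cos]
    field_simp
    ring
  have hEq1 : Set.EqOn (deriv tau) (fun x => -Real.sin x * Gf A B (nu x) + Real.cos x * nu x)
      (Set.Ioo (0:ℝ) (π/2)) := fun θ' hθ' => (hd1 θ' hθ').deriv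
  have he1 : deriv tau =ᶠ[nhds θ] (fun x => -Real.sin x * Gf A B (nu x) + Real.cos x * nu x) :=
    Filter.eventuallyEq_of_mem (hVopen.mem_nhds hθ) hEq1
  have hT1 : HasDerivAt (fun x => -Real.sin x * Gf A B (nu x) + Real.cos x * nu x)
      (-Real.cos θ * Gf A B (nu θ) + -Real.sin θ * (-Real.tan θ * D θ) +
        (-Real.sin θ * nu θ + Real.cos θ * D θ)) θ :=
    (((Real.hasDerivAt_sin θ).neg).mul (hGnu θ hθ)).add
      ((Real.hasDerivAt_cos θ).mul (hnuD θ hθ))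
  have hd2 := hT1.congr_of_eventuallyEq he1
  have hDval : D θ = 1 / (Hdf A B (nu θ) * Real.cos θ ^ 2) := rfl
  have hDpos : 0 < D θ := by
    rw [hDval]
    exact div_pos one_pos (mul_pos hHd (pow_pos hcos 2))
  have hsum : tau θ + deriv (deriv tau) θ = D θ / Real.cos θ := by
    rw [hd2.deriv, htauT hθ]
    have hpy := Real.sin_sq_add_cos_sq θ
    rw [Real.tan_eq_sin_div_cos]
    field_simp
    nlinarith [hpy]
  refine ⟨(hd1 θ hθ).differentiableAt, hd2.differentiableAt, ?_, ?_⟩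
  · rw [hsum, hddg θ hθ, neg_neg, hDval]
    field_simp
  · rw [hsum]
    exact div_pos hDpos hcos
end

section
/- The surface tension extends continuously to the vertical direction with value given by the dual couplings: τ(θ) → ν₀ = 2(K₁ − K₂⋆) as θ → π/2⁻. -/
open Real Filter

-- dual coupling identities
lemma dual_ids (K Ks : ℝ) (hK : 0 < K) (hKs : 0 < Ks)
    (hd : Real.exp (2 * Ks) = Real.cosh K / Real.sinh K) :
    Real.sinh (2 * Ks) * Real.sinh (2 * K) = 1 ∧
    Real.cosh (2 * Ks) * Real.sinh (2 * K) = Real.cosh (2 * K) ∧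
    Real.exp (2 * K) = Real.cosh Ks / Real.sinh Ks := by
  have hs : 0 < Real.sinh K := Real.sinh_pos_iff.2 hK
  have hss : 0 < Real.sinh Ks := Real.sinh_pos_iff.2 hKs
  have hne : Real.exp (-(2 * Ks)) = Real.sinh K / Real.cosh K := by
    rw [Real.exp_neg, hd, inv_div]
  have hpyth : Real.cosh K ^ 2 - Real.sinh K ^ 2 = 1 := Real.cosh_sq_sub_sinh_sq K
  have hcp : 0 < Real.cosh K := Real.cosh_pos K
  have h1 : Real.sinh (2 * Ks) = 1 / Real.sinh (2 * K) := by
    rw [Real.sinh_eq, hd, hne, Real.sinh_two_mul]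
    field_simp
    linear_combination hpyth
  have h2 : Real.cosh (2 * Ks) * Real.sinh (2 * K) = Real.cosh (2 * K) := by
    rw [Real.cosh_eq, hd, hne, Real.sinh_two_mul, Real.cosh_two_mul]
    field_simp
  refine ⟨by rw [h1]; field_simp [ne_of_gt (Real.sinh_pos_iff.2 (by linarith : (0:ℝ) < 2 * K))]
           , h2, ?_⟩
  -- involution
  have hcs : Real.cosh Ks = (Real.exp (2*Ks) + 1) * Real.exp (-Ks) / 2 := by
    rw [Real.cosh_eq]; rw [show (2:ℝ)*Ks = Ks + Ks by ring, Real.exp_add]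
    field_simp [Real.exp_neg]
    rw [Real.exp_neg]; field_simp
  have hsn : Real.sinh Ks = (Real.exp (2*Ks) - 1) * Real.exp (-Ks) / 2 := by
    rw [Real.sinh_eq]; rw [show (2:ℝ)*Ks = Ks + Ks by ring, Real.exp_add]
    field_simp [Real.exp_neg]
    rw [Real.exp_neg]; field_simp
  rw [hcs, hsn, hd]
  have hcms : Real.cosh K - Real.sinh K = Real.exp (-K) := Real.cosh_sub_sinh K
  have hcps : Real.cosh K + Real.sinh K = Real.exp K := Real.cosh_add_sinh K
  have he : Real.exp (2*K) = Real.exp K / Real.exp (-K) := by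
    rw [← Real.exp_sub]; ring_nf
  rw [he, ← hcms, ← hcps]
  have hens : Real.exp (-Ks) ≠ 0 := (Real.exp_pos _).ne'
  field_simp

lemma coth_strict_anti {a b : ℝ} (ha : 0 < a) (hab : a < b) :
    Real.cosh b / Real.sinh b < Real.cosh a / Real.sinh a := by
  have hsa : 0 < Real.sinh a := Real.sinh_pos_iff.2 ha
  have hsb : 0 < Real.sinh b := Real.sinh_pos_iff.2 (ha.trans hab)
  rw [div_lt_div_iff₀ hsb hsa]
  have h : 0 < Real.sinh (b - a) := Real.sinh_pos_iff.2 (by linarith)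
  rw [Real.sinh_sub] at h
  nlinarith


/-- The surface tension extends continuously to the vertical
direction with value given by the dual couplings:
`τ(θ) → ν₀ = 2(K₁ − K₂⋆)` as `θ → π/2⁻`. -/
theorem statement7
    (K1 K2 K1s K2s : ℝ)
    (hK1 : 0 < K1) (hK2 : 0 < K2) (hK1s : 0 < K1s) (hK2s : 0 < K2s)
    (hdual1 : Real.exp (2 * K1s) = Real.cosh K1 / Real.sinh K1)
    (hdual2 : Real.exp (2 * K2s) = Real.cosh K2 / Real.sinh K2)
    (hlow : K1s < K2)
    (A B : ℝ)
    (hA : A = Real.cosh (2 * K1s) * Real.cosh (2 * K2))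
    (hB : B = Real.sinh (2 * K1s) * Real.sinh (2 * K2))
    (ν₀ : ℝ) (hν₀pos : 0 < ν₀)
    (hν₀ : Real.cosh ν₀ = (A - 1) / B)
    (g : ℝ → ℝ)
    (hg : ∀ ν ∈ Set.Icc (0 : ℝ) ν₀,
      0 ≤ g ν ∧ Real.cosh (g ν) = A - B * Real.cosh ν)
    (nu : ℝ → ℝ)
    (hnu : ∀ θ ∈ Set.Ico (0 : ℝ) (π / 2),
      nu θ ∈ Set.Ico (0 : ℝ) ν₀ ∧
      B * Real.sinh (nu θ) = Real.tan θ * Real.sinh (g (nu θ)))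
    (tau : ℝ → ℝ)
    (htau : ∀ θ, tau θ = Real.cos θ * g (nu θ) + Real.sin θ * nu θ) :
    Tendsto tau (nhdsWithin (π / 2) (Set.Iio (π / 2))) (nhds ν₀) ∧
    ν₀ = 2 * (K1 - K2s) := by
  have hBpos : 0 < B := by
    rw [hB]
    have h1 : 0 < Real.sinh (2 * K1s) := Real.sinh_pos_iff.2 (by linarith)
    have h2 : 0 < Real.sinh (2 * K2) := Real.sinh_pos_iff.2 (by linarith)
    positivity
  constructor
  ·
    set F := nhdsWithin (π / 2) (Set.Iio (π / 2)) with hF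
    have hev : ∀ᶠ θ in F, 0 < θ ∧ θ < π / 2 := by
      have h1 : ∀ᶠ θ in F, 0 < θ :=
        eventually_nhdsWithin_of_eventually_nhds
          (eventually_gt_nhds (by positivity))
      have h2 : ∀ᶠ θ in F, θ < π / 2 := eventually_mem_nhdsWithin
      exact h1.and h2
    -- facts valid on the eventual set
    have hfacts : ∀ θ, 0 < θ → θ < π / 2 →
        0 ≤ g (nu θ) ∧ Real.cosh (g (nu θ)) = A - B * Real.cosh (nu θ) ∧
        0 ≤ nu θ ∧ nu θ < ν₀ ∧
        Real.sinh (g (nu θ)) = B * Real.sinh (nu θ) / Real.tan θ ∧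
        0 < Real.tan θ := by
      intro θ h0 h2
      obtain ⟨⟨hn0, hn1⟩, heq⟩ := hnu θ ⟨h0.le, h2⟩
      obtain ⟨hg0, hgc⟩ := g (nu θ) |> fun _ => hg (nu θ) ⟨hn0, hn1.le⟩
      have htanpos : 0 < Real.tan θ := Real.tan_pos_of_pos_of_lt_pi_div_two h0 h2
      exact ⟨hg0, hgc, hn0, hn1, by field_simp [htanpos.ne'] at heq ⊢; linarith, htanpos⟩
    -- sinh (g (nu θ)) → 0
    have htan : Tendsto Real.tan F atTop := Real.tendsto_tan_pi_div_two
    have hub : Tendsto (fun θ => B * Real.sinh ν₀ / Real.tan θ) F (nhds 0) :=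
      tendsto_const_nhds.div_atTop htan
    have hsg : Tendsto (fun θ => Real.sinh (g (nu θ))) F (nhds 0) := by
      apply squeeze_zero' ?_ ?_ hub
      · filter_upwards [hev] with θ ⟨h0, h2⟩
        exact Real.sinh_nonneg_iff.2 (hfacts θ h0 h2).1
      · filter_upwards [hev] with θ ⟨h0, h2⟩
        obtain ⟨hg0, hgc, hn0, hn1, hse, htp⟩ := hfacts θ h0 h2
        rw [hse]
        gcongr
        exact Real.sinh_le_sinh.2 hn1.le
    -- g (nu θ) → 0
    have hgg : Tendsto (fun θ => g (nu θ)) F (nhds 0) := by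
      have := (Real.continuous_arsinh.tendsto 0).comp hsg
      rw [Real.arsinh_zero] at this
      apply this.congr'
      filter_upwards [hev] with θ ⟨h0, h2⟩
      exact Real.arsinh_sinh _
    -- cosh (nu θ) → cosh ν₀
    have hcn : Tendsto (fun θ => Real.cosh (nu θ)) F (nhds (Real.cosh ν₀)) := by
      have hc1 : Tendsto (fun θ => (A - Real.cosh (g (nu θ))) / B) F
          (nhds ((A - 1) / B)) := by
        have := (Real.continuous_cosh.tendsto 0).comp hgg
        rw [Real.cosh_zero] at this
        exact (tendsto_const_nhds.sub this).div_const B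
      rw [hν₀]
      apply hc1.congr'
      filter_upwards [hev] with θ ⟨h0, h2⟩
      have := (hfacts θ h0 h2).2.1
      field_simp
      linarith
    -- nu θ → ν₀
    have key : ∀ x : ℝ, 0 ≤ x → Real.arsinh (Real.sqrt (Real.cosh x ^ 2 - 1)) = x := by
      intro x hx
      have hsx : 0 ≤ Real.sinh x := Real.sinh_nonneg_iff.2 hx
      rw [show Real.cosh x ^ 2 - 1 = Real.sinh x ^ 2 by
          have := Real.cosh_sq_sub_sinh_sq x; linarith,
        Real.sqrt_sq hsx, Real.arsinh_sinh]
    have hnn : Tendsto nu F (nhds ν₀) := by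
      have hcont : Continuous (fun y : ℝ => Real.arsinh (Real.sqrt (y ^ 2 - 1))) :=
        Real.continuous_arsinh.comp (Real.continuous_sqrt.comp (by continuity))
      have := (hcont.tendsto (Real.cosh ν₀)).comp hcn
      simp only [Function.comp_def] at this
      rw [key ν₀ hν₀pos.le] at this
      apply this.congr'
      filter_upwards [hev] with θ ⟨h0, h2⟩
      exact key _ (hfacts θ h0 h2).2.2.1
    -- assemble
    have hcos : Tendsto Real.cos F (nhds 0) := by
      have := (Real.continuous_cos.tendsto (π / 2)).mono_left (nhdsWithin_le_nhds (s := Set.Iio (π/2)))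
      rwa [Real.cos_pi_div_two] at this
    have hsin : Tendsto Real.sin F (nhds 1) := by
      have := (Real.continuous_sin.tendsto (π / 2)).mono_left (nhdsWithin_le_nhds (s := Set.Iio (π/2)))
      rwa [Real.sin_pi_div_two] at this
    have : Tendsto (fun θ => Real.cos θ * g (nu θ) + Real.sin θ * nu θ) F
        (nhds (0 * 0 + 1 * ν₀)) := (hcos.mul hgg).add (hsin.mul hnn)
    rw [show (0 : ℝ) * 0 + 1 * ν₀ = ν₀ by ring] at this
    exact this.congr fun θ => (htau θ).symm
  ·
    obtain ⟨h1s, h1c, h1inv⟩ := dual_ids K1 K1s hK1 hK1s hdual1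
    obtain ⟨h2s, h2c, h2inv⟩ := dual_ids K2 K2s hK2 hK2s hdual2
    -- K2s < K1
    have hK1K2s : 2 * K2s < 2 * K1 := by
      have := coth_strict_anti hK1s hlow
      rw [← hdual2, ← h1inv] at this
      exact Real.exp_lt_exp.mp this
    -- B > 0
    have hs1 : 0 < Real.sinh (2 * K1) := Real.sinh_pos_iff.2 (by linarith)
    have hs2 : 0 < Real.sinh (2 * K2) := Real.sinh_pos_iff.2 (by linarith)
    have hBpos : 0 < B := by
      rw [hB]
      have : 0 < Real.sinh (2 * K1s) := Real.sinh_pos_iff.2 (by linarith)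
      positivity
    -- cosh equal
    have hcosh : Real.cosh (2 * (K1 - K2s)) = Real.cosh ν₀ := by
      rw [hν₀, show 2 * (K1 - K2s) = 2 * K1 - 2 * K2s by ring, Real.cosh_sub,
        eq_div_iff hBpos.ne', hA, hB]
      have e1 : Real.cosh (2 * K1s) = Real.cosh (2 * K1) / Real.sinh (2 * K1) := by
        field_simp at h1c ⊢; linarith
      have e2 : Real.sinh (2 * K1s) = 1 / Real.sinh (2 * K1) := by
        field_simp at h1s ⊢; linarith
      have e3 : Real.cosh (2 * K2s) = Real.cosh (2 * K2) / Real.sinh (2 * K2) := by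
        field_simp at h2c ⊢; linarith
      have e4 : Real.sinh (2 * K2s) = 1 / Real.sinh (2 * K2) := by
        field_simp at h2s ⊢; linarith
      rw [e1, e2, e3, e4]
      field_simp
    -- conclude by injectivity of cosh on nonneg via sinh = sqrt(cosh^2-1)
    have key : ∀ x : ℝ, 0 ≤ x → x = Real.arsinh (Real.sqrt (Real.cosh x ^ 2 - 1)) := by
      intro x hx
      have hsx : 0 ≤ Real.sinh x := Real.sinh_nonneg_iff.2 hx
      rw [show Real.cosh x ^ 2 - 1 = Real.sinh x ^ 2 by
          have := Real.cosh_sq_sub_sinh_sq x; linarith,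
        Real.sqrt_sq hsx, Real.arsinh_sinh]
    calc ν₀ = Real.arsinh (Real.sqrt (Real.cosh ν₀ ^ 2 - 1)) := key _ hν₀pos.le
      _ = 2 * (K1 - K2s) := by rw [← hcosh]; exact (key _ (by linarith)).symm
end

section
/- For every real z > 0 one has the identity (1/2π)·∫_{−∞}^{+∞} e^{−u²}/(z + iu) du = (e^{z²}/√π)·∫_{z}^{+∞} e^{−u²} du; equivalently, F(z) = ½·e^{z²}·erfc(z). -/
open MeasureTheory

section Statement9Aux
open MeasureTheory Set Complex Filter


lemma fourier_step (z t : ℝ) :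
    ∫ u : ℝ, Complex.exp (-(u:ℂ)^2) * Complex.exp (-((z:ℂ) + Complex.I*u) * t)
      = (Real.sqrt Real.pi : ℂ) * Complex.exp (-((z:ℂ)*t + (t:ℂ)^2/4)) := by
  have h := fourierIntegral_gaussian (b := (1:ℂ)) (by norm_num) (-(t:ℂ))
  have hpt : ∀ u : ℝ, Complex.exp (-(u:ℂ)^2) * Complex.exp (-((z:ℂ) + Complex.I*u) * t)
      = Complex.exp (-((z:ℂ)*t)) * (Complex.exp (Complex.I * (-(t:ℂ)) * u) * Complex.exp (-1 * (u:ℂ)^2)) := by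
    intro u
    rw [← Complex.exp_add, ← Complex.exp_add, ← Complex.exp_add]
    ring_nf
  simp_rw [hpt]
  rw [integral_const_mul, h]
  have hsq : ((Real.pi:ℂ)/1) ^ (1/2 : ℂ) = (Real.sqrt Real.pi : ℂ) := by
    rw [div_one, Real.sqrt_eq_rpow, Complex.ofReal_cpow Real.pi_pos.le]
    norm_num
  rw [hsq, mul_comm (Real.sqrt Real.pi : ℂ), ← mul_assoc, ← Complex.exp_add]
  ring_nf

lemma integrable_cexp_neg_mul' (c : ℂ) (hc : 0 < c.re) :
    IntegrableOn (fun t : ℝ => Complex.exp (-c * t)) (Ioi (0:ℝ)) := by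
  apply Integrable.mono' ((exp_neg_integrableOn_Ioi 0 hc).congr_fun
    (fun t ht => rfl) measurableSet_Ioi)
  · exact (Complex.continuous_exp.comp (by continuity)).aestronglyMeasurable.restrict
  · filter_upwards with t
    rw [Complex.norm_exp]
    simp [Real.exp_le_exp, mul_comm]

lemma prod_integrable (z : ℝ) (hz : 0 < z) :
    Integrable (fun p : ℝ × ℝ =>
        Complex.exp (-(p.1:ℂ)^2) * Complex.exp (-((z:ℂ) + Complex.I*p.1) * p.2))
      (volume.prod (volume.restrict (Ioi (0:ℝ)))) := by
  have hbound : Integrable (fun p : ℝ × ℝ => Real.exp (-p.1^2) * Real.exp (-z * p.2))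
      (volume.prod (volume.restrict (Ioi (0:ℝ)))) := by
    have h1 : Integrable (fun u : ℝ => Real.exp (-u^2)) := by
      simpa using integrable_exp_neg_mul_sq (one_pos)
    exact h1.mul_prod (exp_neg_integrableOn_Ioi 0 hz)
  apply hbound.mono'
  · apply Continuous.aestronglyMeasurable
    apply Continuous.mul
    · exact Complex.continuous_exp.comp (by continuity)
    · exact Complex.continuous_exp.comp (by continuity)
  · filter_upwards with p
    rw [norm_mul, Complex.norm_exp, Complex.norm_exp]
    apply le_of_eq
    congr 1 <;> simp [← Complex.ofReal_pow, mul_comm]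

lemma laplace' (c : ℂ) (hc : 0 < c.re) :
    ∫ t in Ioi (0:ℝ), Complex.exp (-c * t) = 1 / c := by
  have hc0 : c ≠ 0 := fun h => by simp [h] at hc
  have key := integral_Ioi_of_hasDerivAt_of_tendsto (f := fun t : ℝ => -c⁻¹ * Complex.exp (-c * t))
    (f' := fun t : ℝ => Complex.exp (-c * t)) (a := 0) (m := 0)
    ?_ ?_ (integrable_cexp_neg_mul' c hc) ?_
  · rw [key]; simp [hc0, div_eq_inv_mul]
  · exact (Continuous.continuousWithinAt (by continuity))
  · intro x _
    have h1 : HasDerivAt (fun t : ℝ => -c * t) (-c) x := by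
      simpa using (hasDerivAt_id (x:ℝ)).ofReal_comp.const_mul (-c)
    have := (h1.cexp).const_mul (-c⁻¹)
    convert this using 1
    · rfl
    field_simp
  · rw [show (0:ℂ) = -c⁻¹ * 0 by ring]
    apply Tendsto.const_mul
    apply tendsto_zero_iff_norm_tendsto_zero.2
    have : ∀ t : ℝ, ‖Complex.exp (-c * t)‖ = Real.exp (-(c.re) * t) := by
      intro t; rw [Complex.norm_exp]; simp [mul_comm]
    simp_rw [this]
    exact Real.tendsto_exp_atBot.comp (tendsto_id.const_mul_atTop_of_neg (neg_lt_zero.2 hc))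

-- shifted Gaussian
lemma shift_gauss (z : ℝ) : ∫ s in Ioi (0:ℝ), Real.exp (-(s+z)^2) = ∫ s in Ioi z, Real.exp (-s^2) := by
  have h := (measurePreserving_add_right volume z).setIntegral_preimage_emb
    (measurableEmbedding_addRight z) (fun s => Real.exp (-s^2)) (Ioi z)
  have hpre : (· + z) ⁻¹' (Ioi z) = Ioi (0:ℝ) := by ext x; simp
  rw [hpre] at h
  exact h

lemma half_gauss (z : ℝ) :
    ∫ t in Ioi (0:ℝ), Real.exp (-(t/2+z)^2) = 2 * ∫ s in Ioi z, Real.exp (-s^2) := by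
  have h := integral_comp_mul_left_Ioi (fun s => Real.exp (-(s+z)^2)) 0 (by norm_num : (0:ℝ) < 1/2)
  simp only [mul_zero, smul_eq_mul] at h
  have : ∀ t : ℝ, Real.exp (-(t/2+z)^2) = Real.exp (-((1/2)*t + z)^2) := by
    intro t; ring_nf
  rw [show (fun t : ℝ => Real.exp (-(t/2+z)^2)) = (fun t : ℝ => Real.exp (-((1/2:ℝ)*t+z)^2)) by
    funext t; rw [this t]]
  rw [h, shift_gauss]
  norm_num

-- the real t-integral
lemma t_integral (z : ℝ) :
    ∫ t in Ioi (0:ℝ), Real.exp (-(z*t + t^2/4)) =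
      2 * Real.exp (z^2) * ∫ s in Ioi z, Real.exp (-s^2) := by
  have : ∀ t : ℝ, Real.exp (-(z*t + t^2/4)) = Real.exp (z^2) * Real.exp (-(t/2+z)^2) := by
    intro t; rw [← Real.exp_add]; ring_nf
  simp_rw [this]
  rw [integral_const_mul, half_gauss]; ring

lemma key_lemma (z : ℝ) (hz : 0 < z) :
    ∫ u : ℝ, (Real.exp (-u ^ 2) : ℂ) / ((z : ℂ) + Complex.I * u)
      = ((2 * Real.sqrt Real.pi * Real.exp (z^2) * ∫ s in Ioi z, Real.exp (-s^2) : ℝ) : ℂ) := by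
  have hre : ∀ u : ℝ, 0 < ((z:ℂ) + Complex.I * u).re := by
    intro u; simp [hz]
  have step1 : ∀ u : ℝ, (Real.exp (-u ^ 2) : ℂ) / ((z : ℂ) + Complex.I * u)
      = ∫ t in Ioi (0:ℝ), Complex.exp (-(u:ℂ)^2) * Complex.exp (-((z:ℂ) + Complex.I*u) * t) := by
    intro u
    rw [integral_const_mul, laplace' _ (hre u)]
    rw [mul_one_div]
    congr 1
    push_cast [Complex.ofReal_exp]
    ring_nf
  simp_rw [step1]
  rw [MeasureTheory.integral_integral_swap (prod_integrable z hz)]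
  have step3 : ∀ t : ℝ,
      (∫ u : ℝ, Complex.exp (-(u:ℂ)^2) * Complex.exp (-((z:ℂ) + Complex.I*u) * t))
      = (Real.sqrt Real.pi : ℂ) * ((Real.exp (-(z*t + t^2/4)) : ℝ) : ℂ) := by
    intro t
    rw [fourier_step z t]
    congr 1
    push_cast [Complex.ofReal_exp]
    ring_nf
  rw [setIntegral_congr_fun measurableSet_Ioi (fun t _ => step3 t)]
  rw [integral_const_mul]
  have hre2 : (∫ a in Ioi (0:ℝ), ((Real.exp (-(z*a+a^2/4)) : ℝ) : ℂ))
      = ((∫ a in Ioi (0:ℝ), Real.exp (-(z*a+a^2/4)) : ℝ) : ℂ) := integral_ofReal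
  rw [hre2, t_integral]
  push_cast
  ring


end Statement9Aux

/-- For every real `z > 0`,
`(1/2π) ∫_{−∞}^{∞} e^{−u²}/(z + iu) du = (e^{z²}/√π) ∫_z^{∞} e^{−u²} du`;
equivalently, `F(z) = ½ e^{z²} erfc(z)` with
`erfc(z) = (2/√π) ∫_z^{∞} e^{−u²} du`. -/
theorem statement9 (z : ℝ) (hz : 0 < z) :
    (1 / (2 * (Real.pi : ℂ))) *
        ∫ u : ℝ, (Real.exp (-u ^ 2) : ℂ) / ((z : ℂ) + Complex.I * u) =
      ((Real.exp (z ^ 2) / Real.sqrt Real.pi *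
        ∫ u in Set.Ioi z, Real.exp (-u ^ 2) : ℝ) : ℂ) ∧
    (1 / (2 * (Real.pi : ℂ))) *
        ∫ u : ℝ, (Real.exp (-u ^ 2) : ℂ) / ((z : ℂ) + Complex.I * u) =
      ((1 / 2 * Real.exp (z ^ 2) *
        (2 / Real.sqrt Real.pi * ∫ u in Set.Ioi z, Real.exp (-u ^ 2)) : ℝ) : ℂ) := by
  have key := key_lemma z hz
  have hπ : Real.sqrt Real.pi * Real.sqrt Real.pi = Real.pi := Real.mul_self_sqrt Real.pi_pos.le
  have hs : Real.sqrt Real.pi ≠ 0 := ne_of_gt (Real.sqrt_pos.2 Real.pi_pos)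
  have hπ0 : Real.pi ≠ 0 := Real.pi_ne_zero
  have hco : (1 / (2 * (Real.pi : ℂ))) = ((1 / (2 * Real.pi) : ℝ) : ℂ) := by push_cast; ring
  constructor <;>
    rw [key, hco, ← Complex.ofReal_mul, Complex.ofReal_inj] <;> field_simp
  · linear_combination ((∫ u in Set.Ioi z, Real.exp (-u ^ 2))) * hπ
  · linear_combination ((∫ u in Set.Ioi z, Real.exp (-u ^ 2))) * hπ
end

section
/- Fix nonnegative integers m and n, and let (a_N) and (b_N) be sequences of natural numbers with a_N → ∞ and b_N/a_N → t for some real t ∈ (0,∞) (so in particular b_N → ∞ and eventually b_N ≥ n). Then the ratio of binomial coefficients C(a_N + b_N − m − n, b_N − n) / C(a_N + b_N, b_N) converges, as N → ∞, to p^n·(1−p)^m, where p = t/(1+t). -/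
open Filter Finset

lemma nat_id (a b m n : ℕ) (hm : m ≤ a) (hn : n ≤ b) :
    (a + b).choose b * (b.descFactorial n * a.descFactorial m) =
      (a + b - m - n).choose (b - n) * (a + b).descFactorial (m + n) := by
  have key : ∀ x y : ℕ, x * ((b - n).factorial * ((a - m).factorial * (a + b - m - n).factorial)) = y * ((b - n).factorial * ((a - m).factorial * (a + b - m - n).factorial)) → x = y := by
    intro x y h
    exact Nat.eq_of_mul_eq_mul_right (by positivity) h
  apply key
  have h1 : (b - n).factorial * b.descFactorial n = b.factorial :=
    Nat.factorial_mul_descFactorial hn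
  have h2 : (a - m).factorial * a.descFactorial m = a.factorial :=
    Nat.factorial_mul_descFactorial hm
  have h3 : (a + b - m - n).factorial * (a + b).descFactorial (m + n) = (a + b).factorial := by
    have : a + b - (m + n) = a + b - m - n := by omega
    rw [← this]
    exact Nat.factorial_mul_descFactorial (by omega)
  have h4 : (a + b).choose b * b.factorial * (a + b - b).factorial = (a + b).factorial :=
    Nat.choose_mul_factorial_mul_factorial (by omega)
  have h5 : (a + b - m - n).choose (b - n) * (b - n).factorial * (a + b - m - n - (b - n)).factorial = (a + b - m - n).factorial :=
    Nat.choose_mul_factorial_mul_factorial (by omega)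
  have hab : a + b - b = a := by omega
  have hab2 : a + b - m - n - (b - n) = a - m := by omega
  rw [hab] at h4
  rw [hab2] at h5
  rw [show (a + b).choose b * (b.descFactorial n * a.descFactorial m) *
        ((b - n).factorial * ((a - m).factorial * (a + b - m - n).factorial)) =
      ((a + b).choose b * ((b - n).factorial * b.descFactorial n) *
        ((a - m).factorial * a.descFactorial m)) * (a + b - m - n).factorial from by ring,
    h1, h2, h4,
    show (a + b - m - n).choose (b - n) * (a + b).descFactorial (m + n) *
        ((b - n).factorial * ((a - m).factorial * (a + b - m - n).factorial)) =
      ((a + b - m - n).choose (b - n) * (b - n).factorial * (a - m).factorial) *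
        ((a + b - m - n).factorial * (a + b).descFactorial (m + n)) from by ring,
    h5, h3]
  exact Nat.mul_comm _ _

/-- Fix nonnegative integers `m` and `n`, and let `(a_N)`,
`(b_N)` be sequences of natural numbers with `a_N → ∞` and `b_N/a_N → t` for
some real `t ∈ (0, ∞)`.  Then
`C(a_N + b_N − m − n, b_N − n) / C(a_N + b_N, b_N) → pⁿ (1−p)ᵐ` as `N → ∞`,
where `p = t/(1+t)`. -/
theorem statement10 (m n : ℕ) (a b : ℕ → ℕ) (t : ℝ) (ht : 0 < t)
    (ha : Tendsto a atTop atTop)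
    (hb : Tendsto (fun N => (b N : ℝ) / (a N : ℝ)) atTop (nhds t)) :
    Tendsto
      (fun N => ((a N + b N - m - n).choose (b N - n) : ℝ) /
        ((a N + b N).choose (b N) : ℝ))
      atTop
      (nhds ((t / (1 + t)) ^ n * (1 - t / (1 + t)) ^ m)) := by
  have haR : Tendsto (fun N => (a N : ℝ)) atTop atTop :=
    tendsto_natCast_atTop_atTop.comp ha
  -- b N → ∞ (as reals)
  have hbR : Tendsto (fun N => (b N : ℝ)) atTop atTop := by
    have : Tendsto (fun N => (b N : ℝ) / (a N) * (a N)) atTop atTop :=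
      Tendsto.pos_mul_atTop ht hb haR
    apply this.congr'
    filter_upwards [ha.eventually_ge_atTop 1] with N hN
    field_simp
  -- the limit of each basic ratio
  have hnum : Tendsto (fun N => (b N : ℝ) / (a N)) atTop (nhds t) := hb
  have hden : Tendsto (fun N => ((a N : ℝ) + (b N)) / (a N)) atTop (nhds (1 + t)) := by
    have : Tendsto (fun N => (a N : ℝ) / (a N) + (b N : ℝ) / (a N)) atTop (nhds (1 + t)) := by
      apply Tendsto.add _ hb
      apply tendsto_const_nhds.congr'
      filter_upwards [ha.eventually_ge_atTop 1] with N hN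
      field_simp
    apply this.congr
    intro N; ring
  -- auxiliary: for each fixed c : ℝ, (x - c)/a → limit when x/a → L and a → ∞
  have shift : ∀ (f : ℕ → ℝ) (L c : ℝ), Tendsto (fun N => f N / (a N)) atTop (nhds L) →
      Tendsto (fun N => (f N - c) / (a N)) atTop (nhds L) := by
    intro f L c hf
    have : Tendsto (fun N => f N / a N - c / a N) atTop (nhds (L - 0)) :=
      hf.sub (tendsto_const_nhds.div_atTop haR)
    rw [sub_zero] at this
    apply this.congr
    intro N; ring
  -- target limit value rewrite
  have hterm : (t / (1 + t)) ^ n * (1 - t / (1 + t)) ^ m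
      = (∏ i ∈ range n, t) * (∏ j ∈ range m, (1:ℝ)) / (∏ k ∈ range (m + n), (1 + t)) := by
    rw [prod_const, prod_const, prod_const]
    have h1t : (1 : ℝ) + t ≠ 0 := by positivity
    rw [card_range, card_range, card_range, one_sub_div h1t, add_sub_cancel_right, pow_add]
    ring
  rw [hterm]
  -- product limits
  have hP1 : Tendsto (fun N => ∏ i ∈ range n, ((b N : ℝ) - i) / (a N)) atTop
      (nhds (∏ i ∈ range n, t)) := by
    apply tendsto_finset_prod
    intro i _
    exact shift _ t i hnum
  have hP2 : Tendsto (fun N => ∏ j ∈ range m, ((a N : ℝ) - j) / (a N)) atTop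
      (nhds (∏ j ∈ range m, (1:ℝ))) := by
    apply tendsto_finset_prod
    intro j _
    apply shift _ 1 j
    apply tendsto_const_nhds.congr'
    filter_upwards [ha.eventually_ge_atTop 1] with N hN
    field_simp
  have hP3 : Tendsto (fun N => ∏ k ∈ range (m + n), ((a N : ℝ) + (b N) - k) / (a N)) atTop
      (nhds (∏ k ∈ range (m + n), (1 + t))) := by
    apply tendsto_finset_prod
    intro k _
    exact shift _ (1 + t) k hden
  have hden_ne : (∏ k ∈ range (m + n), ((1:ℝ) + t)) ≠ 0 := by
    rw [prod_const]; positivity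
  have hlim := (hP1.mul hP2).div hP3 hden_ne
  apply hlim.congr'
  -- eventual equality
  filter_upwards [ha.eventually_ge_atTop (max m 1),
    tendsto_natCast_atTop_iff.mp hbR |>.eventually_ge_atTop n] with N hN1 hN2
  have hma : m ≤ a N := le_trans (le_max_left _ _) hN1
  have ha1 : 1 ≤ a N := le_trans (le_max_right _ _) hN1
  have hnb : n ≤ b N := hN2
  simp only [Pi.div_apply]
  set A := a N; set B := b N
  have key := nat_id A B m n hma hnb
  have hC : (0:ℝ) < ((A + B).choose B : ℝ) := by
    exact_mod_cast Nat.choose_pos (by omega)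
  have hD : (0:ℝ) < ((A + B).descFactorial (m + n) : ℝ) := by
    have : (A + B).descFactorial (m + n) ≠ 0 := by
      rw [Ne, Nat.descFactorial_eq_zero_iff_lt]; omega
    have := Nat.pos_of_ne_zero this
    exact_mod_cast this
  -- cast the identity
  have keyR : ((A + B).choose B : ℝ) * ((B.descFactorial n : ℝ) * (A.descFactorial m : ℝ)) =
      ((A + B - m - n).choose (B - n) : ℝ) * ((A + B).descFactorial (m + n) : ℝ) := by
    exact_mod_cast key
  -- descFactorials as products
  have e1 : (B.descFactorial n : ℝ) = ∏ i ∈ range n, ((B : ℝ) - i) := by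
    rw [Nat.descFactorial_eq_prod_range]
    push_cast
    apply prod_congr rfl
    intro i hi
    rw [Nat.cast_sub (by simp at hi; omega)]
  have e2 : (A.descFactorial m : ℝ) = ∏ j ∈ range m, ((A : ℝ) - j) := by
    rw [Nat.descFactorial_eq_prod_range]
    push_cast
    apply prod_congr rfl
    intro j hj
    rw [Nat.cast_sub (by simp at hj; omega)]
  have e3 : ((A + B).descFactorial (m + n) : ℝ) = ∏ k ∈ range (m + n), ((A : ℝ) + B - k) := by
    rw [Nat.descFactorial_eq_prod_range]
    push_cast
    apply prod_congr rfl
    intro k hk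
    rw [Nat.cast_sub (by simp at hk; omega)]
    push_cast; ring
  have haN : (0:ℝ) < (A : ℝ) := by exact_mod_cast ha1
  -- rewrite products with division by a
  have d1 : ∏ i ∈ range n, ((B : ℝ) - i) / A = (∏ i ∈ range n, ((B : ℝ) - i)) / A ^ n := by
    rw [prod_div_distrib, prod_const, card_range]
  have d2 : ∏ j ∈ range m, ((A : ℝ) - j) / A = (∏ j ∈ range m, ((A : ℝ) - j)) / A ^ m := by
    rw [prod_div_distrib, prod_const, card_range]
  have d3 : ∏ k ∈ range (m + n), ((A : ℝ) + B - k) / A = (∏ k ∈ range (m + n), ((A : ℝ) + B - k)) / A ^ (m + n) := by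
    rw [prod_div_distrib, prod_const, card_range]
  rw [d1, d2, d3, ← e1, ← e2, ← e3]
  have hprod_ne : ((A + B).descFactorial (m + n) : ℝ) ≠ 0 := ne_of_gt hD
  have hC_ne : ((A + B).choose B : ℝ) ≠ 0 := ne_of_gt hC
  have hA_ne : (A : ℝ) ≠ 0 := ne_of_gt haN
  field_simp
  linear_combination ((A : ℝ) ^ m * (A : ℝ) ^ n) * keyR
end

section
/- Fix nonnegative integers m and n, and let (a_N), (b_N), (b̄_N) be sequences of natural numbers with a_N → ∞, b_N/a_N → t and b̄_N/a_N → t for the same real t ∈ (0,∞) (eventually b_N ≥ n and b̄_N ≥ n). Then the cross-ratio [C(a_N + b_N − m − n, b_N − n)/C(a_N + b_N, b_N)] · [C(a_N + b̄_N, b̄_N)/C(a_N + b̄_N − m − n, b̄_N − n)] converges to 1 as N → ∞. -/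
open Filter Finset

private lemma descFactorial_ne_zero' {k n : ℕ} (h : k ≤ n) : n.descFactorial k ≠ 0 := by
  intro h0
  have := Nat.factorial_mul_descFactorial h
  rw [h0, Nat.mul_zero] at this
  exact (Nat.factorial_ne_zero n) this.symm

/-- The choose ratio as a descFactorial ratio. -/
private lemma choose_ratio (m n a b : ℕ) (hma : m ≤ a) (hnb : n ≤ b) :
    (((a + b - m - n).choose (b - n) : ℝ) / ((a + b).choose b : ℝ)) =
      ((b.descFactorial n : ℝ) * (a.descFactorial m : ℝ)) /
        ((a + b).descFactorial (m + n) : ℝ) := by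
  have h1 : b - n ≤ a + b - m - n := by omega
  have h2 : b ≤ a + b := by omega
  have e1 : a + b - m - n - (b - n) = a - m := by omega
  have e2 : a + b - b = a := by omega
  have hbne : ((Nat.factorial (b - n) : ℕ) : ℝ) ≠ 0 :=
    Nat.cast_ne_zero.mpr (Nat.factorial_ne_zero _)
  have hane : ((Nat.factorial (a - m) : ℕ) : ℝ) ≠ 0 :=
    Nat.cast_ne_zero.mpr (Nat.factorial_ne_zero _)
  have habne : ((Nat.factorial (a + b - m - n) : ℕ) : ℝ) ≠ 0 :=
    Nat.cast_ne_zero.mpr (Nat.factorial_ne_zero _)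
  have habne' : ((Nat.factorial (a + b) : ℕ) : ℝ) ≠ 0 :=
    Nat.cast_ne_zero.mpr (Nat.factorial_ne_zero _)
  have db : ((b.descFactorial n : ℕ) : ℝ)
      = (Nat.factorial b : ℝ) / (Nat.factorial (b - n) : ℝ) := by
    rw [eq_div_iff hbne, ← Nat.cast_mul, mul_comm, Nat.factorial_mul_descFactorial hnb]
  have da : ((a.descFactorial m : ℕ) : ℝ)
      = (Nat.factorial a : ℝ) / (Nat.factorial (a - m) : ℝ) := by
    rw [eq_div_iff hane, ← Nat.cast_mul, mul_comm, Nat.factorial_mul_descFactorial hma]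
  have dab : (((a + b).descFactorial (m + n) : ℕ) : ℝ)
      = (Nat.factorial (a + b) : ℝ) / (Nat.factorial (a + b - m - n) : ℝ) := by
    rw [eq_div_iff habne, ← Nat.cast_mul, mul_comm]
    have e3 : a + b - m - n = a + b - (m + n) := by omega
    rw [e3, Nat.factorial_mul_descFactorial (by omega)]
  rw [Nat.cast_choose ℝ h1, Nat.cast_choose ℝ h2, e1, e2, db, da, dab]
  field_simp

private lemma tendsto_descFactorial_div (k : ℕ) (a c : ℕ → ℕ) (s : ℝ) (hs : 0 < s)
    (ha : Tendsto a atTop atTop)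
    (hc : Tendsto (fun N => (c N : ℝ) / (a N : ℝ)) atTop (nhds s)) :
    Tendsto (fun N => ((c N).descFactorial k : ℝ) / (a N : ℝ) ^ k) atTop (nhds (s ^ k)) := by
  have haR : Tendsto (fun N => (a N : ℝ)) atTop atTop :=
    tendsto_natCast_atTop_atTop.comp ha
  have ha1 : ∀ᶠ N in atTop, 1 ≤ a N := ha.eventually_ge_atTop 1
  -- c N → ∞
  have hcR : Tendsto (fun N => (c N : ℝ)) atTop atTop := by
    have := Filter.Tendsto.pos_mul_atTop hs hc haR
    refine this.congr' ?_
    filter_upwards [ha1] with N hN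
    have : (a N : ℝ) ≠ 0 := by positivity
    field_simp
  have hck : ∀ᶠ N in atTop, k ≤ c N := by
    have := hcR.eventually_ge_atTop (k : ℝ)
    filter_upwards [this] with N hN
    exact_mod_cast hN
  -- limit of each factor
  have hfac : ∀ i : ℕ, Tendsto (fun N => ((c N : ℝ) - (i : ℝ)) / (a N : ℝ))
      atTop (nhds s) := by
    intro i
    have h0 : Tendsto (fun N => (i : ℝ) / (a N : ℝ)) atTop (nhds 0) :=
      tendsto_const_nhds.div_atTop haR
    have := hc.sub h0
    rw [sub_zero] at this
    refine this.congr (fun N => ?_)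
    ring
  have hprod : Tendsto (fun N => ∏ i ∈ range k, ((c N : ℝ) - (i : ℝ)) / (a N : ℝ))
      atTop (nhds (∏ _i ∈ range k, s)) :=
    tendsto_finset_prod _ (fun i _ => hfac i)
  rw [prod_const, card_range] at hprod
  refine hprod.congr' ?_
  filter_upwards [hck, ha1] with N hkc hN1
  have haNne : (a N : ℝ) ≠ 0 := by
    have : (0 : ℝ) < a N := by exact_mod_cast hN1
    positivity
  rw [prod_div_distrib, prod_const, card_range, Nat.descFactorial_eq_prod_range,
    Nat.cast_prod]
  exact congrArg (· / ((a N : ℝ)) ^ k)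
    (prod_congr rfl fun i hi =>
      (Nat.cast_sub (le_trans (le_of_lt (mem_range.mp hi)) hkc)).symm)

/-- Fix nonnegative integers `m` and `n`, and let `(a_N)`,
`(b_N)`, `(b̄_N)` be sequences of natural numbers with `a_N → ∞`,
`b_N/a_N → t` and `b̄_N/a_N → t` for the same `t ∈ (0, ∞)`.  Then the
cross-ratio
`[C(a_N+b_N−m−n, b_N−n)/C(a_N+b_N, b_N)] · [C(a_N+b̄_N, b̄_N)/C(a_N+b̄_N−m−n, b̄_N−n)]`
converges to `1` as `N → ∞`. -/
theorem statement11 (m n : ℕ) (a b bbar : ℕ → ℕ) (t : ℝ) (ht : 0 < t)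
    (ha : Tendsto a atTop atTop)
    (hb : Tendsto (fun N => (b N : ℝ) / (a N : ℝ)) atTop (nhds t))
    (hbbar : Tendsto (fun N => (bbar N : ℝ) / (a N : ℝ)) atTop (nhds t)) :
    Tendsto
      (fun N =>
        (((a N + b N - m - n).choose (b N - n) : ℝ) /
          ((a N + b N).choose (b N) : ℝ)) *
        (((a N + bbar N).choose (bbar N) : ℝ) /
          ((a N + bbar N - m - n).choose (bbar N - n) : ℝ)))
      atTop (nhds 1) := by
  have haR : Tendsto (fun N => (a N : ℝ)) atTop atTop :=
    tendsto_natCast_atTop_atTop.comp ha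
  have ha1 : ∀ᶠ N in atTop, 1 ≤ a N := ha.eventually_ge_atTop 1
  have ham : ∀ᶠ N in atTop, m ≤ a N := ha.eventually_ge_atTop m
  -- (a+b)/a → 1+t
  have hab : Tendsto (fun N => ((fun N => a N + b N) N : ℝ) / (a N : ℝ)) atTop (nhds (1 + t)) := by
    have := (tendsto_const_nhds : Tendsto (fun _ : ℕ => (1:ℝ)) atTop (nhds 1)).add hb
    refine this.congr' ?_
    filter_upwards [ha1] with N hN
    have haNne : (a N : ℝ) ≠ 0 := by
      have : (0 : ℝ) < a N := by exact_mod_cast hN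
      positivity
    push_cast
    field_simp
  have habbar : Tendsto (fun N => ((fun N => a N + bbar N) N : ℝ) / (a N : ℝ)) atTop
      (nhds (1 + t)) := by
    have := (tendsto_const_nhds : Tendsto (fun _ : ℕ => (1:ℝ)) atTop (nhds 1)).add hbbar
    refine this.congr' ?_
    filter_upwards [ha1] with N hN
    have haNne : (a N : ℝ) ≠ 0 := by
      have : (0 : ℝ) < a N := by exact_mod_cast hN
      positivity
    push_cast
    field_simp
  have h1t : (0 : ℝ) < 1 + t := by linarith
  have L1 := tendsto_descFactorial_div n a b t ht ha hb
  have L2 := tendsto_descFactorial_div n a bbar t ht ha hbbar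
  have L3 := tendsto_descFactorial_div (m + n) a (fun N => a N + b N) (1 + t) h1t ha hab
  have L4 := tendsto_descFactorial_div (m + n) a (fun N => a N + bbar N) (1 + t) h1t ha habbar
  -- eventually b N ≥ n, bbar N ≥ n
  have hbR : Tendsto (fun N => (b N : ℝ)) atTop atTop := by
    have := Filter.Tendsto.pos_mul_atTop ht hb haR
    refine this.congr' ?_
    filter_upwards [ha1] with N hN
    have : (a N : ℝ) ≠ 0 := by positivity
    field_simp
  have hbbarR : Tendsto (fun N => (bbar N : ℝ)) atTop atTop := by
    have := Filter.Tendsto.pos_mul_atTop ht hbbar haR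
    refine this.congr' ?_
    filter_upwards [ha1] with N hN
    have : (a N : ℝ) ≠ 0 := by positivity
    field_simp
  have hbn : ∀ᶠ N in atTop, n ≤ b N := by
    filter_upwards [hbR.eventually_ge_atTop (n : ℝ)] with N hN
    exact_mod_cast hN
  have hbbarn : ∀ᶠ N in atTop, n ≤ bbar N := by
    filter_upwards [hbbarR.eventually_ge_atTop (n : ℝ)] with N hN
    exact_mod_cast hN
  -- the main limit
  have hnum := L1.mul L4
  have hden := L2.mul L3
  have hdenne : t ^ n * (1 + t) ^ (m + n) ≠ 0 := by positivity
  have hlim := hnum.div hden hdenne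
  have hval : t ^ n * (1 + t) ^ (m + n) / (t ^ n * (1 + t) ^ (m + n)) = 1 :=
    div_self hdenne
  rw [hval] at hlim
  refine hlim.congr' ?_
  filter_upwards [ha1, ham, hbn, hbbarn] with N h1 hm hn1 hn2
  have haNne : (a N : ℝ) ≠ 0 := by
    have : (0 : ℝ) < a N := by exact_mod_cast h1
    positivity
  have e1 := choose_ratio m n (a N) (b N) hm hn1
  have e2 := choose_ratio m n (a N) (bbar N) hm hn2
  have hDa : ((a N).descFactorial m : ℝ) ≠ 0 :=
    Nat.cast_ne_zero.mpr (descFactorial_ne_zero' hm)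
  have hDb : ((b N).descFactorial n : ℝ) ≠ 0 :=
    Nat.cast_ne_zero.mpr (descFactorial_ne_zero' hn1)
  have hDbbar : ((bbar N).descFactorial n : ℝ) ≠ 0 :=
    Nat.cast_ne_zero.mpr (descFactorial_ne_zero' hn2)
  have hDab : ((a N + b N).descFactorial (m + n) : ℝ) ≠ 0 :=
    Nat.cast_ne_zero.mpr (descFactorial_ne_zero' (by omega))
  have hDabbar : ((a N + bbar N).descFactorial (m + n) : ℝ) ≠ 0 :=
    Nat.cast_ne_zero.mpr (descFactorial_ne_zero' (by omega))
  have e2' : (((a N + bbar N).choose (bbar N) : ℝ) /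
      ((a N + bbar N - m - n).choose (bbar N - n) : ℝ)) =
      (((bbar N).descFactorial n : ℝ) * ((a N).descFactorial m : ℝ) /
        ((a N + bbar N).descFactorial (m + n) : ℝ))⁻¹ := by
    rw [← e2, inv_div]
  rw [Pi.div_apply, e1, e2']
  field_simp
end

section
/- Fix t ∈ (0,∞) and ε ∈ (0,1/2). Let (a_N) and (b_N) be sequences of natural numbers with a_N → ∞ and b_N/a_N → t, and set n_N = a_N + b_N. Let S_N be a uniformly distributed random b_N-element subset of {1,…,n_N}. Then the probability that there exists k ∈ {1,…,n_N} with | #(S_N ∩ {1,…,k}) − k·b_N/n_N | > n_N^{1/2+ε} tends to 0 as N → ∞. -/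
set_option maxHeartbeats 1600000

open Filter

open scoped Classical

lemma count_lemma (n k b j : ℕ) (hk : k ≤ n) (hj : j ≤ b) :
    (((Finset.Icc 1 n).powersetCard b).filter
      (fun S => (S ∩ Finset.Icc 1 k).card = j)).card
      = k.choose j * (n - k).choose (b - j) := by
  classical
  have hsplit : Finset.Icc 1 n = Finset.Icc 1 k ∪ Finset.Icc (k+1) n := by
    ext x; simp only [Finset.mem_Icc, Finset.mem_union]; omega
  have hdisj : Disjoint (Finset.Icc 1 k) (Finset.Icc (k+1) n) := by
    rw [Finset.disjoint_left]; intro x hx hx'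
    simp only [Finset.mem_Icc] at hx hx'; omega
  have hc1 : ((Finset.Icc 1 k).powersetCard j).card = k.choose j := by
    rw [Finset.card_powersetCard]; simp
  have hc2 : ((Finset.Icc (k+1) n).powersetCard (b-j)).card = (n - k).choose (b - j) := by
    rw [Finset.card_powersetCard, Nat.card_Icc]; congr 1; omega
  rw [← hc1, ← hc2, ← Finset.card_product]
  have key : ∀ P ∈ (Finset.Icc 1 k).powersetCard j ×ˢ (Finset.Icc (k+1) n).powersetCard (b-j),
      (P.1 ∪ P.2) ∩ Finset.Icc 1 k = P.1 ∧ (P.1 ∪ P.2) ∩ Finset.Icc (k+1) n = P.2 := by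
    intro P hP
    simp only [Finset.mem_product, Finset.mem_powersetCard] at hP
    obtain ⟨⟨h1sub, h1card⟩, h2sub, h2card⟩ := hP
    constructor
    · rw [Finset.union_inter_distrib_right, Finset.inter_eq_left.mpr h1sub,
        Finset.disjoint_iff_inter_eq_empty.mp ((hdisj.symm).mono_left h2sub),
        Finset.union_empty]
    · rw [Finset.union_inter_distrib_right, Finset.inter_eq_left.mpr h2sub,
        Finset.disjoint_iff_inter_eq_empty.mp (hdisj.mono_left h1sub),
        Finset.empty_union]
  apply Finset.card_bij' (fun S _ => (S ∩ Finset.Icc 1 k, S ∩ Finset.Icc (k+1) n))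
    (fun P _ => P.1 ∪ P.2)
  · intro S hS
    simp only [Finset.mem_filter, Finset.mem_powersetCard] at hS
    obtain ⟨⟨hSsub, hScard⟩, hSj⟩ := hS
    have hdec : S = (S ∩ Finset.Icc 1 k) ∪ (S ∩ Finset.Icc (k+1) n) := by
      rw [← Finset.inter_union_distrib_left, ← hsplit, Finset.inter_eq_left.mpr hSsub]
    have hdisj' : Disjoint (S ∩ Finset.Icc 1 k) (S ∩ Finset.Icc (k+1) n) :=
      hdisj.mono Finset.inter_subset_right Finset.inter_subset_right
    have hcards : (S ∩ Finset.Icc 1 k).card + (S ∩ Finset.Icc (k+1) n).card = b := by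
      rw [← Finset.card_union_of_disjoint hdisj', ← hdec, hScard]
    simp only [Finset.mem_product, Finset.mem_powersetCard]
    exact ⟨⟨Finset.inter_subset_right, hSj⟩,
      ⟨Finset.inter_subset_right, by omega⟩⟩
  · intro P hP
    obtain ⟨e1, e2⟩ := key P hP
    simp only [Finset.mem_product, Finset.mem_powersetCard] at hP
    obtain ⟨⟨h1sub, h1card⟩, h2sub, h2card⟩ := hP
    have hdisj' : Disjoint P.1 P.2 := hdisj.mono h1sub h2sub
    simp only [Finset.mem_filter, Finset.mem_powersetCard]
    refine ⟨⟨?_, ?_⟩, by rw [e1, h1card]⟩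
    · rw [hsplit]; exact Finset.union_subset_union h1sub h2sub
    · rw [Finset.card_union_of_disjoint hdisj', h1card, h2card]; omega
  · intro S hS
    simp only [Finset.mem_filter, Finset.mem_powersetCard] at hS
    obtain ⟨⟨hSsub, hScard⟩, hSj⟩ := hS
    rw [← Finset.inter_union_distrib_left, ← hsplit, Finset.inter_eq_left.mpr hSsub]
  · intro P hP
    obtain ⟨e1, e2⟩ := key P hP
    rw [e1, e2]

lemma tail_bound (n b k : ℕ) (d : ℝ) (hk : k ≤ n) (hbn : b ≤ n)
    (hd : 8 ≤ d) (hdn : d ≤ n) :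
    ((((Finset.Icc 1 n).powersetCard b).filter
      (fun S => d < |((S ∩ Finset.Icc 1 k).card : ℝ) - (k : ℝ) * (b : ℝ) / (n : ℝ)|)).card : ℝ)
      ≤ ((n:ℝ) + 1) * ((1 - d/(8*n))^(⌊d/2⌋₊ - 1) * (n.choose b)) := by
  classical
  have hd0 : (0:ℝ) < d := by linarith
  have hn : (0:ℝ) < n := lt_of_lt_of_le hd0 hdn
  set Ω := (Finset.Icc 1 n).powersetCard b with hΩ
  set A : ℕ → ℕ := fun j => (Ω.filter (fun S => (S ∩ Finset.Icc 1 k).card = j)).card with hAdef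
  set μ : ℝ := (k : ℝ) * (b : ℝ) / (n : ℝ) with hμdef
  set q : ℝ := 1 - d/(8*n) with hqdef
  set C : ℕ := n.choose b with hCdef
  have hq0 : 0 ≤ q := by
    rw [hqdef]
    have : d/(8*n) ≤ 1 := by
      rw [div_le_one (by linarith)]; linarith
    linarith
  have hq1 : q ≤ 1 := by
    rw [hqdef]
    have : 0 ≤ d/(8*n) := by positivity
    linarith
  have hA : ∀ j, j ≤ b → A j = k.choose j * (n - k).choose (b - j) := fun j hj =>
    count_lemma n k b j hk hj
  have hA0 : ∀ j, b < j → A j = 0 := by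
    intro j hj
    rw [hAdef]
    simp only [Finset.card_eq_zero]
    rw [Finset.filter_eq_empty_iff]
    intro S hS
    rw [hΩ, Finset.mem_powersetCard] at hS
    have : (S ∩ Finset.Icc 1 k).card ≤ b := hS.2 ▸ Finset.card_le_card Finset.inter_subset_left
    omega
  have hAC : ∀ j, A j ≤ C := by
    intro j
    have h1 : A j ≤ Ω.card := Finset.card_le_card (Finset.filter_subset _ _)
    rwa [hΩ, Finset.card_powersetCard, Nat.card_Icc, Nat.add_sub_cancel] at h1
  have hμ0 : 0 ≤ μ := by positivity
  have hμk : μ ≤ k := by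
    rw [hμdef, div_le_iff₀ hn]
    have : (b:ℝ) ≤ n := by exact_mod_cast hbn
    nlinarith [Nat.cast_nonneg (α := ℝ) k]
  have hμb : μ ≤ b := by
    rw [hμdef, div_le_iff₀ hn]
    have : (k:ℝ) ≤ n := by exact_mod_cast hk
    nlinarith [Nat.cast_nonneg (α := ℝ) b]
  have hμn : μ * n = (k:ℝ) * b := by rw [hμdef]; field_simp
  have hkr : (k:ℝ) ≤ n := by exact_mod_cast hk
  have hbr : (b:ℝ) ≤ n := by exact_mod_cast hbn
  -- the exact recurrence, cast to ℝ
  have hid : ∀ j : ℕ, j < k → j < b → k + b ≤ j + n + 1 →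
      (A (j+1) : ℝ) * (((j:ℝ)+1) * ((n:ℝ) - k - ((b:ℝ) - j - 1)))
        = (A j : ℝ) * (((k:ℝ) - j) * ((b:ℝ) - j)) := by
    intro j hjk hjb hsub
    have idN : A (j+1) * ((j+1) * ((n-k) - (b-(j+1)))) = A j * ((k-j) * (b-j)) := by
      rw [hA (j+1) (by omega), hA j (by omega)]
      have e1 : k.choose (j+1) * (j+1) = k.choose j * (k - j) := Nat.choose_succ_right_eq k j
      have e2 := Nat.choose_succ_right_eq (n-k) (b-j-1)
      rw [show b-j-1+1 = b-j from by omega] at e2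
      have hb1 : b - (j+1) = b - j - 1 := by omega
      rw [hb1]
      calc k.choose (j+1) * (n-k).choose (b-j-1) * ((j+1) * ((n-k) - (b-j-1)))
          = (k.choose (j+1) * (j+1)) * ((n-k).choose (b-j-1) * ((n-k) - (b-j-1))) := by ring
        _ = (k.choose j * (k-j)) * ((n-k).choose (b-j) * (b-j)) := by rw [e1, e2]
        _ = k.choose j * (n-k).choose (b-j) * ((k-j) * (b-j)) := by ring
    have c1 : (((n-k) - (b-(j+1)) : ℕ) : ℝ) = (n:ℝ) - k - ((b:ℝ) - j - 1) := by
      have h1 : b - (j+1) ≤ n - k := by omega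
      push_cast [Nat.cast_sub h1, Nat.cast_sub hk, Nat.cast_sub (show j+1 ≤ b by omega)]
      ring
    have c2 : ((k - j : ℕ) : ℝ) = (k:ℝ) - j := by
      push_cast [Nat.cast_sub hjk.le]; ring
    have c3 : ((b - j : ℕ) : ℝ) = (b:ℝ) - j := by
      push_cast [Nat.cast_sub hjb.le]; ring
    have := congrArg (fun m : ℕ => (m : ℝ)) idN
    push_cast at this
    rw [c1, c2, c3] at this
    linarith [this]
  -- one-step bounds
  have step_up : ∀ j : ℕ, μ + d/2 ≤ j → (A (j+1) : ℝ) ≤ q * A j := by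
    intro j hj
    by_cases hjb : b ≤ j
    · rw [hA0 (j+1) (by omega)]
      push_cast
      positivity
    push_neg at hjb
    by_cases hjk : k ≤ j
    · rw [hA (j+1) (by omega), Nat.choose_eq_zero_of_lt (by omega)]
      push_cast
      norm_num
      positivity
    push_neg at hjk
    have hμlb : (k:ℝ) + b - n ≤ μ := by
      have h1 : ((n:ℝ) - b) * ((n:ℝ) - k) ≥ 0 := by nlinarith
      nlinarith
    have hsubR : (k:ℝ) + b < j + n := by linarith
    have hsub : k + b < j + n := by exact_mod_cast hsubR
    have hjr : μ + d/2 ≤ (j:ℝ) := hj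
    set X : ℝ := ((j:ℝ)+1) * ((n:ℝ) - k - ((b:ℝ) - j - 1)) with hX
    set Y : ℝ := ((k:ℝ) - j) * ((b:ℝ) - j) with hY
    have hidj := hid j hjk hjb (by omega)
    have hjkr : (j:ℝ) + 1 ≤ k := by exact_mod_cast hjk
    have hjbr : (j:ℝ) + 1 ≤ b := by exact_mod_cast hjb
    have hsecond : (1:ℝ) ≤ (n:ℝ) - k - ((b:ℝ) - j - 1) := by linarith
    have hXpos : 0 < X := by
      rw [hX]
      have h0 : (0:ℝ) < (j:ℝ) + 1 := by positivity
      nlinarith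
    have hXn : X ≤ (n:ℝ)^2 := by
      rw [hX]
      have h1 : (j:ℝ) + 1 ≤ n := by linarith
      have h2 : (n:ℝ) - k - ((b:ℝ) - j - 1) ≤ n := by linarith
      calc ((j:ℝ)+1) * ((n:ℝ) - k - ((b:ℝ) - j - 1)) ≤ n * n :=
            mul_le_mul h1 h2 (by linarith) (le_of_lt hn)
        _ = (n:ℝ)^2 := by ring
    have h1 : (k:ℝ) * b + d * n / 2 ≤ (j:ℝ) * n := by
      have h2 := mul_le_mul_of_nonneg_right hjr (le_of_lt hn)
      rw [add_mul] at h2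
      have e : d/2*(n:ℝ) = d*n/2 := by ring
      rw [← hμn]; linarith
    have hXY : Y + d * n / 2 ≤ X := by
      have hexp : X - Y = ((j:ℝ)*n - k*b) + (2*j + n + 1 - k - b) := by
        rw [hX, hY]; ring
      have hj0 : (0:ℝ) ≤ j := Nat.cast_nonneg j
      linarith
    have hfrac : d/(8*n) * X ≤ d * n / 8 := by
      have h4 := mul_le_mul_of_nonneg_left hXn (show (0:ℝ) ≤ d/(8*n) by positivity)
      have e : d/(8*(n:ℝ)) * (n:ℝ)^2 = d*n/8 := by field_simp
      linarith
    have hkey : Y ≤ q * X := by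
      rw [hqdef]
      have hexpand : (1 - d/(8*n)) * X = X - d/(8*n)*X := by ring
      have e2 : d*n/8 ≤ d*n/2 := by nlinarith
      linarith
    have h2 : (A (j+1) : ℝ) * X ≤ (q * A j) * X := by
      rw [hidj]
      calc (A j : ℝ) * Y ≤ (A j : ℝ) * (q * X) :=
            mul_le_mul_of_nonneg_left hkey (Nat.cast_nonneg _)
        _ = (q * A j) * X := by ring
    exact le_of_mul_le_mul_right h2 hXpos
  have step_down : ∀ j : ℕ, (j:ℝ) + 1 ≤ μ - d/2 → (A j : ℝ) ≤ q * A (j+1) := by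
    intro j hj
    have hjkr : (j:ℝ) + 1 < k := by linarith
    have hjbr : (j:ℝ) + 1 < b := by linarith
    have hjk : j < k := by exact_mod_cast (show (j:ℝ) < k by linarith)
    have hjb : j < b := by exact_mod_cast (show (j:ℝ) < b by linarith)
    by_cases hc : j + n < k + b
    · -- then A j = 0
      have hlt : n - k < b - j := by omega
      rw [hA j (by omega), Nat.choose_eq_zero_of_lt hlt]
      push_cast
      norm_num
      positivity
    push_neg at hc
    have hidj := hid j hjk hjb (by omega)
    set X : ℝ := ((j:ℝ)+1) * ((n:ℝ) - k - ((b:ℝ) - j - 1)) with hX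
    set Y : ℝ := ((k:ℝ) - j) * ((b:ℝ) - j) with hY
    have hcR : (k:ℝ) + b ≤ j + n := by exact_mod_cast hc
    have hYpos : 0 < Y := by
      rw [hY]
      have h1 : (0:ℝ) < (k:ℝ) - j := by linarith
      have h2 : (0:ℝ) < (b:ℝ) - j := by linarith
      positivity
    have hYn : Y ≤ (n:ℝ)^2 := by
      rw [hY]
      have hj0 : (0:ℝ) ≤ j := Nat.cast_nonneg j
      have h1 : (k:ℝ) - j ≤ n := by linarith
      have h2 : (b:ℝ) - j ≤ n := by linarith
      calc ((k:ℝ) - j) * ((b:ℝ) - j) ≤ n * n := mul_le_mul h1 h2 (by linarith) (le_of_lt hn)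
        _ = (n:ℝ)^2 := by ring
    have h1 : (j:ℝ) * n ≤ k * b - d * n / 2 - n := by
      have h2 := mul_le_mul_of_nonneg_right hj (le_of_lt hn)
      rw [add_mul] at h2
      have e : d/2*(n:ℝ) = d*n/2 := by ring
      have e2 : (μ - d/2) * n = μ*n - d/2*n := by ring
      rw [e2, hμn] at h2
      linarith
    have hXY : X ≤ Y - d * n / 2 := by
      have hexp : X - Y = ((j:ℝ)*n - k*b) + (2*j + n + 1 - k - b) := by
        rw [hX, hY]; ring
      have hj0 : (0:ℝ) ≤ j := Nat.cast_nonneg j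
      have hjn : (j:ℝ) ≤ n := by linarith
      linarith
    have hfrac : d/(8*n) * Y ≤ d * n / 8 := by
      have h4 := mul_le_mul_of_nonneg_left hYn (show (0:ℝ) ≤ d/(8*n) by positivity)
      have e : d/(8*(n:ℝ)) * (n:ℝ)^2 = d*n/8 := by field_simp
      linarith
    have hkey : X ≤ q * Y := by
      rw [hqdef]
      have hexpand : (1 - d/(8*n)) * Y = Y - d/(8*n)*Y := by ring
      have e2 : d*n/8 ≤ d*n/2 := by nlinarith
      linarith
    have h2 : (A j : ℝ) * Y ≤ (q * A (j+1)) * Y := by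
      rw [← hidj]
      calc (A (j+1) : ℝ) * X ≤ (A (j+1) : ℝ) * (q * Y) :=
            mul_le_mul_of_nonneg_left hkey (Nat.cast_nonneg _)
        _ = (q * A (j+1)) * Y := by ring
    exact le_of_mul_le_mul_right h2 hYpos
  -- chains
  set j0 : ℕ := ⌈μ + d/2⌉₊ with hj0def
  set j1 : ℕ := ⌊μ - d/2⌋₊ with hj1def
  set m : ℕ := ⌊d/2⌋₊ - 1 with hmdef
  have chain_up : ∀ i : ℕ, (A (j0 + i) : ℝ) ≤ q^i * C := by
    intro i
    induction i with
    | zero => simpa using (show (A j0 : ℝ) ≤ C by exact_mod_cast hAC j0)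
    | succ i ih =>
      have hge : μ + d/2 ≤ ((j0 + i : ℕ) : ℝ) := by
        have h1 : μ + d/2 ≤ (j0 : ℝ) := Nat.le_ceil _
        push_cast
        have : (0:ℝ) ≤ i := Nat.cast_nonneg i
        linarith
      calc (A (j0 + (i+1)) : ℝ) = (A ((j0 + i) + 1) : ℝ) := by ring_nf
        _ ≤ q * A (j0 + i) := step_up _ hge
        _ ≤ q * (q^i * C) := mul_le_mul_of_nonneg_left ih hq0
        _ = q^(i+1) * C := by ring
  have chain_down : 0 ≤ μ - d/2 → ∀ i : ℕ, i ≤ j1 → (A (j1 - i) : ℝ) ≤ q^i * C := by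
    intro hnonneg i
    induction i with
    | zero => intro _; simpa using (show (A j1 : ℝ) ≤ C by exact_mod_cast hAC j1)
    | succ i ih =>
      intro hi
      have hfl : (j1:ℝ) ≤ μ - d/2 := Nat.floor_le hnonneg
      have hcast : ((j1 - (i+1) : ℕ) : ℝ) + 1 = ((j1 - i : ℕ) : ℝ) := by
        have : j1 - (i+1) + 1 = j1 - i := by omega
        exact_mod_cast congrArg (fun x : ℕ => (x:ℝ)) this
      have hstep : ((j1 - (i+1) : ℕ) : ℝ) + 1 ≤ μ - d/2 := by
        rw [hcast]
        have : ((j1 - i : ℕ) : ℝ) ≤ (j1 : ℝ) := by exact_mod_cast Nat.sub_le j1 i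
        linarith
      have heq : j1 - (i+1) + 1 = j1 - i := by omega
      calc (A (j1 - (i+1)) : ℝ) ≤ q * A (j1 - (i+1) + 1) := step_down _ hstep
        _ = q * A (j1 - i) := by rw [heq]
        _ ≤ q * (q^i * C) := mul_le_mul_of_nonneg_left (ih (by omega)) hq0
        _ = q^(i+1) * C := by ring
  -- per-j bound for bad j
  have hmub : (m:ℝ) ≤ d/2 - 1 := by
    have h1 : (⌊d/2⌋₊ : ℝ) ≤ d/2 := Nat.floor_le (by positivity)
    have h2 : 1 ≤ ⌊d/2⌋₊ := by
      rw [Nat.le_floor_iff (by positivity)]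
      push_cast; linarith
    have h3 : ((m:ℕ) : ℝ) = (⌊d/2⌋₊ : ℝ) - 1 := by
      rw [hmdef]
      push_cast [Nat.cast_sub h2]
      ring
    linarith
  have hm0 : (0:ℝ) ≤ m := Nat.cast_nonneg m
  have perj : ∀ j : ℕ, d < |(j:ℝ) - μ| → (A j : ℝ) ≤ q^m * C := by
    intro j hjbad
    rcases lt_or_ge μ (j:ℝ) with hcase | hcase
    · have hjμ : μ + d < j := by
        rw [abs_of_pos (by linarith)] at hjbad; linarith
      have hj0r : (j0 : ℝ) < μ + d/2 + 1 := Nat.ceil_lt_add_one (by positivity)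
      have hsumR : ((j0 + m : ℕ) : ℝ) < j := by push_cast; linarith
      have hge : j0 + m < j := by exact_mod_cast hsumR
      have hjeq : j = j0 + (j - j0) := by omega
      rw [hjeq]
      calc (A (j0 + (j - j0)) : ℝ) ≤ q^(j - j0) * C := chain_up _
        _ ≤ q^m * C := by
          apply mul_le_mul_of_nonneg_right _ (Nat.cast_nonneg C)
          exact pow_le_pow_of_le_one hq0 hq1 (by omega)
    · have hjμ : (j:ℝ) < μ - d := by
        rw [abs_of_nonpos (by linarith)] at hjbad; linarith
      have hj0' : (0:ℝ) ≤ j := Nat.cast_nonneg j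
      have hnonneg : 0 ≤ μ - d/2 := by linarith
      have hj1r : μ - d/2 - 1 < (j1 : ℝ) := Nat.sub_one_lt_floor _
      have hltR : ((j + m : ℕ) : ℝ) < j1 := by push_cast; linarith
      have hlt : j + m < j1 := by exact_mod_cast hltR
      have hjeq : j = j1 - (j1 - j) := by omega
      rw [hjeq]
      calc (A (j1 - (j1 - j)) : ℝ) ≤ q^(j1 - j) * C := chain_down hnonneg _ (by omega)
        _ ≤ q^m * C := by
          apply mul_le_mul_of_nonneg_right _ (Nat.cast_nonneg C)
          exact pow_le_pow_of_le_one hq0 hq1 (by omega)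
  -- the bad set
  set Jbad := (Finset.range (b+1)).filter (fun j : ℕ => d < |(j:ℝ) - μ|) with hJdef
  have hsubset : Ω.filter (fun S => d < |((S ∩ Finset.Icc 1 k).card : ℝ) - μ|)
      ⊆ Jbad.biUnion (fun j => Ω.filter (fun S => (S ∩ Finset.Icc 1 k).card = j)) := by
    intro S hS
    simp only [Finset.mem_filter] at hS
    obtain ⟨hSΩ, hSbad⟩ := hS
    have hjb : (S ∩ Finset.Icc 1 k).card ≤ b := by
      rw [hΩ, Finset.mem_powersetCard] at hSΩ
      exact hSΩ.2 ▸ Finset.card_le_card Finset.inter_subset_left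
    apply Finset.mem_biUnion.mpr
    refine ⟨(S ∩ Finset.Icc 1 k).card, ?_, ?_⟩
    · rw [hJdef]
      simp only [Finset.mem_filter, Finset.mem_range]
      exact ⟨by omega, hSbad⟩
    · simp only [Finset.mem_filter]
      exact ⟨hSΩ, trivial⟩
  have hcardle : (Ω.filter (fun S => d < |((S ∩ Finset.Icc 1 k).card : ℝ) - μ|)).card
      ≤ ∑ j ∈ Jbad, A j :=
    le_trans (Finset.card_le_card hsubset) (Finset.card_biUnion_le)
  calc ((Ω.filter (fun S => d < |((S ∩ Finset.Icc 1 k).card : ℝ) - μ|)).card : ℝ)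
      ≤ ∑ j ∈ Jbad, (A j : ℝ) := by exact_mod_cast hcardle
    _ ≤ ∑ j ∈ Jbad, q^m * C := by
        apply Finset.sum_le_sum
        intro j hj
        rw [hJdef] at hj
        simp only [Finset.mem_filter, Finset.mem_range] at hj
        exact perj j hj.2
    _ = (Jbad.card : ℝ) * (q^m * C) := by rw [Finset.sum_const, nsmul_eq_mul]
    _ ≤ ((n:ℝ) + 1) * (q^m * C) := by
        apply mul_le_mul_of_nonneg_right _ (by positivity)
        have h1 : Jbad.card ≤ b + 1 := by
          rw [hJdef]
          exact le_trans (Finset.card_filter_le _ _) (by simp)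
        have h2 : (Jbad.card : ℝ) ≤ (b:ℝ) + 1 := by exact_mod_cast h1
        linarith

lemma global_bound (n b : ℕ) (d : ℝ) (hbn : b ≤ n) (hd : 8 ≤ d) (hdn : d ≤ n) :
    ((((Finset.Icc 1 n).powersetCard b).filter
        (fun S => ∃ k ∈ Finset.Icc 1 n,
          d < |((S ∩ Finset.Icc 1 k).card : ℝ) - (k : ℝ) * (b:ℝ) / (n:ℝ)|)).card : ℝ)
      ≤ (n:ℝ) * (((n:ℝ) + 1) * ((1 - d/(8*n))^(⌊d/2⌋₊ - 1) * (n.choose b))) := by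
  classical
  set Ω := (Finset.Icc 1 n).powersetCard b with hΩ
  have hsub : Ω.filter (fun S => ∃ k ∈ Finset.Icc 1 n,
        d < |((S ∩ Finset.Icc 1 k).card : ℝ) - (k : ℝ) * (b:ℝ) / (n:ℝ)|)
      ⊆ (Finset.Icc 1 n).biUnion (fun k =>
        Ω.filter (fun S => d < |((S ∩ Finset.Icc 1 k).card : ℝ) - (k : ℝ) * (b:ℝ) / (n:ℝ)|)) := by
    intro S hS
    simp only [Finset.mem_filter] at hS
    obtain ⟨h1, k, hk, hk2⟩ := hS
    exact Finset.mem_biUnion.mpr ⟨k, hk, Finset.mem_filter.mpr ⟨h1, hk2⟩⟩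
  have h1 : (Ω.filter (fun S => ∃ k ∈ Finset.Icc 1 n,
        d < |((S ∩ Finset.Icc 1 k).card : ℝ) - (k : ℝ) * (b:ℝ) / (n:ℝ)|)).card
      ≤ ∑ k ∈ Finset.Icc 1 n,
        (Ω.filter (fun S => d < |((S ∩ Finset.Icc 1 k).card : ℝ) - (k : ℝ) * (b:ℝ) / (n:ℝ)|)).card :=
    le_trans (Finset.card_le_card hsub) Finset.card_biUnion_le
  calc ((Ω.filter (fun S => ∃ k ∈ Finset.Icc 1 n,
        d < |((S ∩ Finset.Icc 1 k).card : ℝ) - (k : ℝ) * (b:ℝ) / (n:ℝ)|)).card : ℝ)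
      ≤ ∑ k ∈ Finset.Icc 1 n, ((Ω.filter (fun S =>
          d < |((S ∩ Finset.Icc 1 k).card : ℝ) - (k : ℝ) * (b:ℝ) / (n:ℝ)|)).card : ℝ) := by
        exact_mod_cast h1
    _ ≤ ∑ _k ∈ Finset.Icc 1 n, ((n:ℝ) + 1) * ((1 - d/(8*n))^(⌊d/2⌋₊ - 1) * (n.choose b)) := by
        apply Finset.sum_le_sum
        intro k hk
        have hkn : k ≤ n := (Finset.mem_Icc.mp hk).2
        exact tail_bound n b k d hkn hbn hd hdn
    _ = (n:ℝ) * (((n:ℝ) + 1) * ((1 - d/(8*n))^(⌊d/2⌋₊ - 1) * (n.choose b))) := by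
        rw [Finset.sum_const, nsmul_eq_mul, Nat.card_Icc]
        norm_num

/-- Fix `t ∈ (0,∞)` and `ε ∈ (0,1/2)`.  Let `(a_N)`, `(b_N)`
be sequences of natural numbers with `a_N → ∞` and `b_N/a_N → t`, and set
`n_N = a_N + b_N`.  Let `S_N` be a uniformly distributed random `b_N`-element
subset of `{1,…,n_N}`.  Then the probability that there is a
`k ∈ {1,…,n_N}` with `| #(S_N ∩ {1,…,k}) − k·b_N/n_N | > n_N^{1/2+ε}` tends to
`0` as `N → ∞`. -/
theorem statement12 (t ε : ℝ) (ht : 0 < t) (hε : 0 < ε) (hε' : ε < 1 / 2)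
    (a b : ℕ → ℕ)
    (ha : Tendsto a atTop atTop)
    (hb : Tendsto (fun N => (b N : ℝ) / (a N : ℝ)) atTop (nhds t)) :
    Tendsto
      (fun N =>
        ((((Finset.Icc 1 (a N + b N)).powersetCard (b N)).filter
            (fun S => ∃ k ∈ Finset.Icc 1 (a N + b N),
              ((a N + b N : ℕ) : ℝ) ^ ((1 : ℝ) / 2 + ε) <
                |((S ∩ Finset.Icc 1 k).card : ℝ) -
                  (k : ℝ) * (b N : ℝ) / ((a N + b N : ℕ) : ℝ)|)).card : ℝ) /
          ((((Finset.Icc 1 (a N + b N)).powersetCard (b N)).card : ℕ) : ℝ))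
      atTop (nhds 0) := by
  have hε0 : ε ≠ 0 := ne_of_gt hε
  have hn_t : Tendsto (fun N => a N + b N) atTop atTop :=
    tendsto_atTop_mono (fun N => Nat.le_add_right (a N) (b N)) ha
  set s : ℝ := (2:ℝ)/(2*ε) with hs
  have hGt : Tendsto (fun y : ℝ => 2 * y ^ s * Real.exp (-(1/32) * y)) atTop (nhds 0) := by
    have h := tendsto_rpow_mul_exp_neg_mul_atTop_nhds_zero s (1/32) (by norm_num)
    have h2 := h.const_mul (2:ℝ)
    simp only [mul_zero] at h2
    refine h2.congr (fun y => by ring)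
  have hXt : Tendsto (fun N => ((a N + b N : ℕ) : ℝ) ^ (2*ε)) atTop atTop :=
    (tendsto_rpow_atTop (by linarith)).comp (tendsto_natCast_atTop_atTop.comp hn_t)
  have hgt : Tendsto (fun N => 2 * (((a N + b N : ℕ) : ℝ) ^ (2*ε)) ^ s
      * Real.exp (-(1/32) * ((a N + b N : ℕ) : ℝ) ^ (2*ε))) atTop (nhds 0) := hGt.comp hXt
  apply squeeze_zero' (Eventually.of_forall (fun N => by positivity)) _ hgt
  filter_upwards [hn_t.eventually_ge_atTop 64] with N hN64
  set nn : ℕ := a N + b N with hnn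
  have hbn' : b N ≤ nn := by omega
  have h64R : (64:ℝ) ≤ (nn:ℝ) := by exact_mod_cast hN64
  have hn1 : (1:ℝ) ≤ (nn:ℝ) := by linarith
  have hn0 : (0:ℝ) < (nn:ℝ) := by linarith
  set d : ℝ := ((nn:ℕ):ℝ)^((1:ℝ)/2+ε) with hd
  have hd8 : 8 ≤ d := by
    have e648 : (64:ℝ)^((1:ℝ)/2) = 8 := by
      rw [show (64:ℝ) = (8:ℝ)^(2:ℕ) by norm_num, ← Real.rpow_natCast (8:ℝ) 2,
        ← Real.rpow_mul (by norm_num : (0:ℝ) ≤ 8)]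
      norm_num
    have h1 : (64:ℝ)^((1:ℝ)/2) ≤ (nn:ℝ)^((1:ℝ)/2) :=
      Real.rpow_le_rpow (by norm_num) h64R (by norm_num)
    have h2 : (nn:ℝ)^((1:ℝ)/2) ≤ (nn:ℝ)^((1:ℝ)/2+ε) :=
      Real.rpow_le_rpow_of_exponent_le hn1 (by linarith)
    rw [hd]; linarith [e648 ▸ h1]
  have hdn : d ≤ (nn:ℝ) := by
    have h1 : (nn:ℝ)^((1:ℝ)/2+ε) ≤ (nn:ℝ)^(1:ℝ) :=
      Real.rpow_le_rpow_of_exponent_le hn1 (by linarith)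
    have h2 : (nn:ℝ)^(1:ℝ) = (nn:ℝ) := Real.rpow_one _
    rw [hd]; exact le_trans h1 (le_of_eq h2)
  have hd0 : (0:ℝ) < d := by linarith
  have hcount := global_bound nn (b N) d hbn' hd8 hdn
  have hcard : ((Finset.Icc 1 nn).powersetCard (b N)).card = nn.choose (b N) := by
    rw [Finset.card_powersetCard, Nat.card_Icc, Nat.add_sub_cancel]
  have hCpos : (0:ℝ) < (nn.choose (b N) : ℝ) := by
    exact_mod_cast Nat.choose_pos hbn'
  rw [hcard, div_le_iff₀ hCpos]
  refine le_trans hcount ?_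
  set q : ℝ := 1 - d/(8*(nn:ℝ)) with hq
  set m : ℕ := ⌊d/2⌋₊ - 1 with hm
  have hq0 : 0 ≤ q := by
    rw [hq]
    have : d/(8*(nn:ℝ)) ≤ 1 := by
      rw [div_le_one (by linarith)]; linarith
    linarith
  have hfloor1 : 1 ≤ ⌊d/2⌋₊ := by
    rw [Nat.le_floor_iff (by positivity)]
    push_cast; linarith
  have hmR : d/4 ≤ (m:ℝ) := by
    have h1 : d/2 - 1 < (⌊d/2⌋₊:ℝ) := Nat.sub_one_lt_floor _
    have h2 : ((m:ℕ):ℝ) = (⌊d/2⌋₊:ℝ) - 1 := by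
      rw [hm]; push_cast [Nat.cast_sub hfloor1]; ring
    linarith
  have hqE : q ≤ Real.exp (-(d/(8*(nn:ℝ)))) := by
    have h := Real.add_one_le_exp (-(d/(8*(nn:ℝ))))
    rw [hq]; linarith
  have hdd : d * d = (nn:ℝ) * (nn:ℝ)^(2*ε) := by
    have he : ((1:ℝ)/2+ε) + ((1:ℝ)/2+ε) = 1 + 2*ε := by ring
    rw [hd, ← Real.rpow_add hn0, he, Real.rpow_add hn0, Real.rpow_one]
  have hqm : q^m ≤ Real.exp (-(1/32) * (nn:ℝ)^(2*ε)) := by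
    calc q^m ≤ (Real.exp (-(d/(8*(nn:ℝ)))))^m := pow_le_pow_left₀ hq0 hqE m
      _ = Real.exp ((m:ℝ) * (-(d/(8*(nn:ℝ))))) := (Real.exp_nat_mul _ m).symm
      _ ≤ Real.exp (-(1/32) * (nn:ℝ)^(2*ε)) := by
          apply Real.exp_le_exp.mpr
          have h5 : d/4 * (d/(8*(nn:ℝ))) ≤ (m:ℝ) * (d/(8*(nn:ℝ))) :=
            mul_le_mul_of_nonneg_right hmR (by positivity)
          have h6 : d/4 * (d/(8*(nn:ℝ))) = d*d/(32*(nn:ℝ)) := by ring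
          have h7 : d*d/(32*(nn:ℝ)) = (nn:ℝ)^(2*ε)/32 := by
            rw [hdd]; field_simp
          have h8 : (m:ℝ) * (-(d/(8*(nn:ℝ)))) = -((m:ℝ)*(d/(8*(nn:ℝ)))) := by ring
          rw [h8]; linarith
  have hpow2 : (((nn:ℝ))^(2*ε))^s = (nn:ℝ)^(2:ℕ) := by
    rw [← Real.rpow_mul (le_of_lt hn0)]
    rw [show 2*ε*s = 2 by rw [hs]; field_simp]
    rw [show (2:ℝ) = ((2:ℕ):ℝ) by norm_num, Real.rpow_natCast]
  set E : ℝ := Real.exp (-(1/32) * (nn:ℝ)^(2*ε)) with hE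
  have hE0 : (0:ℝ) ≤ E := le_of_lt (Real.exp_pos _)
  have hqm0 : (0:ℝ) ≤ q^m := pow_nonneg hq0 m
  have hcoef : (nn:ℝ)*((nn:ℝ)+1)*q^m ≤ 2*(nn:ℝ)^(2:ℕ)*E := by
    have h1 : (nn:ℝ)*((nn:ℝ)+1) ≤ 2*(nn:ℝ)^(2:ℕ) := by nlinarith
    calc (nn:ℝ)*((nn:ℝ)+1)*q^m ≤ (2*(nn:ℝ)^(2:ℕ))*q^m :=
          mul_le_mul_of_nonneg_right h1 hqm0
      _ ≤ (2*(nn:ℝ)^(2:ℕ))*E := mul_le_mul_of_nonneg_left hqm (by positivity)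
      _ = 2*(nn:ℝ)^(2:ℕ)*E := by ring
  calc (nn:ℝ) * (((nn:ℝ) + 1) * (q^m * (nn.choose (b N) : ℝ)))
      = ((nn:ℝ)*((nn:ℝ)+1)*q^m) * (nn.choose (b N) : ℝ) := by ring
    _ ≤ (2*(nn:ℝ)^(2:ℕ)*E) * (nn.choose (b N) : ℝ) :=
        mul_le_mul_of_nonneg_right hcoef (Nat.cast_nonneg _)
    _ = (2 * (((nn:ℝ))^(2*ε))^s * E) * (nn.choose (b N) : ℝ) := by rw [hpow2]
end

section
/- For every subset T ⊆ Λ, let D(T) = { {x,y} ∈ E_Λ : exactly one of x, y lies in T }. Then μ({σ ∈ Ω_Λ^η : D(T) ⊆ B(σ)}) ≤ exp(−2β·|D(T)|). -/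
open scoped Classical symmDiff

/-- **Peierls estimate for a prescribed edge set.**
`Λ ⊂ ℤ²` is a finite set with boundary condition `η : ℤ² → {−1,+1}`.
Configurations in `Ω_Λ^η` (spin functions equal to `η` off `Λ`) are
parametrized by their plus-set `P ⊆ Λ` via
`σ_P x = (if x ∈ Λ then (if x ∈ P then 1 else −1) else η x)`.
`E` is the set of nearest-neighbor edges of `ℤ²` with at least one endpoint in
`Λ` (each unordered pair recorded once, oriented to the right or upwards),
`H` is the Ising energy, `B(σ)` the Peierls contour-edge set, `μ` the Gibbs
measure with weights `exp(−βH)/Z`.  For `T ⊆ Λ` with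
`D(T) = { {x,y} ∈ E_Λ : exactly one of x,y lies in T }`, one has
`μ({σ : D(T) ⊆ B(σ)}) ≤ exp(−2β·|D(T)|)`. -/
theorem statement13
    (Λ : Finset (ℤ × ℤ)) (η : ℤ × ℤ → ℝ) (hη : ∀ x, η x = 1 ∨ η x = -1)
    (E : Finset ((ℤ × ℤ) × (ℤ × ℤ)))
    (hE : ∀ e : (ℤ × ℤ) × (ℤ × ℤ), e ∈ E ↔
      (e.2 = e.1 + ((1 : ℤ), (0 : ℤ)) ∨ e.2 = e.1 + ((0 : ℤ), (1 : ℤ))) ∧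
      (e.1 ∈ Λ ∨ e.2 ∈ Λ))
    (β : ℝ) (hβ : 0 < β)
    (spin : Finset (ℤ × ℤ) → (ℤ × ℤ) → ℝ)
    (hspin : ∀ P x, spin P x =
      if x ∈ Λ then (if x ∈ P then 1 else -1) else η x)
    (H : Finset (ℤ × ℤ) → ℝ)
    (hH : ∀ P, H P = -∑ e ∈ E, spin P e.1 * spin P e.2)
    (Bset : Finset (ℤ × ℤ) → Finset ((ℤ × ℤ) × (ℤ × ℤ)))
    (hBset : ∀ P, Bset P = E.filter (fun e => spin P e.1 ≠ spin P e.2))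
    (Z : ℝ) (hZ : Z = ∑ P ∈ Λ.powerset, Real.exp (-β * H P))
    (T : Finset (ℤ × ℤ)) (hT : T ⊆ Λ)
    (D : Finset ((ℤ × ℤ) × (ℤ × ℤ)))
    (hD : D = E.filter (fun e =>
      (e.1 ∈ T ∧ e.2 ∉ T) ∨ (e.1 ∉ T ∧ e.2 ∈ T))) :
    (∑ P ∈ Λ.powerset.filter (fun P => D ⊆ Bset P), Real.exp (-β * H P)) / Z ≤
      Real.exp (-2 * β * (D.card : ℝ)) := by

  classical
  have hspin_pm : ∀ P x, spin P x = 1 ∨ spin P x = -1 := by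
    intro P x; rw [hspin]; split_ifs <;> simp [hη x]
  have hflip : ∀ P x, spin (P ∆ T) x = if x ∈ T then -spin P x else spin P x := by
    intro P x
    rw [hspin, hspin]
    by_cases hxT : x ∈ T
    · have hxΛ : x ∈ Λ := hT hxT
      simp only [hxΛ, if_true, hxT, if_true, Finset.mem_symmDiff]
      by_cases hxP : x ∈ P <;> simp [hxP, hxT]
    · by_cases hxΛ : x ∈ Λ
      · simp only [hxΛ, if_true, hxT, if_false, Finset.mem_symmDiff]
        by_cases hxP : x ∈ P <;> simp [hxP, hxT]
      · simp [hxΛ, hxT]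
  have hDE : D ⊆ E := by rw [hD]; exact Finset.filter_subset _ _
  have hprod : ∀ P, ∀ e ∈ E, spin (P ∆ T) e.1 * spin (P ∆ T) e.2 =
      if e ∈ D then -(spin P e.1 * spin P e.2) else spin P e.1 * spin P e.2 := by
    intro P e he
    have hmemD : e ∈ D ↔ ((e.1 ∈ T ∧ e.2 ∉ T) ∨ (e.1 ∉ T ∧ e.2 ∈ T)) := by
      rw [hD, Finset.mem_filter]
      exact and_iff_right he
    rw [hflip, hflip]
    by_cases h1 : e.1 ∈ T <;> by_cases h2 : e.2 ∈ T
    · rw [if_pos h1, if_pos h2, if_neg (by rw [hmemD]; tauto)]; ring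
    · rw [if_pos h1, if_neg h2, if_pos (by rw [hmemD]; tauto)]; ring
    · rw [if_neg h1, if_pos h2, if_pos (by rw [hmemD]; tauto)]; ring
    · rw [if_neg h1, if_neg h2, if_neg (by rw [hmemD]; tauto)]
  have key : ∀ P, D ⊆ Bset P → H (P ∆ T) = H P - 2 * D.card := by
    intro P hP
    have hone : ∀ e ∈ D, spin P e.1 * spin P e.2 = -1 := by
      intro e heD
      have hB := hP heD
      rw [hBset, Finset.mem_filter] at hB
      have hne := hB.2
      rcases hspin_pm P e.1 with h1 | h1 <;> rcases hspin_pm P e.2 with h2 | h2 <;>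
        rw [h1, h2] at hne ⊢ <;>
        first
          | exact absurd rfl hne
          | norm_num
    rw [hH, hH, ← Finset.sum_sdiff hDE (f := fun e => spin (P ∆ T) e.1 * spin (P ∆ T) e.2),
      ← Finset.sum_sdiff hDE (f := fun e => spin P e.1 * spin P e.2)]
    have hA : ∑ e ∈ E \ D, spin (P ∆ T) e.1 * spin (P ∆ T) e.2
        = ∑ e ∈ E \ D, spin P e.1 * spin P e.2 := by
      refine Finset.sum_congr rfl fun e he => ?_
      rw [hprod P e (Finset.mem_sdiff.mp he).1, if_neg (Finset.mem_sdiff.mp he).2]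
    have hB2 : ∑ e ∈ D, spin (P ∆ T) e.1 * spin (P ∆ T) e.2 = (D.card : ℝ) := by
      rw [Finset.sum_congr rfl (fun e he => by
        rw [hprod P e (hDE he), if_pos he, hone e he])]
      simp
    have hC : ∑ e ∈ D, spin P e.1 * spin P e.2 = -(D.card : ℝ) := by
      rw [Finset.sum_congr rfl hone]; simp
    rw [hA, hB2, hC]; ring
  have hZpos : 0 < Z := by
    rw [hZ]
    exact Finset.sum_pos (fun P _ => Real.exp_pos _)
      ⟨∅, Finset.empty_mem_powerset _⟩
  rw [div_le_iff₀ hZpos]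
  have step1 : ∀ P ∈ Λ.powerset.filter (fun P => D ⊆ Bset P),
      Real.exp (-β * H P)
        = Real.exp (-2 * β * (D.card : ℝ)) * Real.exp (-β * H (P ∆ T)) := by
    intro P hP
    rw [key P (Finset.mem_filter.mp hP).2, ← Real.exp_add]
    congr 1; ring
  rw [Finset.sum_congr rfl step1, ← Finset.mul_sum]
  refine mul_le_mul_of_nonneg_left ?_ (Real.exp_pos _).le
  have hinj : Set.InjOn (fun P => P ∆ T) ↑(Λ.powerset.filter (fun P => D ⊆ Bset P)) := by
    intro a _ b _ hab
    simpa using congrArg (fun s => s ∆ T) hab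
  have himg : ∑ Q ∈ (Λ.powerset.filter (fun P => D ⊆ Bset P)).image (fun P => P ∆ T),
      Real.exp (-β * H Q)
      = ∑ P ∈ Λ.powerset.filter (fun P => D ⊆ Bset P), Real.exp (-β * H (P ∆ T)) :=
    Finset.sum_image (fun a ha b hb hab => hinj ha hb hab)
  rw [← himg, hZ]
  refine Finset.sum_le_sum_of_subset_of_nonneg ?_ (fun _ _ _ => (Real.exp_pos _).le)
  intro Q hQ
  rw [Finset.mem_image] at hQ
  obtain ⟨P, hP, rfl⟩ := hQ
  have hPΛ : P ⊆ Λ := Finset.mem_powerset.mp (Finset.mem_filter.mp hP).1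
  rw [Finset.mem_powerset]
  exact symmDiff_le_sup.trans (sup_le hPΛ hT)
end

section
/- For any two configurations σ₀, τ ∈ Ω_Λ^η one has μ({σ ∈ Ω_Λ^η : B(σ₀) ⊆ B(σ)}) ≤ exp(−2β·(|B(σ₀)| − |B(τ)|)). In particular, taking τ to be a configuration minimizing |B(·)| over Ω_Λ^η (a ground state), the probability that the contour-edge set of σ contains a prescribed realizable contour collection of total length ℓ is at most exp(−2β·(ℓ − ℓ_min)), where ℓ_min is the minimal total contour length compatible with the boundary condition η. -/
open scoped Classical
open scoped symmDiff

/-- **Peierls-map estimate, Lemma of Section 5.**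
In the same finite-volume Ising setting as Statement 13 (configurations
`σ ∈ Ω_Λ^η` parametrized by their plus-set `P ⊆ Λ`): for any two
configurations `σ₀, τ ∈ Ω_Λ^η`,
`μ({σ : B(σ₀) ⊆ B(σ)}) ≤ exp(−2β(|B(σ₀)| − |B(τ)|))`.
In particular, taking `τ` a ground state (minimizing `|B(·)|`), the
probability that the contour-edge set of `σ` contains a prescribed realizable
contour collection of total length `ℓ = |B(σ₀)|` is at most
`exp(−2β(ℓ − ℓ_min))`, with `ℓ_min` the minimal total contour length
compatible with the boundary condition `η`. -/
theorem statement14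
    (Λ : Finset (ℤ × ℤ)) (η : ℤ × ℤ → ℝ) (hη : ∀ x, η x = 1 ∨ η x = -1)
    (E : Finset ((ℤ × ℤ) × (ℤ × ℤ)))
    (hE : ∀ e : (ℤ × ℤ) × (ℤ × ℤ), e ∈ E ↔
      (e.2 = e.1 + ((1 : ℤ), (0 : ℤ)) ∨ e.2 = e.1 + ((0 : ℤ), (1 : ℤ))) ∧
      (e.1 ∈ Λ ∨ e.2 ∈ Λ))
    (β : ℝ) (hβ : 0 < β)
    (spin : Finset (ℤ × ℤ) → (ℤ × ℤ) → ℝ)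
    (hspin : ∀ P x, spin P x =
      if x ∈ Λ then (if x ∈ P then 1 else -1) else η x)
    (H : Finset (ℤ × ℤ) → ℝ)
    (hH : ∀ P, H P = -∑ e ∈ E, spin P e.1 * spin P e.2)
    (Bset : Finset (ℤ × ℤ) → Finset ((ℤ × ℤ) × (ℤ × ℤ)))
    (hBset : ∀ P, Bset P = E.filter (fun e => spin P e.1 ≠ spin P e.2))
    (Z : ℝ) (hZ : Z = ∑ P ∈ Λ.powerset, Real.exp (-β * H P)) :
    (∀ P₀ ∈ Λ.powerset, ∀ Pτ ∈ Λ.powerset,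
      (∑ P ∈ Λ.powerset.filter (fun P => Bset P₀ ⊆ Bset P),
          Real.exp (-β * H P)) / Z ≤
        Real.exp (-2 * β * (((Bset P₀).card : ℝ) - ((Bset Pτ).card : ℝ)))) ∧
    (∀ P₀ ∈ Λ.powerset, ∀ ℓmin : ℕ,
      (∃ Pτ ∈ Λ.powerset, (Bset Pτ).card = ℓmin) →
      (∀ P ∈ Λ.powerset, ℓmin ≤ (Bset P).card) →
      (∑ P ∈ Λ.powerset.filter (fun P => Bset P₀ ⊆ Bset P),
          Real.exp (-β * H P)) / Z ≤
        Real.exp (-2 * β * (((Bset P₀).card : ℝ) - (ℓmin : ℝ)))) := by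
  classical
  have hZpos : 0 < Z := by
    rw [hZ]
    exact Finset.sum_pos (fun P _ => Real.exp_pos _) ⟨∅, Finset.empty_mem_powerset Λ⟩
  -- spins are ±1
  have hpm : ∀ P x, spin P x = 1 ∨ spin P x = -1 := by
    intro P x; rw [hspin]; split_ifs with h1 h2
    · left; rfl
    · right; rfl
    · exact hη x
  -- energy in terms of contour edges
  have hHB : ∀ P, H P = 2 * ((Bset P).card : ℝ) - (E.card : ℝ) := by
    intro P
    have hsplit := Finset.sum_filter_add_sum_filter_not E
      (fun e => spin P e.1 ≠ spin P e.2) (fun e => spin P e.1 * spin P e.2)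
    have h1 : ∑ e ∈ E.filter (fun e => spin P e.1 ≠ spin P e.2),
        spin P e.1 * spin P e.2 = -(((Bset P).card : ℝ)) := by
      rw [hBset, Finset.sum_congr rfl (g := fun _ => (-1 : ℝ)) ?_, Finset.sum_const]
      · simp
      · intro e he
        have hne := (Finset.mem_filter.mp he).2
        rcases hpm P e.1 with h|h <;> rcases hpm P e.2 with h'|h' <;>
          rw [h, h'] at hne ⊢ <;> norm_num at hne <;> norm_num
    have h2 : ∑ e ∈ E.filter (fun e => ¬ spin P e.1 ≠ spin P e.2),
        spin P e.1 * spin P e.2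
        = ((E.filter (fun e => ¬ spin P e.1 ≠ spin P e.2)).card : ℝ) := by
      rw [Finset.sum_congr rfl (g := fun _ => (1 : ℝ)) ?_, Finset.sum_const]
      · simp
      · intro e he
        have heq := (Finset.mem_filter.mp he).2
        rcases hpm P e.1 with h|h <;> rcases hpm P e.2 with h'|h' <;>
          rw [h, h'] at heq ⊢ <;> norm_num at heq <;> norm_num
    have h3 := Finset.card_filter_add_card_filter_not
      (s := E) (p := fun e => spin P e.1 ≠ spin P e.2)
    rw [hH, ← hsplit, h1, h2]
    have h4 : ((E.filter (fun e => ¬ spin P e.1 ≠ spin P e.2)).card : ℝ)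
        = (E.card : ℝ) - ((Bset P).card : ℝ) := by
      rw [hBset]; push_cast [← h3]; ring
    rw [h4]; ring
  have main : ∀ P₀ ∈ Λ.powerset, ∀ Pτ ∈ Λ.powerset,
      (∑ P ∈ Λ.powerset.filter (fun P => Bset P₀ ⊆ Bset P),
          Real.exp (-β * H P)) / Z ≤
        Real.exp (-2 * β * (((Bset P₀).card : ℝ) - ((Bset Pτ).card : ℝ))) := by
      intro P₀ hP₀ Pτ hPτ
      rw [Finset.mem_powerset] at hP₀ hPτ
      set T : Finset (ℤ × ℤ) := P₀ ∆ Pτ with hTdef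
      have hTΛ : T ⊆ Λ := by
        intro x hx
        rcases Finset.mem_symmDiff.mp hx with ⟨h, _⟩ | ⟨h, _⟩
        · exact hP₀ h
        · exact hPτ h
      -- spin flip under symmetric difference with T
      have hflipspin : ∀ P x, spin (P ∆ T) x = if x ∈ T then -spin P x else spin P x := by
        intro P x
        by_cases hxT : x ∈ T
        · have hxΛ : x ∈ Λ := hTΛ hxT
          rw [hspin, hspin, if_pos hxT, if_pos hxΛ, if_pos hxΛ]
          by_cases hxP : x ∈ P
          · have hn : x ∉ P ∆ T := by simp [Finset.mem_symmDiff, hxP, hxT]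
            simp [hn, hxP]
          · have hn : x ∈ P ∆ T := by simp [Finset.mem_symmDiff, hxP, hxT]
            simp [hn, hxP]
        · rw [hspin, hspin, if_neg hxT]
          by_cases hxΛ : x ∈ Λ
          · have hiff : x ∈ P ∆ T ↔ x ∈ P := by
              simp [Finset.mem_symmDiff, hxT]
            by_cases hxP : x ∈ P <;> simp [hxΛ, hiff, hxP]
          · simp [hxΛ]
      set D : Finset ((ℤ × ℤ) × (ℤ × ℤ)) :=
        E.filter (fun e => ¬ ((e.1 ∈ T) ↔ (e.2 ∈ T))) with hDdef
      -- contour edges of the flipped configuration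
      have hBflip : ∀ P, Bset (P ∆ T) = (Bset P) ∆ D := by
        intro P
        ext e
        rw [hBset, hBset]
        simp only [hDdef, Finset.mem_symmDiff, Finset.mem_filter, hflipspin]
        by_cases h1 : e.1 ∈ T <;> by_cases h2 : e.2 ∈ T <;>
          rcases hpm P e.1 with a|a <;> rcases hpm P e.2 with b|b <;>
            simp [h1, h2, a, b] <;> norm_num
      have hPT : P₀ ∆ T = Pτ := symmDiff_symmDiff_cancel_left P₀ Pτ
      have hDval : D = (Bset P₀) ∆ (Bset Pτ) := by
        have h1 : Bset Pτ = (Bset P₀) ∆ D := by rw [← hPT, hBflip]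
        rw [h1, symmDiff_symmDiff_cancel_left]
      -- key cardinality estimate
      have hcard : ∀ P, Bset P₀ ⊆ Bset P →
          (Bset (P ∆ T)).card + (Bset P₀).card ≤ (Bset P).card + (Bset Pτ).card := by
        intro P hsub
        rw [hBflip, hDval]
        set A := Bset P₀
        set Bt := Bset Pτ
        set BP := Bset P
        set S := A ∆ Bt with hS
        have hsdef : BP ∆ S = (BP \ S) ∪ (S \ BP) := by
          ext x; simp [Finset.mem_symmDiff, Finset.mem_union, Finset.mem_sdiff]
        have n1 : (BP ∆ S).card = (BP \ S).card + (S \ BP).card := by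
          rw [hsdef, Finset.card_union_of_disjoint disjoint_sdiff_sdiff]
        have n2 : S \ BP ⊆ Bt \ A := by
          intro e he
          rcases Finset.mem_sdiff.mp he with ⟨heS, heBP⟩
          rcases Finset.mem_symmDiff.mp heS with ⟨hA, _⟩ | ⟨hB, hA⟩
          · exact absurd (hsub hA) heBP
          · exact Finset.mem_sdiff.mpr ⟨hB, hA⟩
        have n3 : A \ Bt ⊆ S := by
          intro e he
          rcases Finset.mem_sdiff.mp he with ⟨hA, hB⟩
          exact Finset.mem_symmDiff.mpr (Or.inl ⟨hA, hB⟩)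
        have n3' : A \ Bt ⊆ BP := fun e he => hsub (Finset.mem_sdiff.mp he).1
        have n4 : BP \ S ⊆ BP \ (A \ Bt) := Finset.sdiff_subset_sdiff le_rfl n3
        have n5 : (BP \ (A \ Bt)).card + (A \ Bt).card = BP.card :=
          Finset.card_sdiff_add_card_eq_card n3'
        have n6 : (A \ Bt).card + (A ∩ Bt).card = A.card :=
          Finset.card_sdiff_add_card_inter A Bt
        have n7 : (Bt \ A).card + (Bt ∩ A).card = Bt.card :=
          Finset.card_sdiff_add_card_inter Bt A
        have n8 : (A ∩ Bt).card = (Bt ∩ A).card := by rw [Finset.inter_comm]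
        have n9 := Finset.card_le_card n2
        have n10 := Finset.card_le_card n4
        omega
      -- termwise exponential bound
      set F := Λ.powerset.filter (fun P => Bset P₀ ⊆ Bset P) with hF
      set C := Real.exp (-2 * β * (((Bset P₀).card : ℝ) - ((Bset Pτ).card : ℝ))) with hC
      have hterm : ∀ P ∈ F, Real.exp (-β * H P) ≤ C * Real.exp (-β * H (P ∆ T)) := by
        intro P hP
        have hsub := (Finset.mem_filter.mp hP).2
        have hc := hcard P hsub
        have hc' : (((Bset (P ∆ T)).card : ℝ)) + ((Bset P₀).card : ℝ)
            ≤ ((Bset P).card : ℝ) + ((Bset Pτ).card : ℝ) := by exact_mod_cast hc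
        rw [hC, ← Real.exp_add]
        apply Real.exp_le_exp.mpr
        rw [hHB, hHB]
        nlinarith [mul_le_mul_of_nonneg_left hc' (by positivity : (0:ℝ) ≤ 2 * β)]
      have hΦmem : ∀ P ∈ F, P ∆ T ∈ Λ.powerset := by
        intro P hP
        have hPΛ := Finset.mem_powerset.mp (Finset.mem_filter.mp hP).1
        rw [Finset.mem_powerset]
        intro x hx
        rcases Finset.mem_symmDiff.mp hx with ⟨h, _⟩ | ⟨h, _⟩
        · exact hPΛ h
        · exact hTΛ h
      have hsum2 : (∑ P ∈ F, Real.exp (-β * H (P ∆ T))) ≤ Z := by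
        rw [hZ, ← Finset.sum_image (f := fun Q => Real.exp (-β * H Q))
          (g := fun P => P ∆ T) (s := F)
          (fun a _ b _ hab => by
            have := congrArg (fun s => s ∆ T) hab
            simpa [symmDiff_symmDiff_cancel_right] using this)]
        apply Finset.sum_le_sum_of_subset_of_nonneg
        · intro Q hQ
          rcases Finset.mem_image.mp hQ with ⟨P, hP, rfl⟩
          exact hΦmem P hP
        · intro _ _ _; positivity
      have hsum1 : (∑ P ∈ F, Real.exp (-β * H P)) ≤ C * Z := by
        calc (∑ P ∈ F, Real.exp (-β * H P))
            ≤ ∑ P ∈ F, C * Real.exp (-β * H (P ∆ T)) := Finset.sum_le_sum hterm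
          _ = C * ∑ P ∈ F, Real.exp (-β * H (P ∆ T)) := by rw [Finset.mul_sum]
          _ ≤ C * Z := by
              apply mul_le_mul_of_nonneg_left hsum2
              rw [hC]; positivity
      rw [div_le_iff₀ hZpos]
      exact hsum1
  refine ⟨main, ?_⟩
  rintro P₀ hP₀ ℓmin ⟨Pτ, hPτ, hcardτ⟩ _
  have h := main P₀ hP₀ Pτ hPτ
  rwa [hcardτ] at h
end
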